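/- arXiv:2502.13448 — 5 statements merged into one kernel-verified Lean document; each statement's English description precedes it below -/
import Mathlib

section
/- Let {P_t} be a Markov–Feller semigroup on a Polish space E. Suppose there exists z ∈ E such that {P_t} is TV-eventually continuous at z and for every ε > 0, inf_{x∈E} liminf_{t→∞} P_t(x, B(z,ε)) > 0. Then for all x₁, x₂ ∈ E, lim_{t→∞} sup_{‖f‖_∞ ≤ 1} |P_t f(x₁) − P_t f(x₂)| = 0. -/
open MeasureTheory Filter Metric Set Topology

/-- `P_t f (x) = ∫ f dP_t(x,·)`. -/
noncomputable def Pf {E : Type*} [MeasurableSpace E] (P : ℝ → E → Measure E)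
    (t : ℝ) (f : E → ℝ) (x : E) : ℝ := ∫ y, f y ∂(P t x)

/-- Total variation distance `(1/2) sup_{‖f‖_∞ ≤ 1} |∫ f dμ₁ − ∫ f dμ₂|`. -/
noncomputable def tvDist {E : Type*} [MeasurableSpace E] (μ₁ μ₂ : Measure E) : ℝ :=
  (1/2) * ⨆ f : {f : E → ℝ // Measurable f ∧ ∀ x, |f x| ≤ 1},
    |∫ x, f.1 x ∂μ₁ - ∫ x, f.1 x ∂μ₂|

/-- The Cesàro average `Q_t(x,A) = (1/t) ∫₀ᵗ P_s(x,A) ds`. -/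
noncomputable def Qavg {E : Type*} [MeasurableSpace E] (P : ℝ → E → Measure E)
    (t : ℝ) (x : E) (A : Set E) : ℝ := (∫ s in (0:ℝ)..t, (P s x A).toReal) / t

/-- `{P_t}` is eventually continuous at `z`: for every bounded Lipschitz `f`,
`limsup_{x→z} limsup_{t→∞} |P_t f(x) − P_t f(z)| = 0`. -/
def EventuallyContinuousAt {E : Type*} [MetricSpace E] [MeasurableSpace E]
    (P : ℝ → E → Measure E) (z : E) : Prop :=
  ∀ f : E → ℝ, (∃ K, LipschitzWith K f) → (∃ C, ∀ x, |f x| ≤ C) →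
    limsup (fun x => limsup (fun t => |Pf P t f x - Pf P t f z|) atTop) (𝓝 z) = 0

/-- `{P_t}` is TV-eventually continuous at `z`:
`limsup_{x→z} limsup_{t→∞} sup_{‖f‖_∞ ≤ 1} |P_t f(x) − P_t f(z)| = 0`. -/
def TVEventuallyContinuousAt {E : Type*} [MetricSpace E] [MeasurableSpace E]
    (P : ℝ → E → Measure E) (z : E) : Prop :=
  limsup (fun x =>
    limsup (fun t => ⨆ f : {f : E → ℝ // Measurable f ∧ ∀ y, |f y| ≤ 1},
      |Pf P t f.1 x - Pf P t f.1 z|) atTop) (𝓝 z) = 0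

namespace TVAux


variable {E : Type*} [MeasurableSpace E]

abbrev SS (E : Type*) [MeasurableSpace E] := {f : E → ℝ // Measurable f ∧ ∀ y, |f y| ≤ 1}

instance : Nonempty (SS E) := ⟨⟨fun _ => 0, measurable_const, fun _ => by norm_num⟩⟩

noncomputable def tvd (μ ν : Measure E) : ℝ :=
  ⨆ f : SS E, |∫ x, f.1 x ∂μ - ∫ x, f.1 x ∂ν|

lemma SS.integrable (f : SS E) (μ : Measure E) [IsFiniteMeasure μ] : Integrable f.1 μ := by
  refine (integrable_const (1:ℝ)).mono' f.2.1.aestronglyMeasurable ?_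
  exact Eventually.of_forall fun y => by simpa using f.2.2 y

lemma SS.abs_integral_le (f : SS E) (μ : Measure E) [IsProbabilityMeasure μ] :
    |∫ x, f.1 x ∂μ| ≤ 1 := by
  calc |∫ x, f.1 x ∂μ| ≤ ∫ x, |f.1 x| ∂μ := by
        simpa [Real.norm_eq_abs] using norm_integral_le_integral_norm (μ := μ) f.1
  _ ≤ ∫ _x, (1:ℝ) ∂μ := integral_mono (f.integrable μ).abs (integrable_const _)
      (fun y => f.2.2 y)
  _ = 1 := by simp

lemma bddAbove_tvd (μ ν : Measure E) [IsProbabilityMeasure μ] [IsProbabilityMeasure ν] :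
    BddAbove (Set.range fun f : SS E => |∫ x, f.1 x ∂μ - ∫ x, f.1 x ∂ν|) := by
  refine ⟨2, fun a ha => ?_⟩
  obtain ⟨f, rfl⟩ := ha
  calc |∫ x, f.1 x ∂μ - ∫ x, f.1 x ∂ν| ≤ |∫ x, f.1 x ∂μ| + |∫ x, f.1 x ∂ν| := abs_sub _ _
  _ ≤ 1 + 1 := add_le_add (f.abs_integral_le μ) (f.abs_integral_le ν)
  _ = 2 := by norm_num

lemma le_tvd (μ ν : Measure E) [IsProbabilityMeasure μ] [IsProbabilityMeasure ν] (f : SS E) :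
    |∫ x, f.1 x ∂μ - ∫ x, f.1 x ∂ν| ≤ tvd μ ν :=
  le_ciSup (bddAbove_tvd μ ν) f

lemma tvd_le {μ ν : Measure E} {a : ℝ}
    (h : ∀ f : SS E, |∫ x, f.1 x ∂μ - ∫ x, f.1 x ∂ν| ≤ a) : tvd μ ν ≤ a :=
  ciSup_le h

lemma tvd_nonneg (μ ν : Measure E) [IsProbabilityMeasure μ] [IsProbabilityMeasure ν] :
    0 ≤ tvd μ ν := by
  have := le_tvd μ ν ⟨fun _ => 0, measurable_const, fun _ => by norm_num⟩
  simpa using this.trans_eq' (by simp)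

lemma tvd_le_two (μ ν : Measure E) [IsProbabilityMeasure μ] [IsProbabilityMeasure ν] :
    tvd μ ν ≤ 2 := by
  refine tvd_le fun f => ?_
  calc |∫ x, f.1 x ∂μ - ∫ x, f.1 x ∂ν| ≤ |∫ x, f.1 x ∂μ| + |∫ x, f.1 x ∂ν| := abs_sub _ _
  _ ≤ 1 + 1 := add_le_add (f.abs_integral_le μ) (f.abs_integral_le ν)
  _ = 2 := by norm_num

lemma tvd_triangle (μ ξ ν : Measure E) [IsProbabilityMeasure μ] [IsProbabilityMeasure ξ]
    [IsProbabilityMeasure ν] : tvd μ ν ≤ tvd μ ξ + tvd ξ ν := by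
  refine tvd_le fun f => ?_
  calc |∫ x, f.1 x ∂μ - ∫ x, f.1 x ∂ν|
      ≤ |∫ x, f.1 x ∂μ - ∫ x, f.1 x ∂ξ| + |∫ x, f.1 x ∂ξ - ∫ x, f.1 x ∂ν| := abs_sub_le _ _ _
  _ ≤ tvd μ ξ + tvd ξ ν := add_le_add (le_tvd _ _ f) (le_tvd _ _ f)

lemma toReal_prob_le_one {μ : Measure E} [IsProbabilityMeasure μ] (s : Set E) :
    (μ s).toReal ≤ 1 := by
  have h := prob_le_one (μ := μ) (s := s)
  simpa using ENNReal.toReal_mono ENNReal.one_ne_top h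

lemma tvd_le_hahn (μ ν : Measure E) [IsProbabilityMeasure μ] [IsProbabilityMeasure ν] :
    ∃ s : Set E, MeasurableSet s ∧ tvd μ ν ≤ 2 * ((μ s).toReal - (ν s).toReal) := by
  obtain ⟨s, hs, h1, h2⟩ := hahn_decomposition (μ := μ) (ν := ν)
  have hres : ν.restrict s ≤ μ.restrict s := by
    refine Measure.le_iff.2 fun t ht => ?_
    rw [Measure.restrict_apply ht, Measure.restrict_apply ht]
    exact h1 _ (ht.inter hs) inter_subset_right
  have hresc : μ.restrict sᶜ ≤ ν.restrict sᶜ := by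
    refine Measure.le_iff.2 fun t ht => ?_
    rw [Measure.restrict_apply ht, Measure.restrict_apply ht]
    exact h2 _ (ht.inter hs.compl) inter_subset_right
  have key : ∀ f : SS E, ∫ x, f.1 x ∂μ - ∫ x, f.1 x ∂ν
      ≤ 2 * ((μ s).toReal - (ν s).toReal) := by
    intro f
    have hint : ∀ (ξ : Measure E) [IsFiniteMeasure ξ], Integrable f.1 ξ := fun ξ _ =>
      f.integrable ξ
    -- on s
    have hA : ∫ x, (1 - f.1 x) ∂(ν.restrict s) ≤ ∫ x, (1 - f.1 x) ∂(μ.restrict s) := by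
      refine integral_mono_measure hres ?_ ?_
      · exact Eventually.of_forall fun y => by have := (abs_le.1 (f.2.2 y)).2; simp only [Pi.zero_apply]; linarith
      · exact (integrable_const _).sub (hint _)
    have eqA : ∀ (ξ : Measure E) [IsProbabilityMeasure ξ], ∫ x, (1 - f.1 x) ∂(ξ.restrict s)
        = (ξ s).toReal - ∫ x, f.1 x ∂(ξ.restrict s) := by
      intro ξ _
      rw [integral_sub (integrable_const _) (hint _), integral_const]
      simp [Measure.restrict_apply_univ, measureReal_def]
    have hB : ∫ x, (f.1 x + 1) ∂(μ.restrict sᶜ) ≤ ∫ x, (f.1 x + 1) ∂(ν.restrict sᶜ) := by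
      refine integral_mono_measure hresc ?_ ?_
      · exact Eventually.of_forall fun y => by have := (abs_le.1 (f.2.2 y)).1; simp only [Pi.zero_apply]; linarith
      · exact (hint _).add (integrable_const _)
    have eqB : ∀ (ξ : Measure E) [IsProbabilityMeasure ξ], ∫ x, (f.1 x + 1) ∂(ξ.restrict sᶜ)
        = ∫ x, f.1 x ∂(ξ.restrict sᶜ) + (ξ sᶜ).toReal := by
      intro ξ _
      rw [integral_add (hint _) (integrable_const _), integral_const]
      simp [Measure.restrict_apply_univ, measureReal_def]
    have hsplit : ∀ (ξ : Measure E) [IsProbabilityMeasure ξ],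
        ∫ x, f.1 x ∂(ξ.restrict s) + ∫ x, f.1 x ∂(ξ.restrict sᶜ) = ∫ x, f.1 x ∂ξ :=
      fun ξ _ => integral_add_compl hs (hint ξ)
    have hcompl : ∀ (ξ : Measure E) [IsProbabilityMeasure ξ],
        (ξ s).toReal + (ξ sᶜ).toReal = 1 := by
      intro ξ _
      rw [← ENNReal.toReal_add (measure_ne_top _ _) (measure_ne_top _ _),
        measure_add_measure_compl hs, measure_univ, ENNReal.toReal_one]
    rw [eqA μ, eqA ν] at hA
    rw [eqB μ, eqB ν] at hB
    have h₁ := hsplit μ; have h₂ := hsplit ν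
    have h₃ := hcompl μ; have h₄ := hcompl ν
    linarith
  refine ⟨s, hs, tvd_le fun f => ?_⟩
  rw [abs_sub_le_iff]
  constructor
  · exact key f
  · have := key ⟨fun y => -f.1 y, f.2.1.neg, fun y => by simpa [abs_neg] using f.2.2 y⟩
    simp only [integral_neg] at this
    linarith

section Top
variable [TopologicalSpace E] [OpensMeasurableSpace E]
variable (u : ℕ → Set E)

/-- the countable sup over finite unions of basic opens -/
noncomputable def msup (μ ν : Measure E) : ℝ :=
  ⨆ F : Finset ℕ, ((μ (⋃ i ∈ F, u i)).toReal - (ν (⋃ i ∈ F, u i)).toReal)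

lemma bddAbove_msup (μ ν : Measure E) [IsProbabilityMeasure μ] [IsProbabilityMeasure ν] :
    BddAbove (Set.range fun F : Finset ℕ =>
      ((μ (⋃ i ∈ F, u i)).toReal - (ν (⋃ i ∈ F, u i)).toReal)) := by
  refine ⟨1, fun a ha => ?_⟩
  obtain ⟨F, rfl⟩ := ha
  dsimp only
  have h1 := toReal_prob_le_one (μ := μ) (⋃ i ∈ F, u i)
  have h2 : (0:ℝ) ≤ (ν (⋃ i ∈ F, u i)).toReal := ENNReal.toReal_nonneg
  linarith

lemma hahn_le_msup (hbas : ∀ O : Set E, IsOpen O → ∀ x ∈ O, ∃ n, x ∈ u n ∧ u n ⊆ O) (μ ν : Measure E) [IsProbabilityMeasure μ] [IsProbabilityMeasure ν]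
    [ν.OuterRegular] {s : Set E} (_hs : MeasurableSet s) :
    (μ s).toReal - (ν s).toReal ≤ msup u μ ν := by
  classical
  refine le_of_forall_pos_le_add fun ε hε => ?_
  obtain ⟨O, hsO, hO, hνO⟩ := Set.exists_isOpen_lt_add (μ := ν) s (measure_ne_top ν s)
    (ε := ENNReal.ofReal ε) (ENNReal.ofReal_pos.2 hε).ne'
  have claim1 : (μ O).toReal - (ν O).toReal ≤ msup u μ ν := by
    set V : ℕ → Set E := fun n => ⋃ i ∈ (Finset.range n).filter (fun i => u i ⊆ O), u i with hV
    have hVmono : Monotone V := by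
      intro a b hab
      refine iUnion₂_subset fun i hi => ?_
      refine subset_iUnion₂ (s := fun i _ => u i) i ?_
      simp only [Finset.mem_filter, Finset.mem_range] at hi ⊢
      exact ⟨lt_of_lt_of_le hi.1 hab, hi.2⟩
    have hVO : ⋃ n, V n = O := by
      apply Subset.antisymm
      · refine iUnion_subset fun n => iUnion₂_subset fun i hi => ?_
        simp only [Finset.mem_filter] at hi
        exact hi.2
      · intro x hx
        obtain ⟨n, hxn, hnO⟩ := hbas O hO x hx
        refine mem_iUnion.2 ⟨n + 1, ?_⟩
        refine mem_iUnion₂.2 ⟨n, ?_, hxn⟩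
        simp only [Finset.mem_filter, Finset.mem_range]
        exact ⟨Nat.lt_succ_self n, hnO⟩
    have hμt : Tendsto (fun n => μ (V n)) atTop (𝓝 (μ O)) := by
      have := tendsto_measure_iUnion_atTop (μ := μ) hVmono
      rwa [hVO] at this
    have hνt : Tendsto (fun n => ν (V n)) atTop (𝓝 (ν O)) := by
      have := tendsto_measure_iUnion_atTop (μ := ν) hVmono
      rwa [hVO] at this
    have hreal : Tendsto (fun n => (μ (V n)).toReal - (ν (V n)).toReal) atTop
        (𝓝 ((μ O).toReal - (ν O).toReal)) := by
      refine Tendsto.sub ?_ ?_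
      · exact (ENNReal.tendsto_toReal (measure_ne_top μ O)).comp hμt
      · exact (ENNReal.tendsto_toReal (measure_ne_top ν O)).comp hνt
    refine le_of_tendsto' hreal fun n => ?_
    exact le_ciSup (bddAbove_msup u μ ν) ((Finset.range n).filter (fun i => u i ⊆ O))
  have hμs : (μ s).toReal ≤ (μ O).toReal :=
    ENNReal.toReal_mono (measure_ne_top μ O) (measure_mono hsO)
  have hνs : (ν O).toReal ≤ (ν s).toReal + ε := by
    have : ν O ≤ ν s + ENNReal.ofReal ε := le_of_lt hνO
    have h2 := ENNReal.toReal_mono (by finiteness) this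
    rwa [ENNReal.toReal_add (measure_ne_top _ _) ENNReal.ofReal_ne_top,
      ENNReal.toReal_ofReal hε.le] at h2
  linarith

lemma two_mul_msup_le_tvd (huo : ∀ n, IsOpen (u n)) (μ ν : Measure E) [IsProbabilityMeasure μ] [IsProbabilityMeasure ν] :
    2 * msup u μ ν ≤ tvd μ ν := by
  have key : ∀ F : Finset ℕ,
      ((μ (⋃ i ∈ F, u i)).toReal - (ν (⋃ i ∈ F, u i)).toReal) ≤ tvd μ ν / 2 := by
    intro F
    set U := ⋃ i ∈ F, u i with hU
    have hUm : MeasurableSet U := (isOpen_biUnion fun i _ => huo i).measurableSet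
    set f : SS E := ⟨fun y => U.indicator (fun _ => (2:ℝ)) y - 1,
      (measurable_const.indicator hUm).sub measurable_const, by
        intro y
        by_cases hy : y ∈ U <;> simp [hy] <;> norm_num⟩ with hf
    have hInd : ∀ (ξ : Measure E) [IsProbabilityMeasure ξ],
        ∫ x, f.1 x ∂ξ = 2 * (ξ U).toReal - 1 := by
      intro ξ _
      rw [hf]
      simp only
      rw [integral_sub ((integrable_const (2:ℝ)).indicator hUm) (integrable_const _),
        integral_indicator_const _ hUm, integral_const]
      simp [mul_comm, measureReal_def]
    have := le_tvd μ ν f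
    rw [hInd μ, hInd ν] at this
    have h2 : 2 * (μ U).toReal - 1 - (2 * (ν U).toReal - 1)
        = 2 * ((μ U).toReal - (ν U).toReal) := by ring
    rw [h2] at this
    have := (le_abs_self _).trans this
    linarith
  have : msup u μ ν ≤ tvd μ ν / 2 := ciSup_le key
  linarith

lemma tvd_eq_two_mul_msup (huo : ∀ n, IsOpen (u n))
    (hbas : ∀ O : Set E, IsOpen O → ∀ x ∈ O, ∃ n, x ∈ u n ∧ u n ⊆ O) (μ ν : Measure E) [IsProbabilityMeasure μ] [IsProbabilityMeasure ν]
    [ν.OuterRegular] : tvd μ ν = 2 * msup u μ ν := by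
  refine le_antisymm ?_ (two_mul_msup_le_tvd u huo μ ν)
  obtain ⟨s, hs, hle⟩ := tvd_le_hahn μ ν
  refine hle.trans ?_
  have := hahn_le_msup u hbas μ ν (_hs := hs)
  linarith

lemma measurable_tvd_comp (huo : ∀ n, IsOpen (u n))
    (hbas : ∀ O : Set E, IsOpen O → ∀ x ∈ O, ∃ n, x ∈ u n ∧ u n ⊆ O) {κ : E → Measure E} (hκ : Measurable κ)
    (hκp : ∀ y, IsProbabilityMeasure (κ y)) (ν : Measure E) [IsProbabilityMeasure ν]
    [ν.OuterRegular] : Measurable fun y => tvd (κ y) ν := by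
  classical
  have heq : (fun y => tvd (κ y) ν) = fun y => 2 * msup u (κ y) ν := by
    funext y
    haveI := hκp y
    exact tvd_eq_two_mul_msup u huo hbas (κ y) ν
  rw [heq]
  set d : Finset ℕ → E → ℝ := fun F y =>
    ((κ y) (⋃ i ∈ F, u i)).toReal - (ν (⋃ i ∈ F, u i)).toReal with hd
  have hUm : ∀ F : Finset ℕ, MeasurableSet (⋃ i ∈ F, u i) :=
    fun F => (isOpen_biUnion fun i _ => huo i).measurableSet
  have hdm : ∀ F, Measurable (d F) := fun F =>
    (((Measure.measurable_coe (hUm F)).comp hκ).ennreal_toReal).sub measurable_const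
  have hd1 : ∀ F y, d F y ≤ 1 := by
    intro F y
    haveI := hκp y
    have h1 := toReal_prob_le_one (μ := κ y) (⋃ i ∈ F, u i)
    have h2 : (0:ℝ) ≤ (ν (⋃ i ∈ F, u i)).toReal := ENNReal.toReal_nonneg
    simp only [hd]
    linarith
  set e : ℕ → Finset ℕ := fun n => (Denumerable.eqv (Finset ℕ)).symm n with he
  have hesurj : Function.Surjective e := (Denumerable.eqv (Finset ℕ)).symm.surjective
  set p : ℕ → E → ℝ := fun n =>
    (Finset.range (n+1)).sup' Finset.nonempty_range_add_one (fun k => d (e k)) with hp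
  have hpy : ∀ n y, p n y
      = (Finset.range (n+1)).sup' Finset.nonempty_range_add_one (fun k => d (e k) y) := by
    intro n y
    rw [hp]
    exact Finset.sup'_apply _ _ _
  have hpm : ∀ n, Measurable (p n) := fun n =>
    Finset.measurable_sup' _ fun k _ => hdm (e k)
  have hp1 : ∀ n y, p n y ≤ 1 := by
    intro n y
    rw [hpy]
    exact Finset.sup'_le _ _ fun k _ => hd1 _ y
  have hdlep : ∀ k n, k ≤ n → ∀ y, d (e k) y ≤ p n y := by
    intro k n hk y
    rw [hpy]
    exact Finset.le_sup' (f := fun k => d (e k) y) (Finset.mem_range.2 (Nat.lt_succ_of_le hk))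
  have hmono : ∀ y, Monotone fun n => p n y := by
    intro y a b hab
    simp only [hpy]
    exact Finset.sup'_le _ _ fun k hk => by
      rw [← hpy]
      exact hdlep k b ((Nat.le_of_lt_succ (Finset.mem_range.1 hk)).trans hab) y
  have hbddp : ∀ y, BddAbove (Set.range fun n => p n y) := by
    intro y; exact ⟨1, fun a ⟨n, hn⟩ => hn ▸ hp1 n y⟩
  have hbddd : ∀ y, BddAbove (Set.range fun F => d F y) := by
    intro y; exact ⟨1, fun a ⟨F, hF⟩ => hF ▸ hd1 F y⟩
  have hsup : ∀ y, (⨆ n, p n y) = msup u (κ y) ν := by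
    intro y
    refine le_antisymm (ciSup_le fun n => ?_) (ciSup_le fun F => ?_)
    · rw [hpy]
      exact Finset.sup'_le _ _ fun k _ => le_ciSup (hbddd y) (e k)
    · obtain ⟨k, rfl⟩ := hesurj F
      exact (hdlep k k le_rfl y).trans (le_ciSup (hbddp y) k)
  have htd : ∀ y, Tendsto (fun n => p n y) atTop (𝓝 (msup u (κ y) ν)) := by
    intro y
    rw [← hsup y]
    exact tendsto_atTop_ciSup (hmono y) (hbddp y)
  have : Measurable fun y => msup u (κ y) ν :=
    measurable_of_tendsto_metrizable hpm (tendsto_pi_nhds.2 htd)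
  exact measurable_const.mul this
end Top
lemma isProbabilityMeasure_bind (μ : Measure E) [IsProbabilityMeasure μ]
    {κ : E → Measure E} (hκ : Measurable κ) (hκp : ∀ y, IsProbabilityMeasure (κ y)) :
    IsProbabilityMeasure (μ.bind κ) := by
  constructor
  rw [Measure.bind_apply MeasurableSet.univ hκ.aemeasurable]
  have : ∀ y, κ y Set.univ = 1 := fun y => (hκp y).measure_univ
  simp [this]

lemma lintegral_ofReal_eq (f : SS E) (ξ : Measure E) [IsProbabilityMeasure ξ] :
    ∫⁻ x, ENNReal.ofReal (f.1 x + 1) ∂ξ = ENNReal.ofReal ((∫ x, f.1 x ∂ξ) + 1) := by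
  have hmeas : AEStronglyMeasurable (fun x => f.1 x + 1) ξ :=
    (f.2.1.add_const 1).aestronglyMeasurable
  have hnonneg : 0 ≤ᵐ[ξ] fun x => f.1 x + 1 :=
    Eventually.of_forall fun y => by have := (abs_le.1 (f.2.2 y)).1; simp only [Pi.zero_apply]; linarith
  have h1 : ∫ x, (f.1 x + 1) ∂ξ = (∫⁻ x, ENNReal.ofReal (f.1 x + 1) ∂ξ).toReal :=
    integral_eq_lintegral_of_nonneg_ae hnonneg hmeas
  have h2 : ∫ x, (f.1 x + 1) ∂ξ = (∫ x, f.1 x ∂ξ) + 1 := by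
    rw [integral_add (f.integrable ξ) (integrable_const _)]
    simp
  have hfin : ∫⁻ x, ENNReal.ofReal (f.1 x + 1) ∂ξ ≠ ⊤ := by
    refine ne_top_of_le_ne_top (b := 2) (by norm_num) ?_
    calc ∫⁻ x, ENNReal.ofReal (f.1 x + 1) ∂ξ ≤ ∫⁻ _x, 2 ∂ξ := by
          refine lintegral_mono fun x => ?_
          have := (abs_le.1 (f.2.2 x)).2
          calc ENNReal.ofReal (f.1 x + 1) ≤ ENNReal.ofReal 2 := ENNReal.ofReal_le_ofReal (by linarith)
          _ = 2 := by norm_num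
    _ = 2 := by simp
  rw [← ENNReal.ofReal_toReal hfin, ← h1, h2]

lemma measurable_kernel_integral {κ : E → Measure E} (hκ : Measurable κ)
    (hκp : ∀ y, IsProbabilityMeasure (κ y)) (f : SS E) :
    Measurable fun y => ∫ x, f.1 x ∂(κ y) := by
  have heq : (fun y => ∫ x, f.1 x ∂(κ y))
      = fun y => (∫⁻ x, ENNReal.ofReal (f.1 x + 1) ∂(κ y)).toReal - 1 := by
    funext y
    haveI := hκp y
    rw [lintegral_ofReal_eq f (κ y), ENNReal.toReal_ofReal]
    · ring
    · have := SS.abs_integral_le f (κ y)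
      have := (abs_le.1 this).1
      linarith
  rw [heq]
  exact (((Measure.measurable_lintegral (f.2.1.add_const 1).ennreal_ofReal).comp hκ).ennreal_toReal).sub
    measurable_const

/-- the image of a test function under a (probability) kernel is a test function -/
noncomputable def SSmap {κ : E → Measure E} (hκ : Measurable κ)
    (hκp : ∀ y, IsProbabilityMeasure (κ y)) (f : SS E) : SS E :=
  ⟨fun y => ∫ x, f.1 x ∂(κ y), measurable_kernel_integral hκ hκp f, fun y => by
    haveI := hκp y; exact SS.abs_integral_le f (κ y)⟩

lemma integral_bind_eq (μ : Measure E) [IsProbabilityMeasure μ] {κ : E → Measure E}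
    (hκ : Measurable κ) (hκp : ∀ y, IsProbabilityMeasure (κ y)) (f : SS E) :
    ∫ x, f.1 x ∂(μ.bind κ) = ∫ y, (∫ x, f.1 x ∂(κ y)) ∂μ := by
  haveI := isProbabilityMeasure_bind μ hκ hκp
  have h1 : ∫⁻ x, ENNReal.ofReal (f.1 x + 1) ∂(μ.bind κ)
      = ∫⁻ y, ∫⁻ x, ENNReal.ofReal (f.1 x + 1) ∂(κ y) ∂μ :=
    Measure.lintegral_bind hκ.aemeasurable (f.2.1.add_const 1).ennreal_ofReal.aemeasurable
  have h2 : ∀ y, ∫⁻ x, ENNReal.ofReal (f.1 x + 1) ∂(κ y)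
      = ENNReal.ofReal ((∫ x, f.1 x ∂(κ y)) + 1) := fun y => by
    haveI := hκp y; exact lintegral_ofReal_eq f (κ y)
  have h3 : ∫⁻ y, ENNReal.ofReal ((∫ x, f.1 x ∂(κ y)) + 1) ∂μ
      = ENNReal.ofReal ((∫ y, (∫ x, f.1 x ∂(κ y)) ∂μ) + 1) :=
    lintegral_ofReal_eq (SSmap hκ hκp f) μ
  have h4 := lintegral_ofReal_eq f (μ.bind κ)
  rw [h4] at h1
  simp_rw [h2] at h1
  rw [h3] at h1
  have hinj : ∀ a b : ℝ, -1 ≤ a → -1 ≤ b → ENNReal.ofReal (a+1) = ENNReal.ofReal (b+1) → a = b := by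
    intro a b ha hb h
    have := ENNReal.ofReal_eq_ofReal_iff (by linarith) (by linarith) |>.1 h
    linarith
  refine hinj _ _ ?_ ?_ h1
  · exact (abs_le.1 (SS.abs_integral_le f (μ.bind κ))).1
  · exact (abs_le.1 (SS.abs_integral_le (SSmap hκ hκp f) μ)).1

/-- convergence of a nonneg antitone-on-`[0,∞)` function to its inf -/
lemma tendsto_sInf_image {φ : ℝ → ℝ} (hmono : ∀ a b, 0 ≤ a → a ≤ b → φ b ≤ φ a)
    (h0 : ∀ t, 0 ≤ t → 0 ≤ φ t) :
    Tendsto φ atTop (𝓝 (sInf (φ '' Set.Ici 0))) := by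
  have hne : (φ '' Set.Ici 0).Nonempty := ⟨φ 0, ⟨0, Set.self_mem_Ici, rfl⟩⟩
  have hbdd : BddBelow (φ '' Set.Ici 0) := ⟨0, fun r ⟨t, ht, hr⟩ => hr ▸ h0 t ht⟩
  rw [Metric.tendsto_atTop]
  intro ε hε
  obtain ⟨r, ⟨t₀, ht₀, rfl⟩, hrlt⟩ := (csInf_lt_iff hbdd hne).1
    (lt_add_of_pos_right (sInf (φ '' Set.Ici 0)) hε)
  refine ⟨t₀, fun t ht => ?_⟩
  have h1 : sInf (φ '' Set.Ici 0) ≤ φ t := csInf_le hbdd ⟨t, Set.mem_Ici.2 ((Set.mem_Ici.1 ht₀).trans ht), rfl⟩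
  have h2 : φ t ≤ φ t₀ := hmono t₀ t ht₀ ht
  rw [Real.dist_eq, abs_lt]
  constructor <;> linarith


end TVAux

open TVAux in
theorem stmt2 {E : Type*} [MetricSpace E] [CompleteSpace E] [SecondCountableTopology E]
    [MeasurableSpace E] [BorelSpace E]
    (P : ℝ → E → Measure E)
    (hprob : ∀ t x, IsProbabilityMeasure (P t x))
    (hmeas : ∀ t, Measurable (P t))
    (hP0 : ∀ x, P 0 x = Measure.dirac x)
    (hsemi : ∀ s t : ℝ, 0 ≤ s → 0 ≤ t → ∀ x, P (s + t) x = (P s x).bind (P t))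
    (hFeller : ∀ (t : ℝ) (f : BoundedContinuousFunction E ℝ),
      Continuous fun x => ∫ y, f y ∂(P t x))
    (z : E) (hec : TVEventuallyContinuousAt P z)
    (hlb : ∀ ε > 0, 0 < ⨅ x : E, liminf (fun t => (P t x (ball z ε)).toReal) atTop) :
    ∀ x₁ x₂ : E,
      Tendsto (fun t => ⨆ f : {f : E → ℝ // Measurable f ∧ ∀ y, |f y| ≤ 1},
        |Pf P t f.1 x₁ - Pf P t f.1 x₂|) atTop (𝓝 0) := by
  classical
  intro x₁ x₂
  -- a countable basis of open sets
  obtain ⟨b, hbc, -, hbasis⟩ := TopologicalSpace.exists_countable_basis E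
  have hbnonempty : b.Nonempty := by
    have hx : x₁ ∈ ⋃₀ b := by rw [hbasis.sUnion_eq]; trivial
    obtain ⟨s, hsb, -⟩ := hx
    exact ⟨s, hsb⟩
  obtain ⟨u, hu⟩ := hbc.exists_eq_range hbnonempty
  have huo : ∀ n, IsOpen (u n) := fun n => hbasis.isOpen (hu ▸ mem_range_self n)
  have hbas : ∀ O : Set E, IsOpen O → ∀ x ∈ O, ∃ n, x ∈ u n ∧ u n ⊆ O := by
    intro O hO x hx
    obtain ⟨s, hsb, hxs, hsO⟩ := hbasis.exists_subset_of_mem_open hx hO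
    rw [hu] at hsb
    obtain ⟨n, rfl⟩ := hsb
    exact ⟨n, hxs, hsO⟩
  -- basic objects
  set D : Measure E → Measure E → ℝ → ℝ :=
    fun μ ν t => tvd (μ.bind (P t)) (ν.bind (P t)) with hD
  set T : Measure E → Measure E → ℝ := fun μ ν => sInf (D μ ν '' Set.Ici 0) with hT
  have hbindprob : ∀ (μ : Measure E) [IsProbabilityMeasure μ] (t : ℝ),
      IsProbabilityMeasure (μ.bind (P t)) := fun μ _ t =>
    isProbabilityMeasure_bind μ (hmeas t) (hprob t)
  have hshift : ∀ (μ : Measure E) (t s : ℝ), 0 ≤ t → 0 ≤ s →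
      μ.bind (P (t + s)) = (μ.bind (P t)).bind (P s) := by
    intro μ t s ht hs
    rw [Measure.bind_bind (hmeas t).aemeasurable (hmeas s).aemeasurable]
    have : P (t + s) = fun x => (P t x).bind (P s) := funext (hsemi t s ht hs)
    rw [this]
  have hD0 : ∀ (μ ν : Measure E) [IsProbabilityMeasure μ] [IsProbabilityMeasure ν] (t : ℝ),
      0 ≤ D μ ν t := by
    intro μ ν hμ hν t
    haveI := hbindprob μ t; haveI := hbindprob ν t
    exact tvd_nonneg _ _
  have hDle2 : ∀ (μ ν : Measure E) [IsProbabilityMeasure μ] [IsProbabilityMeasure ν] (t : ℝ),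
      D μ ν t ≤ 2 := by
    intro μ ν hμ hν t
    haveI := hbindprob μ t; haveI := hbindprob ν t
    exact tvd_le_two _ _
  have hmonoD : ∀ (μ ν : Measure E) [IsProbabilityMeasure μ] [IsProbabilityMeasure ν]
      (t s : ℝ), 0 ≤ t → 0 ≤ s → D μ ν (t + s) ≤ D μ ν t := by
    intro μ ν hμ hν t s ht hs
    haveI := hbindprob μ t; haveI := hbindprob ν t
    haveI := hbindprob (μ.bind (P t)) s; haveI := hbindprob (ν.bind (P t)) s
    simp only [hD]
    rw [hshift μ t s ht hs, hshift ν t s ht hs]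
    refine tvd_le fun f => ?_
    have e1 : ∫ x, f.1 x ∂((μ.bind (P t)).bind (P s))
        = ∫ x, (SSmap (hmeas s) (hprob s) f).1 x ∂(μ.bind (P t)) :=
      integral_bind_eq (μ.bind (P t)) (hmeas s) (hprob s) f
    have e2 : ∫ x, f.1 x ∂((ν.bind (P t)).bind (P s))
        = ∫ x, (SSmap (hmeas s) (hprob s) f).1 x ∂(ν.bind (P t)) :=
      integral_bind_eq (ν.bind (P t)) (hmeas s) (hprob s) f
    rw [e1, e2]
    exact le_tvd _ _ (SSmap (hmeas s) (hprob s) f)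
  have hTtendsto : ∀ (μ ν : Measure E) [IsProbabilityMeasure μ] [IsProbabilityMeasure ν],
      Tendsto (D μ ν) atTop (𝓝 (T μ ν)) := by
    intro μ ν hμ hν
    refine tendsto_sInf_image ?_ ?_
    · intro a c ha hac
      have : c = a + (c - a) := by ring
      rw [this]
      exact hmonoD μ ν a (c - a) ha (by linarith)
    · intro t _
      exact hD0 μ ν t
  have hT0 : ∀ (μ ν : Measure E) [IsProbabilityMeasure μ] [IsProbabilityMeasure ν],
      0 ≤ T μ ν := by
    intro μ ν hμ hν
    refine le_csInf ⟨D μ ν 0, ⟨0, Set.self_mem_Ici, rfl⟩⟩ ?_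
    rintro r ⟨t, -, rfl⟩
    exact hD0 μ ν t
  have hTbddBelow : ∀ (μ ν : Measure E) [IsProbabilityMeasure μ] [IsProbabilityMeasure ν],
      BddBelow (D μ ν '' Set.Ici 0) := by
    intro μ ν hμ hν
    exact ⟨0, by rintro r ⟨t, -, rfl⟩; exact hD0 μ ν t⟩
  have hTle2 : ∀ (μ ν : Measure E) [IsProbabilityMeasure μ] [IsProbabilityMeasure ν],
      T μ ν ≤ 2 := by
    intro μ ν hμ hν
    exact (csInf_le (hTbddBelow μ ν) ⟨0, Set.self_mem_Ici, rfl⟩).trans (hDle2 μ ν 0)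
  -- the set of limit values
  set ST : Set ℝ := {r : ℝ | ∃ μ ν : Measure E,
    IsProbabilityMeasure μ ∧ IsProbabilityMeasure ν ∧ r = T μ ν} with hST
  set Θ : ℝ := sSup ST with hΘ
  have hSne : ST.Nonempty :=
    ⟨T (Measure.dirac x₁) (Measure.dirac x₁),
      Measure.dirac x₁, Measure.dirac x₁, inferInstance, inferInstance, rfl⟩
  have hSbdd : BddAbove ST := by
    refine ⟨2, ?_⟩
    rintro r ⟨μ, ν, h1, h2, rfl⟩
    exact hTle2 μ ν
  have hTmem : ∀ (μ ν : Measure E) [IsProbabilityMeasure μ] [IsProbabilityMeasure ν],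
      T μ ν ≤ Θ := by
    intro μ ν hμ hν
    exact le_csSup hSbdd ⟨μ, ν, hμ, hν, rfl⟩
  have hΘ0 : 0 ≤ Θ :=
    (hT0 (Measure.dirac x₁) (Measure.dirac x₁)).trans
      (hTmem (Measure.dirac x₁) (Measure.dirac x₁))
  -- pointwise tendsto of tvd along P
  have hptw : ∀ x y : E, Tendsto (fun s => tvd (P s x) (P s y)) atTop
      (𝓝 (T (Measure.dirac x) (Measure.dirac y))) := by
    intro x y
    have hfy : (fun s => tvd (P s x) (P s y)) = D (Measure.dirac x) (Measure.dirac y) := by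
      funext s
      simp only [hD]
      rw [Measure.dirac_bind (hmeas s), Measure.dirac_bind (hmeas s)]
    rw [hfy]
    exact hTtendsto _ _
  -- the key estimate : Θ ≤ 2α for every α > 0
  have hΘα : ∀ α : ℝ, 0 < α → Θ ≤ 2 * α := by
    intro α hα
    -- consequence of TV-eventual continuity
    have hec' : limsup (fun x => limsup (fun t => tvd (P t x) (P t z)) atTop) (𝓝 z) = 0 := hec
    have houter2 : ∀ x, limsup (fun t => tvd (P t x) (P t z)) atTop ≤ 2 := by
      intro x
      refine limsup_le_of_le (isCoboundedUnder_le_of_le _ (x := 0) fun t => ?_)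
        (Eventually.of_forall fun t => ?_)
      · haveI := hprob t x; haveI := hprob t z
        exact tvd_nonneg _ _
      · haveI := hprob t x; haveI := hprob t z
        exact tvd_le_two _ _
    have hevlt : ∀ᶠ x in 𝓝 z, limsup (fun t => tvd (P t x) (P t z)) atTop < α := by
      refine eventually_lt_of_limsup_lt ?_ (isBoundedUnder_of ⟨2, houter2⟩)
      rw [hec']
      exact hα
    obtain ⟨δ, hδ, hball⟩ := Metric.eventually_nhds_iff_ball.1 hevlt
    set B : Set E := ball z δ with hB
    have hBmeas : MeasurableSet B := measurableSet_ball
    have hell : ∀ y ∈ B, T (Measure.dirac y) (Measure.dirac z) < α := by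
      intro y hy
      have h2 := (hptw y z).limsup_eq
      rw [← h2]
      exact hball y hy
    -- lower bound on hitting the ball
    have hc := hlb δ hδ
    set cI : ℝ := ⨅ x : E, liminf (fun t => (P t x (ball z δ)).toReal) atTop with hcI
    have hliminf0 : ∀ x : E, 0 ≤ liminf (fun t => (P t x (ball z δ)).toReal) atTop := by
      intro x
      refine le_liminf_of_le (isCoboundedUnder_ge_of_le _ (x := 1) fun t => ?_)
        (Eventually.of_forall fun t => ENNReal.toReal_nonneg)
      haveI := hprob t x
      exact toReal_prob_le_one _
    have hbddI : BddBelow (Set.range fun x : E =>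
        liminf (fun t => (P t x (ball z δ)).toReal) atTop) := by
      refine ⟨0, ?_⟩
      rintro r ⟨x, rfl⟩
      exact hliminf0 x
    have hcle : ∀ x : E, cI ≤ liminf (fun t => (P t x (ball z δ)).toReal) atTop :=
      fun x => ciInf_le hbddI x
    set β : ℝ := min (cI / 2) (1 / 2) with hβdef
    have hβpos : 0 < β := lt_min (by linarith) (by norm_num)
    have hβlt1 : β < 1 := (min_le_right _ _).trans_lt (by norm_num)
    have hβltc : β < cI := (min_le_left _ _).trans_lt (by linarith)
    set β' : ℝ := (β + cI) / 2 with hβ'def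
    have hββ' : β < β' := by rw [hβ'def]; linarith
    have hβ'c : β' < cI := by rw [hβ'def]; linarith
    have hptmass : ∀ x : E, ∀ᶠ t in atTop, β' < (P t x (ball z δ)).toReal := by
      intro x
      exact eventually_lt_of_lt_liminf (lt_of_lt_of_le hβ'c (hcle x))
        (isBoundedUnder_of ⟨0, fun t => ENNReal.toReal_nonneg⟩)
    -- propagation of the mass bound to arbitrary initial laws
    have hmass : ∀ (μ : Measure E), IsProbabilityMeasure μ →
        ∀ᶠ t in atTop, ENNReal.ofReal β < (μ.bind (P t)) B := by
      intro μ hμ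
      haveI := hμ
      by_contra hcon
      rw [Filter.not_eventually] at hcon
      have hfreq : ∀ n : ℕ, ∃ t : ℝ, (n : ℝ) ≤ t ∧ (μ.bind (P t)) B ≤ ENNReal.ofReal β := by
        intro n
        obtain ⟨t, ht, hbad⟩ := frequently_atTop.1 hcon (n : ℝ)
        exact ⟨t, ht, not_lt.1 hbad⟩
      choose sq hsq hbad using hfreq
      have hstend : Tendsto sq atTop atTop :=
        tendsto_atTop_mono hsq tendsto_natCast_atTop_atTop
      have hink : ∀ y, ENNReal.ofReal β' ≤ liminf (fun n => P (sq n) y B) atTop := by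
        intro y
        have hev2 : ∀ᶠ n in atTop, ENNReal.ofReal β' ≤ P (sq n) y B := by
          refine (hstend.eventually (hptmass y)).mono fun n hn => ?_
          exact ENNReal.ofReal_le_of_le_toReal hn.le
        calc ENNReal.ofReal β'
            = liminf (fun _ : ℕ => ENNReal.ofReal β') atTop := (liminf_const _).symm
        _ ≤ liminf (fun n => P (sq n) y B) atTop := liminf_le_liminf hev2
      have hFatou := lintegral_liminf_le (μ := μ) (f := fun n y => P (sq n) y B) (u := atTop)
        (fun n => (Measure.measurable_coe hBmeas).comp (hmeas (sq n)))
      have hlow : ENNReal.ofReal β' ≤ ∫⁻ y, liminf (fun n => P (sq n) y B) atTop ∂μ := by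
        calc ENNReal.ofReal β' = ∫⁻ _y, ENNReal.ofReal β' ∂μ := by simp
        _ ≤ _ := lintegral_mono hink
      have hterm : ∀ n, ∫⁻ y, P (sq n) y B ∂μ ≤ ENNReal.ofReal β := by
        intro n
        rw [← Measure.bind_apply hBmeas (hmeas (sq n)).aemeasurable]
        exact hbad n
      have hupp : liminf (fun n => ∫⁻ y, P (sq n) y B ∂μ) atTop ≤ ENNReal.ofReal β :=
        le_trans liminf_le_limsup (limsup_le_of_le (h := Eventually.of_forall hterm))
      have hfinal : ENNReal.ofReal β' ≤ ENNReal.ofReal β := hlow.trans (hFatou.trans hupp)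
      have : β' ≤ β := (ENNReal.ofReal_le_ofReal_iff hβpos.le).1 hfinal
      linarith
    -- measurability and integrability of y ↦ tvd (P s y) (P s z)
    have hHmeas : ∀ s : ℝ, Measurable fun y => tvd (P s y) (P s z) := by
      intro s
      haveI := hprob s z
      exact measurable_tvd_comp u huo hbas (hmeas s) (hprob s) (P s z)
    have hH0 : ∀ (s : ℝ) (y : E), 0 ≤ tvd (P s y) (P s z) := by
      intro s y
      haveI := hprob s y; haveI := hprob s z
      exact tvd_nonneg _ _
    have hHle : ∀ (s : ℝ) (y : E), tvd (P s y) (P s z) ≤ 2 := by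
      intro s y
      haveI := hprob s y; haveI := hprob s z
      exact tvd_le_two _ _
    have hHint : ∀ (s : ℝ) (ξ : Measure E), IsProbabilityMeasure ξ →
        Integrable (fun y => tvd (P s y) (P s z)) ξ := by
      intro s ξ hξ
      haveI := hξ
      refine (integrable_const (2:ℝ)).mono' (hHmeas s).aestronglyMeasurable
        (Eventually.of_forall fun y => ?_)
      rw [Real.norm_eq_abs, abs_of_nonneg (hH0 s y)]
      exact hHle s y
    -- dominated convergence for the integral of tvd
    have hDCT : ∀ (ξ : Measure E), IsProbabilityMeasure ξ → ξ Bᶜ = 0 →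
        Tendsto (fun s => ∫ y, tvd (P s y) (P s z) ∂ξ) atTop
          (𝓝 (∫ y, T (Measure.dirac y) (Measure.dirac z) ∂ξ)) ∧
        (∫ y, T (Measure.dirac y) (Measure.dirac z) ∂ξ) ≤ α := by
      intro ξ hξ hξc
      haveI := hξ
      have htend := tendsto_integral_filter_of_dominated_convergence (μ := ξ)
        (F := fun s y => tvd (P s y) (P s z))
        (f := fun y => T (Measure.dirac y) (Measure.dirac z)) (fun _ => (2:ℝ))
        (Eventually.of_forall fun s => (hHmeas s).aestronglyMeasurable)
        (Eventually.of_forall fun s => ae_of_all _ fun y => by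
          rw [Real.norm_eq_abs, abs_of_nonneg (hH0 s y)]; exact hHle s y)
        (integrable_const 2)
        (ae_of_all _ fun y => hptw y z)
      refine ⟨htend, ?_⟩
      have haesm : AEStronglyMeasurable (fun y => T (Measure.dirac y) (Measure.dirac z)) ξ :=
        aestronglyMeasurable_of_tendsto_ae atTop
          (fun s => (hHmeas s).aestronglyMeasurable) (ae_of_all _ fun y => hptw y z)
      have hellbd : ∀ y, ‖T (Measure.dirac y) (Measure.dirac z)‖ ≤ 2 := by
        intro y
        rw [Real.norm_eq_abs, abs_of_nonneg (hT0 _ _)]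
        exact hTle2 _ _
      have hellint : Integrable (fun y => T (Measure.dirac y) (Measure.dirac z)) ξ :=
        (integrable_const (2:ℝ)).mono' haesm (ae_of_all _ hellbd)
      have haele : ∀ᵐ y ∂ξ, T (Measure.dirac y) (Measure.dirac z) ≤ α := by
        have hBae : ∀ᵐ y ∂ξ, y ∈ B := by
          rw [ae_iff]
          have : {y | ¬ y ∈ B} = Bᶜ := rfl
          rw [this]
          exact hξc
        exact hBae.mono fun y hy => (hell y hy).le
      calc ∫ y, T (Measure.dirac y) (Measure.dirac z) ∂ξ
          ≤ ∫ _y, α ∂ξ := integral_mono_ae hellint (integrable_const _) haele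
      _ = α := by simp
    -- the master inequality
    have master : ∀ (μ₁ μ₂ : Measure E), IsProbabilityMeasure μ₁ → IsProbabilityMeasure μ₂ →
        T μ₁ μ₂ ≤ β * (2 * α) + (1 - β) * Θ := by
      intro μ₁ μ₂ hp1 hp2
      haveI := hp1; haveI := hp2
      obtain ⟨t, ⟨htm1, htm2⟩, ht0⟩ :=
        (((hmass μ₁ hp1).and (hmass μ₂ hp2)).and (eventually_ge_atTop (0:ℝ))).exists
      haveI hμ₁' : IsProbabilityMeasure (μ₁.bind (P t)) := hbindprob μ₁ t
      haveI hμ₂' : IsProbabilityMeasure (μ₂.bind (P t)) := hbindprob μ₂ t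
      -- decomposition of a measure with mass on B
      have hdecomp : ∀ (μ' : Measure E), IsProbabilityMeasure μ' → ENNReal.ofReal β < μ' B →
          ∃ νh ρ : Measure E, IsProbabilityMeasure νh ∧ IsProbabilityMeasure ρ ∧ νh Bᶜ = 0 ∧
            ∀ f : SS E, ∫ x, f.1 x ∂μ' = β * ∫ x, f.1 x ∂νh + (1 - β) * ∫ x, f.1 x ∂ρ := by
        intro μ' hp' hmB
        haveI := hp'
        have hm0 : μ' B ≠ 0 := by
          intro h
          rw [h] at hmB
          simp at hmB
        have hmtop : μ' B ≠ ⊤ := measure_ne_top μ' B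
        set νh : Measure E := (μ' B)⁻¹ • μ'.restrict B with hνh
        haveI hνhprob : IsProbabilityMeasure νh := by
          constructor
          rw [hνh, Measure.smul_apply, Measure.restrict_apply_univ, smul_eq_mul]
          exact ENNReal.inv_mul_cancel hm0 hmtop
        have hνhc : νh Bᶜ = 0 := by
          rw [hνh, Measure.smul_apply, Measure.restrict_apply hBmeas.compl,
            Set.compl_inter_self]
          simp
        set ν : Measure E := ENNReal.ofReal β • νh with hν
        have hνle : ν ≤ μ' := by
          refine Measure.le_iff.2 fun s hs => ?_
          rw [hν, hνh, smul_smul, Measure.smul_apply, Measure.restrict_apply hs, smul_eq_mul]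
          calc ENNReal.ofReal β * (μ' B)⁻¹ * μ' (s ∩ B)
              ≤ μ' B * (μ' B)⁻¹ * μ' (s ∩ B) := by
                exact mul_le_mul_left (mul_le_mul_left hmB.le _) _
          _ = 1 * μ' (s ∩ B) := by rw [ENNReal.mul_inv_cancel hm0 hmtop]
          _ ≤ μ' s := by rw [one_mul]; exact measure_mono Set.inter_subset_left
        haveI : IsFiniteMeasure ν := isFiniteMeasure_of_le μ' hνle
        have hνuniv : ν Set.univ = ENNReal.ofReal β := by
          rw [hν, Measure.smul_apply, measure_univ, smul_eq_mul, mul_one]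
        have hsub : (μ' - ν) Set.univ = ENNReal.ofReal (1 - β) := by
          rw [Measure.sub_apply MeasurableSet.univ hνle, measure_univ, hνuniv,
            ENNReal.ofReal_sub 1 hβpos.le, ENNReal.ofReal_one]
        have h1βne0 : ENNReal.ofReal (1 - β) ≠ 0 :=
          (ENNReal.ofReal_pos.2 (by linarith)).ne'
        set ρ : Measure E := (ENNReal.ofReal (1 - β))⁻¹ • (μ' - ν) with hρ
        haveI hρprob : IsProbabilityMeasure ρ := by
          constructor
          rw [hρ, Measure.smul_apply, hsub, smul_eq_mul]
          exact ENNReal.inv_mul_cancel h1βne0 ENNReal.ofReal_ne_top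
        refine ⟨νh, ρ, hνhprob, hρprob, hνhc, fun f => ?_⟩
        haveI : IsFiniteMeasure (μ' - ν) := isFiniteMeasure_of_le μ' (Measure.sub_le)
        have hμ'eq : (μ' - ν) + ν = μ' := Measure.sub_add_cancel_of_le hνle
        have hsubρ : μ' - ν = ENNReal.ofReal (1 - β) • ρ := by
          rw [hρ, smul_smul, ENNReal.mul_inv_cancel h1βne0 ENNReal.ofReal_ne_top, one_smul]
        calc ∫ x, f.1 x ∂μ' = ∫ x, f.1 x ∂((μ' - ν) + ν) := by rw [hμ'eq]
        _ = ∫ x, f.1 x ∂(μ' - ν) + ∫ x, f.1 x ∂ν :=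
            integral_add_measure (f.integrable _) (f.integrable _)
        _ = (1 - β) * ∫ x, f.1 x ∂ρ + β * ∫ x, f.1 x ∂νh := by
            congr 1
            · rw [hsubρ, integral_smul_measure, ENNReal.toReal_ofReal (by linarith),
                smul_eq_mul]
            · rw [hν, integral_smul_measure, ENNReal.toReal_ofReal hβpos.le, smul_eq_mul]
        _ = β * ∫ x, f.1 x ∂νh + (1 - β) * ∫ x, f.1 x ∂ρ := by ring
      obtain ⟨νh₁, ρ₁, hpν₁, hpρ₁, hc₁, hsplit₁⟩ := hdecomp (μ₁.bind (P t)) hμ₁' htm1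
      obtain ⟨νh₂, ρ₂, hpν₂, hpρ₂, hc₂, hsplit₂⟩ := hdecomp (μ₂.bind (P t)) hμ₂' htm2
      haveI := hpν₁; haveI := hpν₂; haveI := hpρ₁; haveI := hpρ₂
      -- the per-time inequality
      have hkey : ∀ s : ℝ, 0 ≤ s →
          tvd ((μ₁.bind (P t)).bind (P s)) ((μ₂.bind (P t)).bind (P s))
          ≤ β * ((∫ y, tvd (P s y) (P s z) ∂νh₁) + (∫ y, tvd (P s y) (P s z) ∂νh₂))
            + (1 - β) * tvd (ρ₁.bind (P s)) (ρ₂.bind (P s)) := by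
        intro s hs
        haveI := hbindprob (μ₁.bind (P t)) s
        haveI := hbindprob (μ₂.bind (P t)) s
        haveI := hbindprob ρ₁ s
        haveI := hbindprob ρ₂ s
        refine tvd_le fun f => ?_
        set g : SS E := SSmap (hmeas s) (hprob s) f with hg
        have e1 : ∫ x, f.1 x ∂((μ₁.bind (P t)).bind (P s)) = ∫ x, g.1 x ∂(μ₁.bind (P t)) :=
          integral_bind_eq (μ₁.bind (P t)) (hmeas s) (hprob s) f
        have e2 : ∫ x, f.1 x ∂((μ₂.bind (P t)).bind (P s)) = ∫ x, g.1 x ∂(μ₂.bind (P t)) :=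
          integral_bind_eq (μ₂.bind (P t)) (hmeas s) (hprob s) f
        rw [e1, e2, hsplit₁ g, hsplit₂ g]
        have habs : ∀ a b c d : ℝ,
            |(β*a + (1-β)*c) - (β*b + (1-β)*d)| ≤ β*|a-b| + (1-β)*|c-d| := by
          intro a b c d
          have h1 : (β*a + (1-β)*c) - (β*b + (1-β)*d) = β*(a-b) + (1-β)*(c-d) := by ring
          rw [h1]
          refine (abs_add_le _ _).trans ?_
          rw [abs_mul, abs_mul, abs_of_nonneg hβpos.le,
            abs_of_nonneg (by linarith : (0:ℝ) ≤ 1-β)]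
        refine (habs _ _ _ _).trans ?_
        have hgz : ∀ (ξ : Measure E), IsProbabilityMeasure ξ →
            |∫ x, g.1 x ∂ξ - g.1 z| ≤ ∫ y, tvd (P s y) (P s z) ∂ξ := by
          intro ξ hξ
          haveI := hξ
          have h1 : ∫ x, (g.1 x - g.1 z) ∂ξ = ∫ x, g.1 x ∂ξ - g.1 z := by
            rw [integral_sub (g.integrable ξ) (integrable_const _), integral_const]
            simp
          calc |∫ x, g.1 x ∂ξ - g.1 z| = |∫ x, (g.1 x - g.1 z) ∂ξ| := by rw [h1]
          _ ≤ ∫ x, |g.1 x - g.1 z| ∂ξ := by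
              simpa [Real.norm_eq_abs] using
                norm_integral_le_integral_norm (μ := ξ) (fun x => g.1 x - g.1 z)
          _ ≤ ∫ y, tvd (P s y) (P s z) ∂ξ := by
              refine integral_mono ((g.integrable ξ).sub (integrable_const _)).abs
                (hHint s ξ hξ) fun y => ?_
              haveI := hprob s y; haveI := hprob s z
              exact le_tvd (P s y) (P s z) f
        have hbnd1 : |∫ x, g.1 x ∂νh₁ - ∫ x, g.1 x ∂νh₂|
            ≤ (∫ y, tvd (P s y) (P s z) ∂νh₁) + (∫ y, tvd (P s y) (P s z) ∂νh₂) := by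
          calc |∫ x, g.1 x ∂νh₁ - ∫ x, g.1 x ∂νh₂|
              ≤ |∫ x, g.1 x ∂νh₁ - g.1 z| + |g.1 z - ∫ x, g.1 x ∂νh₂| := abs_sub_le _ _ _
          _ ≤ (∫ y, tvd (P s y) (P s z) ∂νh₁) + (∫ y, tvd (P s y) (P s z) ∂νh₂) := by
              refine add_le_add (hgz νh₁ hpν₁) ?_
              rw [abs_sub_comm]
              exact hgz νh₂ hpν₂
        have hbnd2 : |∫ x, g.1 x ∂ρ₁ - ∫ x, g.1 x ∂ρ₂|
            ≤ tvd (ρ₁.bind (P s)) (ρ₂.bind (P s)) := by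
          have e3 : ∫ x, g.1 x ∂ρ₁ = ∫ x, f.1 x ∂(ρ₁.bind (P s)) :=
            (integral_bind_eq ρ₁ (hmeas s) (hprob s) f).symm
          have e4 : ∫ x, g.1 x ∂ρ₂ = ∫ x, f.1 x ∂(ρ₂.bind (P s)) :=
            (integral_bind_eq ρ₂ (hmeas s) (hprob s) f).symm
          rw [e3, e4]
          exact le_tvd _ _ f
        exact add_le_add (mul_le_mul_of_nonneg_left hbnd1 hβpos.le)
          (mul_le_mul_of_nonneg_left hbnd2 (by linarith))
      -- pass to the limit
      obtain ⟨htend₁, hL₁⟩ := hDCT νh₁ hpν₁ hc₁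
      obtain ⟨htend₂, hL₂⟩ := hDCT νh₂ hpν₂ hc₂
      have h1 : Tendsto (fun s => D μ₁ μ₂ (t + s)) atTop (𝓝 (T μ₁ μ₂)) :=
        (hTtendsto μ₁ μ₂).comp (tendsto_atTop_add_const_left atTop t tendsto_id)
      have h2 : (fun s => D μ₁ μ₂ (t + s))
          =ᶠ[atTop] fun s => D (μ₁.bind (P t)) (μ₂.bind (P t)) s := by
        refine (eventually_ge_atTop (0:ℝ)).mono fun s hs => ?_
        simp only [hD]
        rw [hshift μ₁ t s ht0 hs, hshift μ₂ t s ht0 hs]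
      have h3 : Tendsto (D (μ₁.bind (P t)) (μ₂.bind (P t))) atTop (𝓝 (T μ₁ μ₂)) :=
        h1.congr' h2
      have h4 : Tendsto (fun s =>
          β * ((∫ y, tvd (P s y) (P s z) ∂νh₁) + (∫ y, tvd (P s y) (P s z) ∂νh₂))
            + (1 - β) * D ρ₁ ρ₂ s) atTop
          (𝓝 (β * ((∫ y, T (Measure.dirac y) (Measure.dirac z) ∂νh₁)
              + (∫ y, T (Measure.dirac y) (Measure.dirac z) ∂νh₂))
            + (1 - β) * T ρ₁ ρ₂)) :=
        ((htend₁.add htend₂).const_mul β).add ((hTtendsto ρ₁ ρ₂).const_mul (1 - β))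
      have h5 : T μ₁ μ₂ ≤ β * ((∫ y, T (Measure.dirac y) (Measure.dirac z) ∂νh₁)
              + (∫ y, T (Measure.dirac y) (Measure.dirac z) ∂νh₂)) + (1 - β) * T ρ₁ ρ₂ := by
        refine le_of_tendsto_of_tendsto h3 h4 ?_
        refine (eventually_ge_atTop (0:ℝ)).mono fun s hs => ?_
        simpa only [hD] using hkey s hs
      have hρΘ : T ρ₁ ρ₂ ≤ Θ := hTmem ρ₁ ρ₂
      have hLsum : (∫ y, T (Measure.dirac y) (Measure.dirac z) ∂νh₁)
          + (∫ y, T (Measure.dirac y) (Measure.dirac z) ∂νh₂) ≤ 2 * α := by linarith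
      calc T μ₁ μ₂ ≤ β * ((∫ y, T (Measure.dirac y) (Measure.dirac z) ∂νh₁)
              + (∫ y, T (Measure.dirac y) (Measure.dirac z) ∂νh₂)) + (1 - β) * T ρ₁ ρ₂ := h5
      _ ≤ β * (2 * α) + (1 - β) * Θ :=
          add_le_add (mul_le_mul_of_nonneg_left hLsum hβpos.le)
            (mul_le_mul_of_nonneg_left hρΘ (by linarith))
    -- closing the loop
    have hΘineq : Θ ≤ β * (2 * α) + (1 - β) * Θ := by
      refine csSup_le hSne ?_
      rintro r ⟨μ, ν, h1, h2, rfl⟩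
      exact master μ ν h1 h2
    have hβΘ : β * Θ ≤ β * (2 * α) := by linarith
    exact le_of_mul_le_mul_left hβΘ hβpos
  -- conclude
  have hΘle0 : Θ ≤ 0 := by
    refine le_of_forall_pos_le_add fun ε hε => ?_
    have := hΘα (ε / 2) (by linarith)
    linarith
  have hfinal : T (Measure.dirac x₁) (Measure.dirac x₂) = 0 :=
    le_antisymm ((hTmem (Measure.dirac x₁) (Measure.dirac x₂)).trans hΘle0)
      (hT0 (Measure.dirac x₁) (Measure.dirac x₂))
  show Tendsto (fun t => tvd (P t x₁) (P t x₂)) atTop (𝓝 0)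
  rw [← hfinal]
  exact hptw x₁ x₂
end

section
/- Let {P_t} be a Markov–Feller semigroup, μ an invariant measure, and suppose that for every pair x₁, x₂ ∈ E, lim_{t→∞} sup_{‖f‖_∞ ≤ 1} |P_t f(x₁) − P_t f(x₂)| = 0. Then for every probability measure ν on E, ‖P_t*ν − μ‖_TV → 0 as t → ∞. -/
open MeasureTheory Filter Metric Set Topology
open scoped ENNReal

section Aux

variable {E : Type*} [MeasurableSpace E]

/-- countable supremum of measure differences over finite unions of a countable family. -/
noncomputable def Dtv (g : ℕ → Set E) (α β : Measure E) : ℝ≥0∞ :=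
  ⨆ s : Finset ℕ, (α (⋃ n ∈ s, g n) - β (⋃ n ∈ s, g n))

lemma Dtv_le_one (g : ℕ → Set E) (α β : Measure E) [IsProbabilityMeasure α] :
    Dtv g α β ≤ 1 :=
  iSup_le fun _ => le_trans tsub_le_self prob_le_one

lemma Dtv_ne_top (g : ℕ → Set E) (α β : Measure E) [IsProbabilityMeasure α] :
    Dtv g α β ≠ ∞ :=
  ne_top_of_le_ne_top ENNReal.one_ne_top (Dtv_le_one g α β)

lemma integrable_of_bound {α : Measure E} [IsFiniteMeasure α] {f : E → ℝ} {C : ℝ}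
    (hf : Measurable f) (hb : ∀ x, |f x| ≤ C) : Integrable f α :=
  Integrable.mono' (integrable_const C) hf.aestronglyMeasurable
    (ae_of_all _ fun x => by simpa [Real.norm_eq_abs] using hb x)

lemma abs_integral_le_one {α : Measure E} [IsProbabilityMeasure α] {f : E → ℝ}
    (hb : ∀ x, |f x| ≤ 1) : |∫ x, f x ∂α| ≤ 1 := by
  have := norm_integral_le_of_norm_le_const (C := 1) (μ := α) (f := f)
    (ae_of_all _ fun x => by simpa [Real.norm_eq_abs] using hb x)
  simpa [Real.norm_eq_abs, measure_univ] using this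

end Aux

section Aux2

variable {E : Type*} [MetricSpace E] [SecondCountableTopology E]
  [MeasurableSpace E] [BorelSpace E]

omit [SecondCountableTopology E] [BorelSpace E] in
lemma open_eq_iUnion {g : ℕ → Set E}
    (hbasis : forall U : Set E, IsOpen U -> forall x, x ∈ U -> exists n, x ∈ g n ∧ g n ⊆ U)
    {U : Set E} (hU : IsOpen U) :
    U = ⋃ n, ⋃ (_ : g n ⊆ U), g n := by
  ext x
  simp only [Set.mem_iUnion]
  constructor
  · intro hx
    obtain ⟨n, hxn, hnU⟩ := hbasis U hU x hx
    exact ⟨n, hnU, hxn⟩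
  · rintro ⟨n, hnU, hxn⟩
    exact hnU hxn

lemma meas_diff_le {g : ℕ → Set E}
    (hbasis : forall U : Set E, IsOpen U -> forall x, x ∈ U -> exists n, x ∈ g n ∧ g n ⊆ U)
    {α β : Measure E} [IsProbabilityMeasure α] [IsProbabilityMeasure β]
    (A : Set E) :
    α A - β A ≤ Dtv g α β := by
  classical
  refine ENNReal.le_of_forall_pos_le_add fun ε hε _ => ?_
  obtain ⟨U, hAU, hUopen, hU⟩ := A.exists_isOpen_lt_add (μ := β) (measure_ne_top β A)
    (ε := (ε : ℝ≥0∞)) (ENNReal.coe_ne_zero.2 hε.ne')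
  set h : ℕ → Set E := fun n => ⋃ (_ : g n ⊆ U), g n with hh
  have hUeq : U = ⋃ n, h n := open_eq_iUnion hbasis hUopen
  have hhsub : forall n, h n ⊆ U := fun n => Set.iUnion_subset fun hc => hc
  have hαU : α U = ⨆ N, α (accumulate h N) := by
    rw [hUeq]; exact measure_iUnion_eq_iSup_accumulate
  have hAcc_le : forall N : ℕ, α (accumulate h N) - β U ≤ Dtv g α β := by
    intro N
    have hs : accumulate h N = ⋃ n ∈ (Finset.range (N+1)).filter (fun n => g n ⊆ U), g n := by
      ext x
      simp only [Set.accumulate_def, Set.mem_iUnion, Finset.mem_filter, Finset.mem_range, hh,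
        Nat.lt_succ_iff]
      tauto
    have hAccU : accumulate h N ⊆ U := by
      rw [Set.accumulate_def]; exact Set.iUnion₂_subset fun n _ => hhsub n
    calc α (accumulate h N) - β U ≤ α (accumulate h N) - β (accumulate h N) :=
          tsub_le_tsub_left (measure_mono hAccU) _
      _ ≤ Dtv g α β := by
          rw [hs]
          exact le_iSup (fun s : Finset ℕ => α (⋃ n ∈ s, g n) - β (⋃ n ∈ s, g n)) _
  have hUdiff : α U - β U ≤ Dtv g α β := by
    rw [hαU, ENNReal.iSup_sub]
    exact iSup_le hAcc_le
  calc α A - β A ≤ α U - β A := tsub_le_tsub_right (measure_mono hAU) _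
    _ ≤ α U - (β U - ε) := tsub_le_tsub_left (tsub_le_iff_right.2 hU.le) _
    _ ≤ (α U - β U) + ε := tsub_tsub_le_tsub_add
    _ ≤ Dtv g α β + ε := add_le_add_left hUdiff _

lemma exists_hahn (α β : Measure E) [IsFiniteMeasure α] [IsFiniteMeasure β] :
    exists p : Set E, MeasurableSet p ∧ β.restrict p ≤ α.restrict p ∧
      α.restrict pᶜ ≤ β.restrict pᶜ := by
  obtain ⟨i, hi, hpos, hneg⟩ :=
    MeasureTheory.SignedMeasure.exists_compl_positive_negative
      (α.toSignedMeasure - β.toSignedMeasure)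
  have hposset : forall j, MeasurableSet j -> j ⊆ i -> β j ≤ α j := by
    intro j hj hji
    have := (MeasureTheory.VectorMeasure.restrict_le_restrict_iff _ _ hi).1 hpos hj hji
    simp only [MeasureTheory.VectorMeasure.sub_apply,
      MeasureTheory.Measure.toSignedMeasure_apply_measurable hj,
      MeasureTheory.VectorMeasure.zero_apply] at this
    exact (ENNReal.toReal_le_toReal (measure_ne_top β j) (measure_ne_top α j)).1 (by simp only [measureReal_def] at this; linarith)
  have hnegset : forall j, MeasurableSet j -> j ⊆ iᶜ -> α j ≤ β j := by
    intro j hj hji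
    have := (MeasureTheory.VectorMeasure.restrict_le_restrict_iff _ _ hi.compl).1 hneg hj hji
    simp only [MeasureTheory.VectorMeasure.sub_apply,
      MeasureTheory.Measure.toSignedMeasure_apply_measurable hj,
      MeasureTheory.VectorMeasure.zero_apply] at this
    exact (ENNReal.toReal_le_toReal (measure_ne_top α j) (measure_ne_top β j)).1 (by simp only [measureReal_def] at this; linarith)
  refine ⟨i, hi, ?_, ?_⟩
  · refine Measure.le_iff.2 fun s hs => ?_
    rw [Measure.restrict_apply hs, Measure.restrict_apply hs]
    exact hposset _ (hs.inter hi) Set.inter_subset_right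
  · refine Measure.le_iff.2 fun s hs => ?_
    rw [Measure.restrict_apply hs, Measure.restrict_apply hs]
    exact hnegset _ (hs.inter hi.compl) Set.inter_subset_right

lemma int_diff_le_of_hahn {α β : Measure E} [IsProbabilityMeasure α] [IsProbabilityMeasure β]
    {p : Set E} (hp : MeasurableSet p)
    (hpos : β.restrict p ≤ α.restrict p) (hneg : α.restrict pᶜ ≤ β.restrict pᶜ)
    {f : E → ℝ} (hf : Measurable f) (hb : forall x, |f x| ≤ 1) :
    ∫ x, f x ∂α - ∫ x, f x ∂β ≤ 2 * ((α p).toReal - (β p).toReal) := by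
  have hint : forall (ρ : Measure E), IsProbabilityMeasure ρ -> Integrable f ρ := by
    intro ρ hρ; exact integrable_of_bound hf hb
  have hIα := hint α inferInstance
  have hIβ := hint β inferInstance
  -- restricted integrals
  have key1 : ∫ x in p, (1 - f x) ∂β ≤ ∫ x in p, (1 - f x) ∂α := by
    refine integral_mono_measure hpos (ae_of_all _ fun x => ?_) ?_
    · have := (abs_le.1 (hb x)).2; simp only [Pi.zero_apply]; linarith
    · exact (integrable_const 1).sub (hIα.restrict)
  have key2 : ∫ x in pᶜ, (1 + f x) ∂α ≤ ∫ x in pᶜ, (1 + f x) ∂β := by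
    refine integral_mono_measure hneg (ae_of_all _ fun x => ?_) ?_
    · have := (abs_le.1 (hb x)).1; simp only [Pi.zero_apply]; linarith
    · exact (integrable_const 1).add (hIβ.restrict)
  have expand : forall (ρ : Measure E) (hρ : IsProbabilityMeasure ρ) (s : Set E),
      (∫ x in s, (1 - f x) ∂ρ = (ρ s).toReal - ∫ x in s, f x ∂ρ) ∧
      (∫ x in s, (1 + f x) ∂ρ = (ρ s).toReal + ∫ x in s, f x ∂ρ) := by
    intro ρ hρ s
    have h1 : ∫ x in s, (1 : ℝ) ∂ρ = (ρ s).toReal := by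
      simp [Measure.restrict_apply_univ]; rfl
    constructor
    · rw [integral_sub (integrable_const 1) ((hint ρ hρ).restrict), h1]
    · rw [integral_add (integrable_const 1) ((hint ρ hρ).restrict), h1]
  have c1 : ∫ x in p, f x ∂α - ∫ x in p, f x ∂β ≤ (α p).toReal - (β p).toReal := by
    have e1 := (expand α inferInstance p).1
    have e2 := (expand β inferInstance p).1
    rw [e1, e2] at key1; linarith
  have c2 : ∫ x in pᶜ, f x ∂α - ∫ x in pᶜ, f x ∂β ≤ (β pᶜ).toReal - (α pᶜ).toReal := by
    have e1 := (expand α inferInstance pᶜ).2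
    have e2 := (expand β inferInstance pᶜ).2
    rw [e1, e2] at key2; linarith
  have hcompl : forall (ρ : Measure E), IsProbabilityMeasure ρ ->
      (ρ pᶜ).toReal = 1 - (ρ p).toReal := by
    intro ρ hρ
    rw [measure_compl hp (measure_ne_top ρ p), measure_univ,
      ENNReal.toReal_sub_of_le prob_le_one ENNReal.one_ne_top, ENNReal.toReal_one]
  have hsplitα : ∫ x, f x ∂α = ∫ x in p, f x ∂α + ∫ x in pᶜ, f x ∂α :=
    (integral_add_compl hp hIα).symm
  have hsplitβ : ∫ x, f x ∂β = ∫ x in p, f x ∂β + ∫ x in pᶜ, f x ∂β :=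
    (integral_add_compl hp hIβ).symm
  rw [hsplitα, hsplitβ, hcompl α inferInstance, hcompl β inferInstance] at *
  linarith

lemma abs_int_diff_le {g : ℕ → Set E}
    (hbasis : forall U : Set E, IsOpen U -> forall x, x ∈ U -> exists n, x ∈ g n ∧ g n ⊆ U)
    {α β : Measure E} [IsProbabilityMeasure α] [IsProbabilityMeasure β]
    {f : E → ℝ} (hf : Measurable f) (hb : forall x, |f x| ≤ 1) :
    ENNReal.ofReal |∫ x, f x ∂α - ∫ x, f x ∂β| ≤ 2 * Dtv g α β := by
  obtain ⟨p, hp, hpos, hneg⟩ := exists_hahn α β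
  have hpos2 : β.restrict (pᶜ)ᶜ ≤ α.restrict (pᶜ)ᶜ := by simpa using hpos
  have h1 : ∫ x, f x ∂α - ∫ x, f x ∂β ≤ 2 * ((α p).toReal - (β p).toReal) :=
    int_diff_le_of_hahn hp hpos hneg hf hb
  have h2 : ∫ x, f x ∂β - ∫ x, f x ∂α ≤ 2 * ((β pᶜ).toReal - (α pᶜ).toReal) :=
    int_diff_le_of_hahn hp.compl hneg hpos2 hf hb
  have hcompl : forall (ρ : Measure E), IsProbabilityMeasure ρ ->
      (ρ pᶜ).toReal = 1 - (ρ p).toReal := by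
    intro ρ hρ
    rw [measure_compl hp (measure_ne_top ρ p), measure_univ,
      ENNReal.toReal_sub_of_le prob_le_one ENNReal.one_ne_top, ENNReal.toReal_one]
  have h2' : ∫ x, f x ∂β - ∫ x, f x ∂α ≤ 2 * ((α p).toReal - (β p).toReal) := by
    rw [hcompl α inferInstance, hcompl β inferInstance] at h2; linarith
  have hDle : (α p).toReal - (β p).toReal ≤ (Dtv g α β).toReal :=
    le_trans (ENNReal.le_toReal_sub (measure_ne_top β p))
      (ENNReal.toReal_mono (Dtv_ne_top g α β) (meas_diff_le hbasis p))
  have habs : |∫ x, f x ∂α - ∫ x, f x ∂β| ≤ 2 * (Dtv g α β).toReal := by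
    rw [abs_sub_le_iff]
    exact ⟨h1.trans (by linarith), h2'.trans (by linarith)⟩
  refine le_trans (ENNReal.ofReal_le_ofReal habs) ?_
  rw [ENNReal.ofReal_mul (by norm_num), ENNReal.ofReal_toReal (Dtv_ne_top g α β),
    ENNReal.ofReal_ofNat]

lemma Dtv_le_sup {g : ℕ → Set E} (hg : forall n, IsOpen (g n))
    (α β : Measure E) [IsProbabilityMeasure α] [IsProbabilityMeasure β] :
    Dtv g α β ≤ ENNReal.ofReal
      (⨆ f : {f : E → ℝ // Measurable f ∧ forall y, |f y| ≤ 1},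
        |∫ x, f.1 x ∂α - ∫ x, f.1 x ∂β|) := by
  haveI : Nonempty {f : E → ℝ // Measurable f ∧ forall y, |f y| ≤ 1} :=
    ⟨⟨0, measurable_const, fun y => by simp⟩⟩
  have hbdd : BddAbove (Set.range fun f : {f : E → ℝ // Measurable f ∧ forall y, |f y| ≤ 1} =>
      |∫ x, f.1 x ∂α - ∫ x, f.1 x ∂β|) := by
    refine ⟨2, ?_⟩
    rintro r ⟨f, rfl⟩
    have h1 : |∫ x, f.1 x ∂α| ≤ 1 := abs_integral_le_one f.2.2
    have h2 : |∫ x, f.1 x ∂β| ≤ 1 := abs_integral_le_one f.2.2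
    calc |∫ x, f.1 x ∂α - ∫ x, f.1 x ∂β| ≤ |∫ x, f.1 x ∂α| + |∫ x, f.1 x ∂β| :=
          abs_sub _ _
      _ ≤ 2 := by linarith
  refine iSup_le fun s => ?_
  set T : Set E := ⋃ n ∈ s, g n with hT
  have hTmeas : MeasurableSet T := (isOpen_biUnion fun n _ => hg n).measurableSet
  set ind : E → ℝ := T.indicator (fun _ => 1) with hind
  have hindmeas : Measurable ind := measurable_const.indicator hTmeas
  have hindb : forall y, |ind y| ≤ 1 := by
    intro y
    by_cases hy : y ∈ T <;> simp [hind, Set.indicator_apply, hy]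
  have hintα : ∫ x, ind x ∂α = (α T).toReal := by
    rw [hind, integral_indicator_const (1 : ℝ) hTmeas]; simp; rfl
  have hintβ : ∫ x, ind x ∂β = (β T).toReal := by
    rw [hind, integral_indicator_const (1 : ℝ) hTmeas]; simp; rfl
  have heq : α T - β T = ENNReal.ofReal ((α T).toReal - (β T).toReal) := by
    rw [ENNReal.ofReal_sub _ ENNReal.toReal_nonneg, ENNReal.ofReal_toReal (measure_ne_top α T),
      ENNReal.ofReal_toReal (measure_ne_top β T)]
  rw [heq]
  refine ENNReal.ofReal_le_ofReal ?_
  have hle : (α T).toReal - (β T).toReal ≤ |∫ x, ind x ∂α - ∫ x, ind x ∂β| := by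
    rw [hintα, hintβ]; exact le_abs_self _
  exact hle.trans (le_ciSup hbdd ⟨ind, hindmeas, hindb⟩)

end Aux2

section Kernels

variable {E : Type*} [MeasurableSpace E]

lemma measurable_pf {k : E → Measure E} (hk : Measurable k)
    (hkprob : forall x, IsProbabilityMeasure (k x))
    {f : E → ℝ} {C : ℝ} (hf : Measurable f) (hb : forall x, |f x| ≤ C) :
    Measurable fun x => ∫ y, f y ∂(k x) := by
  have hint : forall x, Integrable f (k x) := by
    intro x
    haveI := hkprob x
    exact integrable_of_bound hf hb
  have heq : (fun x => ∫ y, f y ∂(k x)) = fun x =>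
      (∫⁻ y, ENNReal.ofReal (f y) ∂(k x)).toReal -
      (∫⁻ y, ENNReal.ofReal (-f y) ∂(k x)).toReal := by
    funext x
    exact integral_eq_lintegral_pos_part_sub_lintegral_neg_part (hint x)
  rw [heq]
  have m1 : Measurable fun x => ∫⁻ y, ENNReal.ofReal (f y) ∂(k x) :=
    (Measure.measurable_lintegral (ENNReal.measurable_ofReal.comp hf)).comp hk
  have m2 : Measurable fun x => ∫⁻ y, ENNReal.ofReal (-f y) ∂(k x) :=
    (Measure.measurable_lintegral (ENNReal.measurable_ofReal.comp hf.neg)).comp hk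
  exact m1.ennreal_toReal.sub m2.ennreal_toReal

lemma isProb_bind {k : E → Measure E} (hk : Measurable k)
    (hkprob : forall x, IsProbabilityMeasure (k x))
    (ρ : Measure E) [IsProbabilityMeasure ρ] :
    IsProbabilityMeasure (ρ.bind k) := by
  constructor
  rw [Measure.bind_apply MeasurableSet.univ hk.aemeasurable]
  have : forall x, k x Set.univ = 1 := fun x => (hkprob x).measure_univ
  simp [this]

lemma integral_bind_nonneg {k : E → Measure E} (hk : Measurable k)
    (hkprob : forall x, IsProbabilityMeasure (k x))
    (ρ : Measure E) [IsProbabilityMeasure ρ]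
    {f : E → ℝ} (hf : Measurable f) (h0 : forall x, 0 ≤ f x) (hb : forall x, f x ≤ 1) :
    ∫ y, f y ∂(ρ.bind k) = ∫ x, ∫ y, f y ∂(k x) ∂ρ := by
  haveI := isProb_bind hk hkprob ρ
  have hof : Measurable fun y => ENNReal.ofReal (f y) := ENNReal.measurable_ofReal.comp hf
  have hA : forall x, ∫⁻ y, ENNReal.ofReal (f y) ∂(k x) ≤ 1 := by
    intro x
    haveI := hkprob x
    calc ∫⁻ y, ENNReal.ofReal (f y) ∂(k x) ≤ ∫⁻ _, 1 ∂(k x) :=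
          lintegral_mono fun y => by
            simpa using ENNReal.ofReal_le_ofReal (hb y)
      _ = 1 := by simp
  have hL : ∫ y, f y ∂(ρ.bind k) = (∫⁻ y, ENNReal.ofReal (f y) ∂(ρ.bind k)).toReal := by
    rw [integral_eq_lintegral_of_nonneg_ae (ae_of_all _ h0) hf.aestronglyMeasurable]
  have hbind : ∫⁻ y, ENNReal.ofReal (f y) ∂(ρ.bind k) =
      ∫⁻ x, ∫⁻ y, ENNReal.ofReal (f y) ∂(k x) ∂ρ := Measure.lintegral_bind hk.aemeasurable hof.aemeasurable
  have hinner : forall x, ∫ y, f y ∂(k x) = (∫⁻ y, ENNReal.ofReal (f y) ∂(k x)).toReal := by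
    intro x
    rw [integral_eq_lintegral_of_nonneg_ae (ae_of_all _ h0) hf.aestronglyMeasurable]
  have houter : ∫ x, ∫ y, f y ∂(k x) ∂ρ =
      (∫⁻ x, ∫⁻ y, ENNReal.ofReal (f y) ∂(k x) ∂ρ).toReal := by
    rw [show (fun x => ∫ y, f y ∂(k x)) = fun x =>
        (∫⁻ y, ENNReal.ofReal (f y) ∂(k x)).toReal from funext hinner]
    refine integral_toReal ((Measure.measurable_lintegral hof).comp hk).aemeasurable ?_
    exact ae_of_all _ fun x => lt_of_le_of_lt (hA x) ENNReal.one_lt_top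
  rw [hL, hbind, houter]

lemma integral_bind_eq {k : E → Measure E} (hk : Measurable k)
    (hkprob : forall x, IsProbabilityMeasure (k x))
    (ρ : Measure E) [IsProbabilityMeasure ρ]
    {f : E → ℝ} (hf : Measurable f) (hb : forall x, |f x| ≤ 1) :
    ∫ y, f y ∂(ρ.bind k) = ∫ x, ∫ y, f y ∂(k x) ∂ρ := by
  haveI := isProb_bind hk hkprob ρ
  set fp : E → ℝ := fun x => max (f x) 0 with hfp
  set fm : E → ℝ := fun x => max (-f x) 0 with hfm
  have hfpm : Measurable fp := hf.max measurable_const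
  have hfmm : Measurable fm := hf.neg.max measurable_const
  have hfp0 : forall x, 0 ≤ fp x := fun x => le_max_right _ _
  have hfm0 : forall x, 0 ≤ fm x := fun x => le_max_right _ _
  have hfp1 : forall x, fp x ≤ 1 := fun x => max_le (abs_le.1 (hb x)).2 zero_le_one
  have hfm1 : forall x, fm x ≤ 1 := fun x => max_le (by linarith [(abs_le.1 (hb x)).1]) zero_le_one
  have hsplit : forall x, f x = fp x - fm x := fun x =>
    (max_zero_sub_max_neg_zero_eq_self (f x)).symm
  have hIp : forall (σ : Measure E), IsProbabilityMeasure σ -> Integrable fp σ := fun σ hσ =>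
    integrable_of_bound hfpm fun x => by rw [abs_of_nonneg (hfp0 x)]; exact hfp1 x
  have hIm : forall (σ : Measure E), IsProbabilityMeasure σ -> Integrable fm σ := fun σ hσ =>
    integrable_of_bound hfmm fun x => by rw [abs_of_nonneg (hfm0 x)]; exact hfm1 x
  have hfd : forall (σ : Measure E), IsProbabilityMeasure σ ->
      ∫ y, f y ∂σ = ∫ y, fp y ∂σ - ∫ y, fm y ∂σ := by
    intro σ hσ
    rw [← integral_sub (hIp σ hσ) (hIm σ hσ)]
    exact integral_congr_ae (ae_of_all _ hsplit)
  have h1 := integral_bind_nonneg hk hkprob ρ hfpm hfp0 hfp1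
  have h2 := integral_bind_nonneg hk hkprob ρ hfmm hfm0 hfm1
  rw [hfd _ this, h1, h2, ← integral_sub]
  · refine integral_congr_ae (ae_of_all _ fun x => ?_)
    exact (hfd (k x) (hkprob x)).symm
  · refine integrable_of_bound (C := 1) (measurable_pf hk hkprob hfpm
      (fun x => by rw [abs_of_nonneg (hfp0 x)]; exact hfp1 x)) fun x => ?_
    haveI := hkprob x
    exact abs_integral_le_one fun y => by rw [abs_of_nonneg (hfp0 y)]; exact hfp1 y
  · refine integrable_of_bound (C := 1) (measurable_pf hk hkprob hfmm
      (fun x => by rw [abs_of_nonneg (hfm0 x)]; exact hfm1 x)) fun x => ?_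
    haveI := hkprob x
    exact abs_integral_le_one fun y => by rw [abs_of_nonneg (hfm0 y)]; exact hfm1 y

end Kernels

theorem stmt7 {E : Type*} [MetricSpace E] [CompleteSpace E] [SecondCountableTopology E]
    [MeasurableSpace E] [BorelSpace E]
    (P : ℝ → E → Measure E)
    (hprob : ∀ t x, IsProbabilityMeasure (P t x))
    (hmeas : ∀ t, Measurable (P t))
    (hP0 : ∀ x, P 0 x = Measure.dirac x)
    (hsemi : ∀ s t : ℝ, 0 ≤ s → 0 ≤ t → ∀ x, P (s + t) x = (P s x).bind (P t))
    (hFeller : ∀ (t : ℝ) (f : BoundedContinuousFunction E ℝ),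
      Continuous fun x => ∫ y, f y ∂(P t x))
    (μ : Measure E) (hμprob : IsProbabilityMeasure μ)
    (hinv : ∀ t : ℝ, 0 ≤ t → μ.bind (P t) = μ)
    (hconv : ∀ x₁ x₂ : E,
      Tendsto (fun t => ⨆ f : {f : E → ℝ // Measurable f ∧ ∀ y, |f y| ≤ 1},
        |Pf P t f.1 x₁ - Pf P t f.1 x₂|) atTop (𝓝 0)) :
    ∀ ν : Measure E, IsProbabilityMeasure ν →
      Tendsto (fun t => tvDist (ν.bind (P t)) μ) atTop (𝓝 0) := by
  intro ν hν
  haveI := hν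
  haveI := hμprob
  -- countable basis enumeration
  obtain ⟨b, hbc, -, hbbasis⟩ := TopologicalSpace.exists_countable_basis E
  obtain ⟨g, hgr⟩ := (hbc.insert (∅ : Set E)).exists_eq_range (Set.insert_nonempty _ _)
  have hgopen : ∀ n, IsOpen (g n) := by
    intro n
    have hmem : g n ∈ insert (∅ : Set E) b := hgr ▸ Set.mem_range_self n
    rcases Set.mem_insert_iff.1 hmem with h | h
    · rw [h]; exact isOpen_empty
    · exact hbbasis.isOpen h
  have hbasis : ∀ U : Set E, IsOpen U → ∀ x, x ∈ U → ∃ n, x ∈ g n ∧ g n ⊆ U := by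
    intro U hU x hx
    obtain ⟨v, hvb, hxv, hvU⟩ := hbbasis.exists_subset_of_mem_open hx hU
    have hv : v ∈ insert (∅ : Set E) b := Set.mem_insert_of_mem _ hvb
    rw [hgr] at hv
    obtain ⟨n, hn⟩ := hv
    exact ⟨n, by rw [hn]; exact hxv, by rw [hn]; exact hvU⟩
  set Dt : ℝ → E × E → ℝ≥0∞ := fun t p => Dtv g (P t p.1) (P t p.2) with hDtdef
  have hDmeas : ∀ t, Measurable (Dt t) := by
    intro t
    refine Measurable.iSup fun s => ?_
    have hTmeas : MeasurableSet (⋃ n ∈ s, g n) :=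
      (isOpen_biUnion fun n _ => hgopen n).measurableSet
    exact ((Measure.measurable_coe hTmeas).comp ((hmeas t).comp measurable_fst)).sub
      ((Measure.measurable_coe hTmeas).comp ((hmeas t).comp measurable_snd))
  have hDle1 : ∀ t p, Dt t p ≤ 1 := by
    intro t p
    haveI := hprob t p.1
    exact Dtv_le_one g _ _
  have hDtend : ∀ p : E × E, Tendsto (fun t => Dt t p) atTop (𝓝 0) := by
    intro p
    have h0 : Tendsto (fun t => ENNReal.ofReal
        (⨆ f : {f : E → ℝ // Measurable f ∧ ∀ y, |f y| ≤ 1},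
          |Pf P t f.1 p.1 - Pf P t f.1 p.2|)) atTop (𝓝 0) := by
      have := ENNReal.tendsto_ofReal (hconv p.1 p.2)
      simpa using this
    refine tendsto_of_tendsto_of_tendsto_of_le_of_le tendsto_const_nhds h0
      (fun t => zero_le) (fun t => ?_)
    haveI := hprob t p.1
    haveI := hprob t p.2
    exact Dtv_le_sup hgopen (P t p.1) (P t p.2)
  have hL : Tendsto (fun t => ∫⁻ p, Dt t p ∂(ν.prod μ)) atTop (𝓝 0) := by
    have h := tendsto_lintegral_filter_of_dominated_convergence (μ := ν.prod μ)
      (F := Dt) (f := fun _ => 0) (fun _ => (1 : ℝ≥0∞))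
      (Eventually.of_forall hDmeas)
      (Eventually.of_forall fun t => ae_of_all _ (hDle1 t))
      (by simp) (ae_of_all _ hDtend)
    simpa using h
  have hB : Tendsto (fun t => (2 * ∫⁻ p, Dt t p ∂(ν.prod μ)).toReal) atTop (𝓝 0) := by
    have h2 : Tendsto (fun t => 2 * ∫⁻ p, Dt t p ∂(ν.prod μ)) atTop (𝓝 (2 * 0)) :=
      ENNReal.Tendsto.const_mul hL (Or.inr ENNReal.ofNat_ne_top)
    rw [mul_zero] at h2
    have h3 := (ENNReal.tendsto_toReal ENNReal.zero_ne_top).comp h2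
    rw [ENNReal.toReal_zero] at h3
    exact h3
  have hC : ∀ t : ℝ, 0 ≤ t →
      tvDist (ν.bind (P t)) μ ≤ (2 * ∫⁻ p, Dt t p ∂(ν.prod μ)).toReal := by
    intro t ht
    have hLle : ∫⁻ p, Dt t p ∂(ν.prod μ) ≤ 1 := by
      calc ∫⁻ p, Dt t p ∂(ν.prod μ) ≤ ∫⁻ _, 1 ∂(ν.prod μ) := lintegral_mono (hDle1 t)
        _ = 1 := by simp
    have hfin : 2 * ∫⁻ p, Dt t p ∂(ν.prod μ) ≠ ⊤ := by
      refine ne_top_of_le_ne_top (ENNReal.ofNat_ne_top (n := 2)) ?_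
      calc 2 * ∫⁻ p, Dt t p ∂(ν.prod μ) ≤ 2 * 1 := mul_le_mul_right hLle _
        _ = 2 := mul_one _
    haveI : Nonempty {f : E → ℝ // Measurable f ∧ ∀ y, |f y| ≤ 1} :=
      ⟨⟨0, measurable_const, fun y => by simp⟩⟩
    have hsup : (⨆ f : {f : E → ℝ // Measurable f ∧ ∀ x, |f x| ≤ 1},
        |∫ x, f.1 x ∂(ν.bind (P t)) - ∫ x, f.1 x ∂μ|) ≤
        (2 * ∫⁻ p, Dt t p ∂(ν.prod μ)).toReal := by
      refine ciSup_le fun fs => ?_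
      obtain ⟨f, hfm, hfb⟩ := fs
      simp only
      set φ : E → ℝ := Pf P t f with hφdef
      have hφm : Measurable φ := measurable_pf (hmeas t) (hprob t) hfm hfb
      have hφb : ∀ x, |φ x| ≤ 1 := by
        intro x
        haveI := hprob t x
        exact abs_integral_le_one hfb
      have hbind1 : ∫ x, f x ∂(ν.bind (P t)) = ∫ x, φ x ∂ν :=
        integral_bind_eq (hmeas t) (hprob t) ν hfm hfb
      have hbind2 : ∫ x, f x ∂μ = ∫ x, φ x ∂μ := by
        conv_lhs => rw [← hinv t ht]
        exact integral_bind_eq (hmeas t) (hprob t) μ hfm hfb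
      rw [hbind1, hbind2]
      have hIfst : Integrable (fun p : E × E => φ p.1) (ν.prod μ) :=
        integrable_of_bound (hφm.comp measurable_fst) (fun p => hφb p.1)
      have hIsnd : Integrable (fun p : E × E => φ p.2) (ν.prod μ) :=
        integrable_of_bound (hφm.comp measurable_snd) (fun p => hφb p.2)
      have hfst : ∫ x, φ x ∂ν = ∫ p, φ p.1 ∂(ν.prod μ) := by
        have h1 : ∫ x, φ x ∂ν = ∫ x, φ x ∂(Measure.map Prod.fst (ν.prod μ)) := by
          rw [Measure.map_fst_prod, measure_univ, one_smul]
        rw [h1, integral_map measurable_fst.aemeasurable hφm.aestronglyMeasurable]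
      have hsnd : ∫ x, φ x ∂μ = ∫ p, φ p.2 ∂(ν.prod μ) := by
        have h1 : ∫ x, φ x ∂μ = ∫ x, φ x ∂(Measure.map Prod.snd (ν.prod μ)) := by
          rw [Measure.map_snd_prod, measure_univ, one_smul]
        rw [h1, integral_map measurable_snd.aemeasurable hφm.aestronglyMeasurable]
      rw [hfst, hsnd, ← integral_sub hIfst hIsnd]
      have hhm : Measurable fun p : E × E => φ p.1 - φ p.2 :=
        (hφm.comp measurable_fst).sub (hφm.comp measurable_snd)
      have step1 : |∫ p, (φ p.1 - φ p.2) ∂(ν.prod μ)| ≤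
          ∫ p, |φ p.1 - φ p.2| ∂(ν.prod μ) := by
        simpa [Real.norm_eq_abs] using
          norm_integral_le_integral_norm (μ := ν.prod μ) (fun p : E × E => φ p.1 - φ p.2)
      have step2 : ∫ p, |φ p.1 - φ p.2| ∂(ν.prod μ) =
          (∫⁻ p, ENNReal.ofReal |φ p.1 - φ p.2| ∂(ν.prod μ)).toReal := by
        rw [integral_eq_lintegral_of_nonneg_ae (ae_of_all _ fun p => abs_nonneg _)
          hhm.abs.aestronglyMeasurable]
      have step3 : ∫⁻ p, ENNReal.ofReal |φ p.1 - φ p.2| ∂(ν.prod μ) ≤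
          2 * ∫⁻ p, Dt t p ∂(ν.prod μ) := by
        rw [← lintegral_const_mul 2 (hDmeas t)]
        refine lintegral_mono fun p => ?_
        haveI := hprob t p.1
        haveI := hprob t p.2
        exact abs_int_diff_le hbasis hfm hfb
      calc |∫ p, (φ p.1 - φ p.2) ∂(ν.prod μ)| ≤
            (∫⁻ p, ENNReal.ofReal |φ p.1 - φ p.2| ∂(ν.prod μ)).toReal := by
              rw [← step2]; exact step1
        _ ≤ (2 * ∫⁻ p, Dt t p ∂(ν.prod μ)).toReal := ENNReal.toReal_mono hfin step3
    rw [tvDist]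
    have hnn : (0:ℝ) ≤ (2 * ∫⁻ p, Dt t p ∂(ν.prod μ)).toReal := ENNReal.toReal_nonneg
    nlinarith [hsup]
  have htv_nonneg : ∀ t : ℝ, 0 ≤ tvDist (ν.bind (P t)) μ := by
    intro t
    haveI : Nonempty {f : E → ℝ // Measurable f ∧ ∀ y, |f y| ≤ 1} :=
      ⟨⟨0, measurable_const, fun y => by simp⟩⟩
    rw [tvDist]
    have := Real.iSup_nonneg
      (f := fun f : {f : E → ℝ // Measurable f ∧ ∀ x, |f x| ≤ 1} =>
        |∫ x, f.1 x ∂(ν.bind (P t)) - ∫ x, f.1 x ∂μ|) (fun f => abs_nonneg _)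
    linarith
  exact squeeze_zero' (Eventually.of_forall htv_nonneg)
    ((eventually_ge_atTop 0).mono hC) hB
end

section
/- Let {P_t} be a Markov semigroup on a Polish space E that is eventually continuous at z and suppose θ := liminf_{t→∞} P_t(z, B(z, ε/2)) > 0 for a given ε > 0. Then there exists δ > 0 such that for all y ∈ B(z,δ), liminf_{t→∞} P_t(y, B(z,ε)) ≥ θ/4. -/
open MeasureTheory Filter Metric Set Topology

/-- Auxiliary bump function `x ↦ max (1 - dist x z / ε) 0`. -/
noncomputable def bumpFn {E : Type*} [MetricSpace E] (z : E) (ε : ℝ) (x : E) : ℝ :=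
  max (1 - dist x z / ε) 0

theorem stmt9 {E : Type*} [MetricSpace E] [CompleteSpace E] [SecondCountableTopology E]
    [MeasurableSpace E] [BorelSpace E]
    (P : ℝ → E → Measure E)
    (hprob : ∀ t x, IsProbabilityMeasure (P t x))
    (hmeas : ∀ t, Measurable (P t))
    (hP0 : ∀ x, P 0 x = Measure.dirac x)
    (hsemi : ∀ s t : ℝ, 0 ≤ s → 0 ≤ t → ∀ x, P (s + t) x = (P s x).bind (P t))
    (z : E) (hec : EventuallyContinuousAt P z)
    (ε θ : ℝ) (hε : 0 < ε)
    (hθ : θ = liminf (fun t => (P t z (ball z (ε/2))).toReal) atTop) (hθpos : 0 < θ) :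
    ∃ δ > (0:ℝ), ∀ y ∈ ball z δ,
      θ/4 ≤ liminf (fun t => (P t y (ball z ε)).toReal) atTop := by
  classical
  set f : E → ℝ := bumpFn z ε with hfdef
  have hfc : Continuous f := by
    apply Continuous.max _ continuous_const
    exact continuous_const.sub ((continuous_id.dist continuous_const).div_const ε)
  have hf0 : ∀ x, 0 ≤ f x := fun x => le_max_right _ _
  have hf1 : ∀ x, f x ≤ 1 := by
    intro x
    apply max_le _ zero_le_one
    have : 0 ≤ dist x z / ε := div_nonneg dist_nonneg hε.le
    linarith
  have hfabs : ∀ x, |f x| ≤ 1 := fun x => abs_le.2 ⟨by linarith [hf0 x], hf1 x⟩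
  have hlip : LipschitzWith (ε⁻¹).toNNReal f := by
    apply LipschitzWith.of_dist_le_mul
    intro x y
    rw [Real.dist_eq, Real.coe_toNNReal _ (inv_nonneg.2 hε.le)]
    have h1 : |f x - f y| ≤ |(1 - dist x z / ε) - (1 - dist y z / ε)| :=
      abs_max_sub_max_le_abs _ _ _
    have h2 : (1 - dist x z / ε) - (1 - dist y z / ε) = (dist y z - dist x z) / ε := by ring
    rw [h2] at h1
    have h3 : |(dist y z - dist x z) / ε| = |dist y z - dist x z| / ε := by
      rw [abs_div, abs_of_pos hε]
    have h4 : |dist y z - dist x z| ≤ dist x y := by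
      rw [abs_sub_comm]; exact abs_dist_sub_le x y z
    calc |f x - f y| ≤ |dist y z - dist x z| / ε := by rw [← h3]; exact h1
      _ ≤ dist x y / ε := by gcongr
      _ = ε⁻¹ * dist x y := by ring
  have hint : ∀ t x, Integrable f (P t x) := by
    intro t x
    haveI := hprob t x
    exact ⟨hfc.aestronglyMeasurable,
      HasFiniteIntegral.of_bounded (C := 1)
        (ae_of_all _ fun y => by simpa [Real.norm_eq_abs] using hfabs y)⟩
  -- lower bound for Pf at any point
  have hlower : ∀ t x, (1/2) * (P t x (ball z (ε/2))).toReal ≤ Pf P t f x := by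
    intro t x
    haveI := hprob t x
    have hind : Integrable ((ball z (ε/2)).indicator (fun _ => (1/2 : ℝ))) (P t x) :=
      (integrable_const _).indicator measurableSet_ball
    have hle : ∀ y, (ball z (ε/2)).indicator (fun _ => (1/2 : ℝ)) y ≤ f y := by
      intro y
      by_cases hy : y ∈ ball z (ε/2)
      · rw [indicator_of_mem hy]
        have hd : dist y z < ε/2 := mem_ball.mp hy
        have hd2 : dist y z / ε < 1/2 := by rw [div_lt_iff₀ hε]; linarith
        have : (1:ℝ)/2 ≤ 1 - dist y z / ε := by linarith
        exact this.trans (le_max_left _ _)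
      · rw [indicator_of_notMem hy]; exact hf0 y
    have := integral_mono hind (hint t x) hle
    rwa [integral_indicator_const _ measurableSet_ball, smul_eq_mul, mul_comm] at this
  -- upper bound for Pf at any point
  have hupper : ∀ t x, Pf P t f x ≤ (P t x (ball z ε)).toReal := by
    intro t x
    haveI := hprob t x
    have hind : Integrable ((ball z ε).indicator (fun _ => (1 : ℝ))) (P t x) :=
      (integrable_const _).indicator measurableSet_ball
    have hle : ∀ y, f y ≤ (ball z ε).indicator (fun _ => (1 : ℝ)) y := by
      intro y
      by_cases hy : y ∈ ball z ε
      · rw [indicator_of_mem hy]; exact hf1 y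
      · rw [indicator_of_notMem hy]
        have hd : ε ≤ dist y z := not_lt.mp (fun h => hy (mem_ball.mpr h))
        have h0 : 1 - dist y z / ε ≤ 0 := by
          rw [sub_nonpos, le_div_iff₀ hε]; linarith
        exact le_of_eq (max_eq_right h0)
    have := integral_mono (hint t x) hind hle
    rwa [integral_indicator_const _ measurableSet_ball, smul_eq_mul, mul_one] at this
  have hPfabs : ∀ t x, |Pf P t f x| ≤ 1 := by
    intro t x
    haveI := hprob t x
    have := norm_integral_le_of_norm_le_const (μ := P t x) (f := f) (C := 1)
      (ae_of_all _ fun y => by simpa [Real.norm_eq_abs] using hfabs y)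
    simpa [Pf, Real.norm_eq_abs] using this
  have hdiff2 : ∀ x t, |Pf P t f x - Pf P t f z| ≤ 2 := by
    intro x t
    calc |Pf P t f x - Pf P t f z| ≤ |Pf P t f x| + |Pf P t f z| := abs_sub _ _
      _ ≤ 2 := by linarith [hPfabs t x, hPfabs t z]
  -- the eventual continuity hypothesis applied to f
  have hec' := hec f ⟨_, hlip⟩ ⟨1, hfabs⟩
  set g : E → ℝ := fun x => limsup (fun t => |Pf P t f x - Pf P t f z|) atTop with hgdef
  have hgbdd : ∀ x, g x ≤ 2 := by
    intro x
    apply limsup_le_of_le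
    · exact isCoboundedUnder_le_of_le atTop (x := 0) (fun t => abs_nonneg _)
    · exact Eventually.of_forall fun t => hdiff2 x t
  have hglimsup : limsup g (𝓝 z) = 0 := hec'
  have hev : ∀ᶠ x in 𝓝 z, g x < θ/8 := by
    apply eventually_lt_of_limsup_lt
    · rw [hglimsup]; linarith
    · exact isBoundedUnder_of ⟨2, fun x => hgbdd x⟩
  rw [Metric.eventually_nhds_iff_ball] at hev
  obtain ⟨δ, hδpos, hδ⟩ := hev
  refine ⟨δ, hδpos, fun y hy => ?_⟩
  have hgy : g y < θ/8 := hδ y hy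
  -- eventually the difference is small
  have h1 : ∀ᶠ t in atTop, |Pf P t f y - Pf P t f z| < θ/8 := by
    exact eventually_lt_of_limsup_lt hgy (isBoundedUnder_of ⟨2, fun t => hdiff2 y t⟩)
  -- eventually the mass at z is large
  have h2 : ∀ᶠ t in atTop, 3*θ/4 < (P t z (ball z (ε/2))).toReal := by
    apply eventually_lt_of_lt_liminf
    · rw [← hθ]; linarith
    · exact isBoundedUnder_of ⟨0, fun t => ENNReal.toReal_nonneg⟩
  have h3 : ∀ᶠ t in atTop, θ/4 ≤ (P t y (ball z ε)).toReal := by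
    filter_upwards [h1, h2] with t ht1 ht2
    have hb : 3*θ/8 < Pf P t f z := by
      have := hlower t z
      linarith
    have ha : θ/4 < Pf P t f y := by
      have : Pf P t f z - Pf P t f y ≤ |Pf P t f y - Pf P t f z| := by
        rw [abs_sub_comm]; exact le_abs_self _
      linarith
    linarith [hupper t y]
  apply le_liminf_of_le _ h3
  apply Filter.IsBoundedUnder.isCoboundedUnder_ge
  refine isBoundedUnder_of ⟨1, fun t => ?_⟩
  haveI := hprob t y
  have : P t y (ball z ε) ≤ 1 := prob_le_one
  exact ENNReal.toReal_le_of_le_ofReal zero_le_one (by simpa using this)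
end

section
/- Consider the SDE dX_t = (aX_t − bX_t³)dt + σ(X_{t−})dN_t on ℝ, where a,b > 0, N_t is a Poisson process of intensity 1, and σ satisfies 0 < m < σ(x) < M and |σ(x)−σ(y)| ≤ L_σ|x−y|. Then there exist constants γ, C > 0 (depending on a, b, M) such that E[|X_t^x − √(a/b)|²] ≤ C|x − √(a/b)|² e^{−γt} + C for all x ∈ ℝ and t ≥ 0. -/
set_option maxHeartbeats 1000000

open MeasureTheory Filter Metric Set Topology ProbabilityTheory Function

/-- A (unit-intensity) Poisson process: starts at `0`, has monotone paths, Poisson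
distributed increments and independent increments. -/
def IsPoissonProcess {Ω : Type*} [MeasurableSpace Ω] (Pr : Measure Ω) (N : ℝ → Ω → ℕ) : Prop :=
  (∀ ω, N 0 ω = 0) ∧
  (∀ ω, MonotoneOn (fun t => N t ω) (Set.Ici 0)) ∧
  (∀ s t : ℝ, 0 ≤ s → s ≤ t → ∀ k : ℕ,
    Pr {ω | N t ω - N s ω = k} =
      ENNReal.ofReal (Real.exp (-(t - s)) * (t - s) ^ k / (k.factorial : ℝ))) ∧
  (∀ (n : ℕ) (τ : Fin (n + 1) → ℝ), Monotone τ →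
    iIndepFun
      (fun i : Fin n => fun ω => N (τ i.succ) ω - N (τ i.castSucc) ω) Pr)

section AUX
open intervalIntegral

lemma clip_mono (N : ℝ → ℕ) (hmono : MonotoneOn N (Set.Ici 0)) :
    Monotone (fun t => N (max t 0)) := by
  intro s t hst
  exact hmono (le_max_right s 0) (le_max_right t 0) (max_le_max hst le_rfl)

lemma leftLim_clip (N : ℝ → ℕ) (hmono : MonotoneOn N (Set.Ici 0)) {s : ℝ} (hs : 0 < s) :
    leftLim N s = leftLim (fun t => N (max t 0)) s := by
  have hne : (𝓝[<] s).NeBot := inferInstance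
  have htend := (clip_mono N hmono).tendsto_nhdsLT s
  have heq : N =ᶠ[𝓝[<] s] (fun t => N (max t 0)) := by
    filter_upwards [Ioo_mem_nhdsLT_of_mem (⟨hs, le_rfl⟩ : s ∈ Set.Ioc 0 s)] with t ht
    rw [max_eq_left ht.1.le]
  have htend' := htend.congr' heq.symm
  rw [leftLim_eq_of_tendsto htend', leftLim_eq_of_tendsto htend]

lemma card_jumps_aux (N : ℝ → ℕ) (hmono : MonotoneOn N (Set.Ici 0)) :
    ∀ (n : ℕ) (u v : ℝ), 0 ≤ u → u ≤ v →
    ∀ F : Finset ℝ, (↑F ⊆ {s : ℝ | 0 < s ∧ leftLim N s ≠ N s} ∩ Set.Ioc u v) → F.card ≤ n →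
      F.card + N (max u 0) ≤ N (max v 0) := by
  intro n
  induction n with
  | zero => intro u v hu huv F hF hcard
            have : F.card = 0 := Nat.le_zero.mp hcard
            rw [this]
            simpa using clip_mono N hmono huv
  | succ n ih =>
    intro u v hu huv F hF hcard
    rcases F.eq_empty_or_nonempty with rfl | hne
    · simpa using clip_mono N hmono huv
    · set s := F.max' hne with hsdef
      have hsF : s ∈ F := F.max'_mem hne
      have hsS := hF hsF
      obtain ⟨⟨hs0, hjump⟩, hsuv⟩ := hsS
      have hjump' : leftLim (fun t => N (max t 0)) s ≠ N (max s 0) := by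
        rw [← leftLim_clip N hmono hs0, max_eq_left hs0.le]; exact hjump
      have hle : leftLim (fun t => N (max t 0)) s ≤ N (max s 0) :=
        (clip_mono N hmono).leftLim_le le_rfl
      have hstep : leftLim (fun t => N (max t 0)) s + 1 ≤ N (max s 0) :=
        Nat.succ_le_of_lt (lt_of_le_of_ne hle hjump')
      have hsv : N (max s 0) ≤ N (max v 0) :=
        clip_mono N hmono hsuv.2
      rcases (F.erase s).eq_empty_or_nonempty with hFe | hFe
      · have hcard1 : F.card = 1 := by
          have h1 := Finset.card_erase_of_mem hsF
          rw [hFe] at h1; simp only [Finset.card_empty] at h1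
          have : 0 < F.card := Finset.card_pos.mpr hne
          omega
        have hus : N (max u 0) ≤ leftLim (fun t => N (max t 0)) s := by
          have := (clip_mono N hmono).le_leftLim hsuv.1
          exact this
        omega
      · set w := (F.erase s).max' hFe with hwdef
        have hwF : w ∈ F.erase s := (F.erase s).max'_mem hFe
        have hws : w < s := lt_of_le_of_ne (F.le_max' w (Finset.mem_of_mem_erase hwF))
          (Finset.ne_of_mem_erase hwF)
        have hwS := hF (Finset.mem_of_mem_erase hwF)
        have huw : u < w := hwS.2.1
        have hsub : ↑(F.erase s) ⊆ {s : ℝ | 0 < s ∧ leftLim N s ≠ N s} ∩ Set.Ioc u w := by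
          intro z hz
          have hzF := Finset.mem_of_mem_erase (by exact_mod_cast hz)
          have hzS := hF hzF
          refine ⟨hzS.1, hzS.2.1, (F.erase s).le_max' z (by exact_mod_cast hz)⟩
        have hcard' : (F.erase s).card ≤ n := by
          have := Finset.card_erase_of_mem hsF
          have : 0 < F.card := Finset.card_pos.mpr hne
          have h2 := Finset.card_erase_of_mem hsF
          omega
        have hIH := ih u w hu huw.le (F.erase s) hsub hcard'
        have hwlim : N (max w 0) ≤ leftLim (fun t => N (max t 0)) s :=
          (clip_mono N hmono).le_leftLim hws
        have hce := Finset.card_erase_of_mem hsF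
        have : 0 < F.card := Finset.card_pos.mpr hne
        omega

lemma jumps_finite_card (N : ℝ → ℕ) (hmono : MonotoneOn N (Set.Ici 0)) {u v : ℝ}
    (hu : 0 ≤ u) (huv : u ≤ v) :
    ({s : ℝ | 0 < s ∧ leftLim N s ≠ N s} ∩ Set.Ioc u v).Finite ∧
    ∀ F : Finset ℝ, (↑F ⊆ {s : ℝ | 0 < s ∧ leftLim N s ≠ N s} ∩ Set.Ioc u v) →
      F.card + N (max u 0) ≤ N (max v 0) := by
  constructor
  · by_contra hinf
    have hinf' : ({s : ℝ | 0 < s ∧ leftLim N s ≠ N s} ∩ Set.Ioc u v).Infinite := hinf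
    obtain ⟨F, hFsub, hFcard⟩ := hinf'.exists_subset_card_eq (N (max v 0) + 1)
    have := card_jumps_aux N hmono F.card u v hu huv F hFsub le_rfl
    omega
  · intro F hF
    exact card_jumps_aux N hmono F.card u v hu huv F hF le_rfl

lemma drift_ineq (a b c x : ℝ) (hb : 0 < b) (hc : 0 < c) (hbc : b * c^2 = a) (y : ℝ) :
    (y - c) * (a*y - b*y^3) ≤ -a*(y-c)^2 + 9*a*c^2 := by
  nlinarith [mul_nonneg hb.le (sq_nonneg (2*y^2 - c*y - 3*c^2)),
    mul_nonneg hb.le (mul_nonneg (sq_nonneg c) (sq_nonneg (y+c))),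
    mul_pos hb (pow_pos hc 4)]

lemma gronwall_nonpos {f : ℝ → ℝ} {K p q : ℝ} (hpq : p ≤ q) (hc : ContinuousOn f (Icc p q))
    (hd : ∀ u ∈ Ioo p q, ∃ d, HasDerivAt f d u ∧ d ≤ K * f u)
    (hp : f p ≤ 0) : ∀ u ∈ Icc p q, f u ≤ 0 := by
  classical
  intro u hu
  rcases eq_or_lt_of_le hu.1 with rfl | hpu
  · exact hp
  -- for p' in Ioo p u, apply Gronwall on [p', u]
  set D : ℝ → ℝ := fun x => if h : ∃ d, HasDerivAt f d x ∧ d ≤ K * f x then h.choose else 0 with hD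
  have hDspec : ∀ x ∈ Ioo p q, HasDerivAt f (D x) x ∧ D x ≤ K * f x := by
    intro x hx
    have h := hd x hx
    simp only [hD, dif_pos h]
    exact h.choose_spec
  have key : ∀ p' ∈ Ioo p u, f u ≤ f p' * Real.exp (K * (u - p')) := by
    intro p' hp'
    have hsub : Icc p' u ⊆ Icc p q := Icc_subset_Icc hp'.1.le hu.2
    have h1 : ContinuousOn f (Icc p' u) := hc.mono hsub
    have h2 : ∀ x ∈ Ico p' u, ∀ r, D x < r →
        ∃ᶠ z in 𝓝[>] x, (z - x)⁻¹ * (f z - f x) < r := by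
      intro x hx r hr
      have hxq : x ∈ Ioo p q := ⟨lt_of_lt_of_le hp'.1 hx.1, lt_of_lt_of_le hx.2 hu.2⟩
      have hder := (hDspec x hxq).1
      have : Filter.Tendsto (fun z => (z - x)⁻¹ * (f z - f x)) (𝓝[>] x) (𝓝 (D x)) := by
        have := hder.hasDerivWithinAt (s := Ioi x)
        have h3 := hasDerivWithinAt_iff_tendsto_slope.mp this
        have : Tendsto (slope f x) (𝓝[>] x) (𝓝 (D x)) := by
          refine h3.mono_left (nhdsWithin_mono _ ?_)
          intro z hz; exact ⟨hz, ne_of_gt hz⟩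
        refine this.congr (fun z => ?_)
        simp [slope_def_field, div_eq_inv_mul]
      exact ((this.eventually (eventually_lt_nhds hr)).frequently)
    have h3 : ∀ x ∈ Ico p' u, D x ≤ K * f x + 0 := by
      intro x hx
      have hxq : x ∈ Ioo p q := ⟨lt_of_lt_of_le hp'.1 hx.1, lt_of_lt_of_le hx.2 hu.2⟩
      simpa using (hDspec x hxq).2
    have := le_gronwallBound_of_liminf_deriv_right_le h1 h2 le_rfl h3 u ⟨hp'.2.le, le_rfl⟩
    rwa [gronwallBound_ε0] at this
  -- limit as p' → p from the right
  have hne : Ioo p u ∈ 𝓝[>] p := Ioo_mem_nhdsGT_of_mem ⟨le_rfl, hpu⟩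
  have htend : Tendsto (fun p' => f p' * Real.exp (K * (u - p'))) (𝓝[>] p)
      (𝓝 (f p * Real.exp (K * (u - p)))) := by
    have hfc : Tendsto f (𝓝[>] p) (𝓝 (f p)) := by
      have := (hc p ⟨le_rfl, hpq⟩)
      have h4 : 𝓝[>] p = 𝓝[Ioc p q] p := (nhdsWithin_Ioc_eq_nhdsGT (lt_of_lt_of_le hpu hu.2)).symm
      rw [h4]
      exact this.mono_left (nhdsWithin_mono _ Ioc_subset_Icc_self)
    have hec : Continuous fun p' : ℝ => Real.exp (K * (u - p')) := by
      continuity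
    exact hfc.mul ((hec.continuousAt.tendsto).comp (tendsto_nhdsWithin_of_tendsto_nhds tendsto_id))
  have : f u ≤ f p * Real.exp (K * (u - p)) := by
    refine ge_of_tendsto htend ?_
    filter_upwards [hne] with p' hp' using key p' hp'
  exact this.trans (mul_nonpos_of_nonpos_of_nonneg hp (Real.exp_nonneg _))

lemma path_bound (a b c M x : ℝ) (ha : 0 < a) (hb : 0 < b) (hc : 0 < c) (hbc : b * c^2 = a)
    (hM : 0 < M) (g : ℝ → ℝ) (S : Set ℝ) (ς : ℝ → ℝ)
    (hς0 : ∀ s, 0 ≤ ς s) (hςM : ∀ s, ς s ≤ M)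
    (hfin : ∀ u : ℝ, (S ∩ Set.Ioc 0 u).Finite)
    (heq : ∀ t, 0 ≤ t → g t = x + (∫ s in (0:ℝ)..t, (a * g s - b * g s ^ 3)) +
      ∑ᶠ s ∈ S ∩ Set.Ioc 0 t, ς s) :
    ∀ t, 0 ≤ t → |g t - c| ≤ Real.exp (-(a*t)) * |x - c| +
      (3*c+M) * ∑ᶠ s ∈ S ∩ Set.Ioc 0 t, Real.exp (-(a*(t-s))) + 3*c := by
  classical
  set h : ℝ → ℝ := fun s => a * g s - b * g s ^ 3 with hh
  set F : ℝ → ℝ := fun u => ∫ s in (0:ℝ)..u, h s with hF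
  set Jmp : ℝ → ℝ := fun u => ∑ᶠ s ∈ S ∩ Set.Ioc 0 u, ς s with hJmp
  set Wsum : ℝ → ℝ := fun u => ∑ᶠ s ∈ S ∩ Set.Ioc 0 u, Real.exp (-(a*(u-s))) with hWsum
  set W : ℝ → ℝ := fun u => Real.exp (-(a*u)) * |x - c| + (3*c+M) * Wsum u + 3*c with hW
  set A : ℝ → ℝ := fun p => |x - c| + (3*c+M) * ∑ s ∈ (hfin p).toFinset, Real.exp (a*s)
    with hA
  set Q : ℝ → Prop := fun u => IntervalIntegrable h volume 0 u ∧
    ∀ v, v ∈ Icc 0 u → |g v - c| ≤ W v with hQ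
  -- basic facts
  have heq' : ∀ t, 0 ≤ t → g t = x + F t + Jmp t := heq
  have hsetstab : ∀ p u, 0 ≤ p → p ≤ u → S ∩ Set.Ioc p u = ∅ →
      S ∩ Set.Ioc 0 u = S ∩ Set.Ioc 0 p := by
    intro p u hp hpu hempty
    ext z
    simp only [Set.mem_inter_iff, Set.mem_Ioc]
    constructor
    · rintro ⟨hzS, hz0, hzu⟩
      refine ⟨hzS, hz0, ?_⟩
      by_contra hzp
      push_neg at hzp
      have hmem : z ∈ S ∩ Set.Ioc p u := ⟨hzS, hzp, hzu⟩
      rw [hempty] at hmem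
      exact hmem
    · rintro ⟨hzS, hz0, hzp⟩
      exact ⟨hzS, hz0, hzp.trans hpu⟩
  have hA0 : ∀ p, 0 ≤ A p := by
    intro p
    have : (0:ℝ) ≤ ∑ s ∈ (hfin p).toFinset, Real.exp (a*s) :=
      Finset.sum_nonneg fun s _ => (Real.exp_pos _).le
    have h3cM : (0:ℝ) ≤ 3*c+M := by positivity
    simp only [hA]
    positivity
  have hWrep : ∀ p u, 0 ≤ p → p ≤ u → S ∩ Set.Ioc p u = ∅ →
      W u = Real.exp (-(a*u)) * A p + 3*c := by
    intro p u hp hpu hempty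
    have hstab := hsetstab p u hp hpu hempty
    have : Wsum u = Real.exp (-(a*u)) * ∑ s ∈ (hfin p).toFinset, Real.exp (a*s) := by
      have h1 : Wsum u = ∑ᶠ s ∈ S ∩ Set.Ioc 0 p, Real.exp (-(a*(u-s))) := by
        simp only [hWsum]; rw [hstab]
      rw [h1, finsum_mem_eq_finite_toFinset_sum _ (hfin p), Finset.mul_sum]
      refine Finset.sum_congr rfl fun s _ => ?_
      rw [← Real.exp_add]
      ring_nf
    simp only [hW, hA, this]
    ring
  have hJstab : ∀ p u, 0 ≤ p → p ≤ u → S ∩ Set.Ioc p u = ∅ → Jmp u = Jmp p := by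
    intro p u hp hpu hempty
    simp only [hJmp]
    rw [hsetstab p u hp hpu hempty]
  -- continuity and bound on a jump-free interval, given integrability
  have hcontA : ∀ p v, 0 ≤ p → p ≤ v → S ∩ Set.Ioc p v = ∅ → Q p →
      IntervalIntegrable h volume 0 v →
      ContinuousOn g (Icc p v) ∧ ∀ u ∈ Icc p v, |g u - c| ≤ W u := by
    intro p v hp hpv hempty hQp hIv
    have hv0 : (0:ℝ) ≤ v := hp.trans hpv
    have hFcont : ContinuousOn F (Icc 0 v) := by
      have := intervalIntegral.continuousOn_primitive_interval' hIv
        (by rw [Set.uIcc_of_le hv0]; exact Set.left_mem_Icc.mpr hv0)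
      rwa [Set.uIcc_of_le hv0] at this
    have hgeq : ∀ u ∈ Icc p v, g u = x + F u + Jmp p := by
      intro u hu
      have hu0 : (0:ℝ) ≤ u := hp.trans hu.1
      have hJu : Jmp u = Jmp p := by
        refine hJstab p u hp hu.1 ?_
        apply Set.eq_empty_of_subset_empty
        rw [← hempty]
        exact Set.inter_subset_inter_right _ (Set.Ioc_subset_Ioc le_rfl hu.2)
      rw [heq' u hu0, hJu]
    have hgcont : ContinuousOn g (Icc p v) := by
      refine ContinuousOn.congr ?_ hgeq
      exact (continuousOn_const.add (hFcont.mono (Icc_subset_Icc hp le_rfl))).add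
        continuousOn_const
    have hIoocont : ContinuousOn g (Ioo p v) := hgcont.mono Ioo_subset_Icc_self
    have hhcont : ContinuousOn h (Ioo p v) := by
      simp only [hh]
      exact (continuousOn_const.mul hIoocont).sub
        (continuousOn_const.mul (hIoocont.pow 3))
    have hderiv : ∀ u ∈ Ioo p v, HasDerivAt g (h u) u := by
      intro u hu
      have hFu : HasDerivAt F (h u) u := by
        refine intervalIntegral.integral_hasDerivAt_right
          (hIv.mono_set ?_) (hhcont.stronglyMeasurableAtFilter isOpen_Ioo u hu)
          (hhcont.continuousAt (Ioo_mem_nhds hu.1 hu.2))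
        rw [Set.uIcc_of_le hv0, Set.uIcc_of_le (hp.trans hu.1.le)]
        exact Set.Icc_subset_Icc le_rfl hu.2.le
      have hsum : HasDerivAt (fun w => x + F w + Jmp p) (h u) u := by
        simpa using (hFu.const_add x).add_const (Jmp p)
      refine hsum.congr_of_eventuallyEq ?_
      filter_upwards [Icc_mem_nhds hu.1 hu.2] with w hw
      exact hgeq w hw
    -- Gronwall comparison
    set W0 : ℝ → ℝ := fun u => Real.exp (-(a*u)) * A p + 3*c with hW0
    set f : ℝ → ℝ := fun u => (g u - c)^2 - (W0 u)^2 with hf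
    have hW0deriv : ∀ u, HasDerivAt W0 (-(a * (Real.exp (-(a*u)) * A p))) u := by
      intro u
      have h1 : HasDerivAt (fun w : ℝ => -(a*w)) (-a) u := by
        simpa using ((hasDerivAt_id u).const_mul a).fun_neg
      have h2 := (Real.hasDerivAt_exp (-(a*u))).comp u h1
      have h3 : HasDerivAt (fun w => Real.exp (-(a*w)) * A p + 3*c)
          ((Real.exp (-(a*u)) * -a) * A p) u := (h2.mul_const (A p)).add_const _
      convert h3 using 1
      ring
    have hW03c : ∀ u, 0 ≤ u → 3*c ≤ W0 u := by
      intro u hu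
      have : 0 ≤ Real.exp (-(a*u)) * A p := mul_nonneg (Real.exp_pos _).le (hA0 p)
      simp only [hW0]; linarith
    have hfcont : ContinuousOn f (Icc p v) := by
      apply ContinuousOn.sub
      · exact (hgcont.sub continuousOn_const).pow 2
      · exact ((((Real.continuous_exp.comp (continuous_const.mul continuous_id).neg).mul
          continuous_const).add continuous_const).pow 2).continuousOn
    have hfderiv : ∀ u ∈ Ioo p v, ∃ d, HasDerivAt f d u ∧ d ≤ (-(2*a)) * f u := by
      intro u hu
      have hu0 : (0:ℝ) ≤ u := hp.trans hu.1.le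
      have hVd : HasDerivAt (fun w => (g w - c)^2) (2 * (g u - c) * h u) u := by
        have := ((hderiv u hu).sub_const c).fun_pow 2
        simpa [mul_comm, mul_assoc, mul_left_comm] using this
      have hZd : HasDerivAt (fun w => (W0 w)^2)
          (2 * W0 u * (-(a * (Real.exp (-(a*u)) * A p)))) u := by
        have := (hW0deriv u).fun_pow 2
        simpa [mul_comm, mul_assoc, mul_left_comm] using this
      refine ⟨_, hVd.sub hZd, ?_⟩
      have hdrift := drift_ineq a b c x hb hc hbc (g u)
      have hW3 := hW03c u hu0
      have hexpA : Real.exp (-(a*u)) * A p = W0 u - 3*c := by simp only [hW0]; ring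
      have hfu : f u = (g u - c)^2 - (W0 u)^2 := rfl
      -- goal : 2(g-c)h - 2 W0 (-(a (exp*A))) ≤ -(2a) f u
      rw [hexpA]
      have hgh : (g u - c) * h u ≤ -a*(g u - c)^2 + 9*a*c^2 := hdrift
      nlinarith [mul_pos ha hc, mul_nonneg (mul_nonneg ha.le hc.le) hc.le]
    have hfp : f p ≤ 0 := by
      have hbp : |g p - c| ≤ W p := hQp.2 p (Set.mem_Icc.mpr ⟨hp, le_rfl⟩)
      have hWp : W p = W0 p := by
        rw [hWrep p p hp le_rfl (by simp)]
      have h1 : (g p - c)^2 ≤ (W0 p)^2 := by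
        rw [← sq_abs]
        apply pow_le_pow_left₀ (abs_nonneg _)
        rw [← hWp]; exact hbp
      simp only [hf]; linarith
    have hfle := gronwall_nonpos hpv hfcont hfderiv hfp
    constructor
    · exact hgcont
    · intro u hu
      have h1 : (g u - c)^2 ≤ (W0 u)^2 := by
        have := hfle u hu
        simp only [hf] at this; linarith
      have hW0nn : 0 ≤ W0 u := le_trans (by positivity) (hW03c u (hp.trans hu.1))
      have : |g u - c| ≤ W0 u := by
        rw [← Real.sqrt_sq_eq_abs]
        calc Real.sqrt ((g u - c)^2) ≤ Real.sqrt ((W0 u)^2) := Real.sqrt_le_sqrt h1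
        _ = W0 u := Real.sqrt_sq hW0nn
      rw [hWrep p u hp hu.1 (by
        apply Set.eq_empty_of_subset_empty
        rw [← hempty]
        exact Set.inter_subset_inter_right _ (Set.Ioc_subset_Ioc le_rfl hu.2))]
      exact this
  -- STEP: crossing a jump-free interval
  have hstep : ∀ p q, 0 ≤ p → p < q → Q p → S ∩ Set.Ioc p q = ∅ → Q q := by
    intro p q hp hpq hQp hempty
    set AA : Set ℝ := {v | v ∈ Icc p q ∧ IntervalIntegrable h volume 0 v} with hAA
    have hpA : p ∈ AA := ⟨Set.mem_Icc.mpr ⟨le_rfl, hpq.le⟩, hQp.1⟩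
    have hAne : AA.Nonempty := ⟨p, hpA⟩
    have hAbdd : BddAbove AA := ⟨q, fun z hz => hz.1.2⟩
    set τ := sSup AA with hτ
    have hpτ : p ≤ τ := le_csSup hAbdd hpA
    have hτq : τ ≤ q := csSup_le hAne fun z hz => hz.1.2
    have hτ0 : (0:ℝ) ≤ τ := hp.trans hpτ
    have hemptysub : ∀ w, w ≤ q → S ∩ Set.Ioc p w = ∅ := by
      intro w hw
      apply Set.eq_empty_of_subset_empty
      rw [← hempty]
      exact Set.inter_subset_inter_right _ (Set.Ioc_subset_Ioc le_rfl hw)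
    -- uniform bound on the integrable region
    set R := c + (A p + 3*c) with hR
    set B := a * R + b * R^3 with hB
    have hRpos : 0 < R := by
      have := hA0 p
      simp only [hR]; positivity
    have hgRb : ∀ u ∈ Ioo p τ, |g u| ≤ R ∧ ContinuousWithinAt g (Ioo p τ) u := by
      intro u hu
      obtain ⟨v, hvA, huv⟩ := exists_lt_of_lt_csSup hAne hu.2
      have hvp : p ≤ v := hvA.1.1
      have hcA := hcontA p v hp hvp (hemptysub v hvA.1.2) hQp hvA.2
      have hbd : |g u - c| ≤ W u := hcA.2 u ⟨hu.1.le, huv.le⟩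
      have hWu : W u = Real.exp (-(a*u)) * A p + 3*c :=
        hWrep p u hp hu.1.le (hemptysub u (le_trans huv.le hvA.1.2))
      have hexple : Real.exp (-(a*u)) ≤ 1 := by
        rw [Real.exp_le_one_iff]
        have hu0 : (0:ℝ) ≤ u := hp.trans hu.1.le
        nlinarith
      constructor
      · have h1 : |g u - c| ≤ A p + 3*c := by
          rw [hWu] at hbd
          have := hA0 p
          nlinarith
        have := abs_sub_abs_le_abs_sub (g u) c
        rw [abs_of_pos hc] at this
        simp only [hR]
        linarith [abs_sub_comm (g u) c ▸ h1]
      · have hcont : ContinuousAt g u := by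
          refine (hcA.1.continuousAt (Icc_mem_nhds ?_ ?_)) <;> [exact hu.1; exact huv]
        exact hcont.continuousWithinAt
    have hIτ : IntervalIntegrable h volume 0 τ := by
      rcases eq_or_lt_of_le hpτ with heqτ | hpτlt
      · rw [← heqτ]; exact hQp.1
      have hgcont : ContinuousOn g (Ioo p τ) := fun u hu => (hgRb u hu).2
      have hhcont2 : ContinuousOn h (Ioo p τ) := by
        simp only [hh]
        exact (continuousOn_const.mul hgcont).sub (continuousOn_const.mul (hgcont.pow 3))
      have hmeas : AEStronglyMeasurable h (volume.restrict (Set.Ioc p τ)) := by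
        have h1 : AEStronglyMeasurable h (volume.restrict (Set.Ioo p τ)) :=
          hhcont2.aestronglyMeasurable measurableSet_Ioo
        rwa [Measure.restrict_congr_set Ioo_ae_eq_Ioc] at h1
      have hbdd : ∀ᵐ z ∂(volume.restrict (Set.Ioc p τ)), ‖h z‖ ≤ B := by
        have h1 : ∀ᵐ z ∂(volume.restrict (Set.Ioo p τ)), ‖h z‖ ≤ B := by
          refine (ae_restrict_iff' measurableSet_Ioo).mpr (ae_of_all _ ?_)
          intro z hz
          have hgz := (hgRb z hz).1
          simp only [hh, Real.norm_eq_abs, hB]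
          have h2 : |a * g z - b * g z ^ 3| ≤ a * |g z| + b * |g z|^3 := by
            refine (abs_sub _ _).trans ?_
            rw [abs_mul, abs_mul, abs_of_pos ha, abs_of_pos hb, abs_pow]
          refine h2.trans ?_
          have h3 : |g z|^3 ≤ R^3 := pow_le_pow_left₀ (abs_nonneg _) hgz 3
          have h4 : a * |g z| ≤ a * R := mul_le_mul_of_nonneg_left hgz ha.le
          have h5 : b * |g z|^3 ≤ b * R^3 := mul_le_mul_of_nonneg_left h3 hb.le
          linarith
        rwa [Measure.restrict_congr_set Ioo_ae_eq_Ioc] at h1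
      have hint2 : IntegrableOn h (Set.Ioc p τ) volume :=
        ⟨hmeas, HasFiniteIntegral.restrict_of_bounded (C := B)
          (by rw [Real.volume_Ioc]; exact ENNReal.ofReal_lt_top) hbdd⟩
      rw [intervalIntegrable_iff_integrableOn_Ioc_of_le hτ0]
      rw [← Set.Ioc_union_Ioc_eq_Ioc hp hpτ]
      exact ((intervalIntegrable_iff_integrableOn_Ioc_of_le hp).mp hQp.1).union hint2
    have hτeq : τ = q := by
      by_contra hne
      have hτlt : τ < q := lt_of_le_of_ne hτq hne
      have hnone : ∀ u, u ∈ Set.Ioc τ q → ¬ IntervalIntegrable h volume 0 u := by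
        intro u hu hcontra
        have huA : u ∈ AA := ⟨Set.mem_Icc.mpr ⟨hpτ.trans hu.1.le, hu.2⟩, hcontra⟩
        exact absurd (le_csSup hAbdd huA) (not_le.mpr hu.1)
      have hgconst : ∀ u ∈ Set.Ioc τ q, g u = x + Jmp p := by
        intro u hu
        have hu0 : (0:ℝ) ≤ u := hτ0.trans hu.1.le
        have hFu : F u = 0 := intervalIntegral.integral_undef (hnone u hu)
        have hJu : Jmp u = Jmp p := hJstab p u hp (hpτ.trans hu.1.le) (hemptysub u hu.2)
        rw [heq' u hu0, hFu, hJu, add_zero]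
      have hint3 : IntegrableOn h (Set.Ioc τ q) volume := by
        have hconstval : Set.EqOn h (fun _ => a * (x + Jmp p) - b * (x + Jmp p)^3)
            (Set.Ioc τ q) := by
          intro z hz
          simp only [hh]
          rw [hgconst z hz]
        refine (integrableOn_congr_fun hconstval measurableSet_Ioc).mpr ?_
        exact integrableOn_const (by rw [Real.volume_Ioc]; exact ENNReal.ofReal_ne_top)
      have hIq : IntervalIntegrable h volume 0 q := by
        rw [intervalIntegrable_iff_integrableOn_Ioc_of_le (hτ0.trans hτlt.le)]
        rw [← Set.Ioc_union_Ioc_eq_Ioc hτ0 hτlt.le]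
        exact ((intervalIntegrable_iff_integrableOn_Ioc_of_le hτ0).mp hIτ).union hint3
      exact hnone q ⟨hτlt, le_rfl⟩ hIq
    have hIq : IntervalIntegrable h volume 0 q := by rw [← hτeq]; exact hIτ
    have hcA := hcontA p q hp hpq.le hempty hQp hIq
    refine ⟨hIq, fun v hv => ?_⟩
    rcases le_or_gt v p with hvp | hvp
    · exact hQp.2 v ⟨hv.1, hvp⟩
    · exact hcA.2 v ⟨hvp.le, hv.2⟩
  -- CROSS: crossing a jump point
  have hScross : ∀ s₀, s₀ ∈ S → 0 < s₀ → (∀ v, v ∈ Ico 0 s₀ → Q v) → Q s₀ := by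
    intro s₀ hs₀S hs₀pos hQv
    have hfinO : (S ∩ Set.Ioo 0 s₀).Finite :=
      (hfin s₀).subset (Set.inter_subset_inter_right _ Set.Ioo_subset_Ioc_self)
    -- choose p : last jump strictly before s₀ (or 0)
    have hpexists : ∃ p, 0 ≤ p ∧ p < s₀ ∧ S ∩ Set.Ioo p s₀ = ∅ ∧
        (∀ z ∈ S ∩ Set.Ioo 0 s₀, z ≤ p) := by
      rcases (S ∩ Set.Ioo 0 s₀).eq_empty_or_nonempty with hem | hne
      · refine ⟨0, le_rfl, hs₀pos, hem, ?_⟩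
        intro z hz; rw [hem] at hz; exact absurd hz (Set.notMem_empty z)
      · have hfne : hfinO.toFinset.Nonempty := by
          rwa [Set.Finite.toFinset_nonempty]
        set p := hfinO.toFinset.max' hfne with hpdef
        have hpmem : p ∈ S ∩ Set.Ioo 0 s₀ := by
          have := hfinO.toFinset.max'_mem hfne
          rwa [Set.Finite.mem_toFinset] at this
        refine ⟨p, hpmem.2.1.le, hpmem.2.2, ?_, ?_⟩
        · apply Set.eq_empty_of_subset_empty
          intro z hz
          have hzmem : z ∈ S ∩ Set.Ioo 0 s₀ :=
            ⟨hz.1, lt_trans hpmem.2.1 hz.2.1, hz.2.2⟩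
          have := hfinO.toFinset.le_max' z (by rwa [Set.Finite.mem_toFinset])
          exact absurd hz.2.1 (not_lt.mpr this)
        · intro z hz
          exact hfinO.toFinset.le_max' z (by rwa [Set.Finite.mem_toFinset])
    obtain ⟨p, hp0, hps₀, hpnojump, hpmax⟩ := hpexists
    have hQp := hQv p ⟨hp0, hps₀⟩
    have hemptyv : ∀ v, v < s₀ → S ∩ Set.Ioc p v = ∅ := by
      intro v hv
      apply Set.eq_empty_of_subset_empty
      rw [← hpnojump]
      intro z hz
      exact ⟨hz.1, hz.2.1, lt_of_le_of_lt hz.2.2 hv⟩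
    -- integrability up to s₀
    have hIoocont : ∀ u, u ∈ Ioo p s₀ → ContinuousAt g u ∧ |g u - c| ≤ A p + 3*c := by
      intro u hu
      set v := (u + s₀)/2 with hvdef
      have huv : u < v := by simp only [hvdef]; linarith [hu.2]
      have hvs₀ : v < s₀ := by simp only [hvdef]; linarith [hu.2]
      have hv0 : (0:ℝ) ≤ v := le_trans (hp0.trans hu.1.le) huv.le
      have hQvv := hQv v ⟨hv0, hvs₀⟩
      have hcA := hcontA p v hp0 (hu.1.le.trans huv.le) (hemptyv v hvs₀) hQp hQvv.1
      constructor
      · exact hcA.1.continuousAt (Icc_mem_nhds hu.1 huv)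
      · have hbd := hcA.2 u ⟨hu.1.le, huv.le⟩
        rw [hWrep p u hp0 hu.1.le (hemptyv u (hu.2))] at hbd
        have hexple : Real.exp (-(a*u)) ≤ 1 := by
          rw [Real.exp_le_one_iff]
          have hu0 : (0:ℝ) ≤ u := hp0.trans hu.1.le
          nlinarith
        have := hA0 p
        nlinarith
    have hIs : IntervalIntegrable h volume 0 s₀ := by
      have hgcont : ContinuousOn g (Ioo p s₀) := fun u hu =>
        ((hIoocont u hu).1).continuousWithinAt
      have hhcont2 : ContinuousOn h (Ioo p s₀) := by
        simp only [hh]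
        exact (continuousOn_const.mul hgcont).sub (continuousOn_const.mul (hgcont.pow 3))
      have hmeas : AEStronglyMeasurable h (volume.restrict (Set.Ioc p s₀)) := by
        have h1 : AEStronglyMeasurable h (volume.restrict (Set.Ioo p s₀)) :=
          hhcont2.aestronglyMeasurable measurableSet_Ioo
        rwa [Measure.restrict_congr_set Ioo_ae_eq_Ioc] at h1
      set R := c + (A p + 3*c) with hR
      set B := a * R + b * R^3 with hB
      have hbdd : ∀ᵐ z ∂(volume.restrict (Set.Ioc p s₀)), ‖h z‖ ≤ B := by
        have h1 : ∀ᵐ z ∂(volume.restrict (Set.Ioo p s₀)), ‖h z‖ ≤ B := by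
          refine (ae_restrict_iff' measurableSet_Ioo).mpr (ae_of_all _ ?_)
          intro z hz
          have hgz' := (hIoocont z hz).2
          have hgz : |g z| ≤ R := by
            have := abs_sub_abs_le_abs_sub (g z) c
            rw [abs_of_pos hc] at this
            simp only [hR]
            linarith [abs_sub_comm (g z) c ▸ hgz']
          simp only [hh, Real.norm_eq_abs, hB]
          have h2 : |a * g z - b * g z ^ 3| ≤ a * |g z| + b * |g z|^3 := by
            refine (abs_sub _ _).trans ?_
            rw [abs_mul, abs_mul, abs_of_pos ha, abs_of_pos hb, abs_pow]
          refine h2.trans ?_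
          have h3 : |g z|^3 ≤ R^3 := pow_le_pow_left₀ (abs_nonneg _) hgz 3
          have h4 : a * |g z| ≤ a * R := mul_le_mul_of_nonneg_left hgz ha.le
          have h5 : b * |g z|^3 ≤ b * R^3 := mul_le_mul_of_nonneg_left h3 hb.le
          linarith
        rwa [Measure.restrict_congr_set Ioo_ae_eq_Ioc] at h1
      have hint2 : IntegrableOn h (Set.Ioc p s₀) volume :=
        ⟨hmeas, HasFiniteIntegral.restrict_of_bounded (C := B)
          (by rw [Real.volume_Ioc]; exact ENNReal.ofReal_lt_top) hbdd⟩
      rw [intervalIntegrable_iff_integrableOn_Ioc_of_le (hp0.trans hps₀.le)]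
      rw [← Set.Ioc_union_Ioc_eq_Ioc hp0 hps₀.le]
      exact ((intervalIntegrable_iff_integrableOn_Ioc_of_le hp0).mp hQp.1).union hint2
    -- left limit value
    set L := x + F s₀ + Jmp p with hL
    have hFcont : ContinuousOn F (Icc 0 s₀) := by
      have := intervalIntegral.continuousOn_primitive_interval' hIs
        (by rw [Set.uIcc_of_le (hp0.trans hps₀.le)]
            exact Set.left_mem_Icc.mpr (hp0.trans hps₀.le))
      rwa [Set.uIcc_of_le (hp0.trans hps₀.le)] at this
    have htendF : Tendsto F (𝓝[<] s₀) (𝓝 (F s₀)) := by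
      have h1 : ContinuousWithinAt F (Icc 0 s₀) s₀ :=
        hFcont s₀ (Set.right_mem_Icc.mpr (hp0.trans hps₀.le))
      have h2 : 𝓝[<] s₀ = 𝓝[Set.Ioo p s₀] s₀ := (nhdsWithin_Ioo_eq_nhdsLT hps₀).symm
      rw [h2]
      exact h1.mono_left (nhdsWithin_mono _ (fun z hz => ⟨hp0.trans hz.1.le, hz.2.le⟩))
    have htendg : Tendsto g (𝓝[<] s₀) (𝓝 L) := by
      have h1 : Tendsto (fun u => x + F u + Jmp p) (𝓝[<] s₀) (𝓝 L) := by
        simp only [hL]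
        exact ((tendsto_const_nhds.add htendF).add tendsto_const_nhds)
      refine h1.congr' ?_
      have hIoo : Set.Ioo p s₀ ∈ 𝓝[<] s₀ := by
        rw [← nhdsWithin_Ioo_eq_nhdsLT hps₀]
        exact self_mem_nhdsWithin
      filter_upwards [hIoo] with u hu
      have hu0 : (0:ℝ) ≤ u := hp0.trans hu.1.le
      rw [heq' u hu0, hJstab p u hp0 hu.1.le (hemptyv u hu.2)]
    have hLbound : |L - c| ≤ Real.exp (-(a*s₀)) * A p + 3*c := by
      have htendabs : Tendsto (fun u => |g u - c|) (𝓝[<] s₀) (𝓝 |L - c|) :=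
        ((htendg.sub_const c).abs)
      have htendW : Tendsto (fun u => Real.exp (-(a*u)) * A p + 3*c) (𝓝[<] s₀)
          (𝓝 (Real.exp (-(a*s₀)) * A p + 3*c)) := by
        apply Tendsto.mono_left _ nhdsWithin_le_nhds
        exact ((((continuous_const.mul continuous_id).neg).rexp.mul
          continuous_const).add continuous_const).tendsto s₀
      refine le_of_tendsto_of_tendsto htendabs htendW ?_
      have hIoo : Set.Ioo p s₀ ∈ 𝓝[<] s₀ := by
        rw [← nhdsWithin_Ioo_eq_nhdsLT hps₀]
        exact self_mem_nhdsWithin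
      filter_upwards [hIoo] with u hu
      set v := (u + s₀)/2
      have huv : u < v := by simp only [v]; linarith [hu.2]
      have hvs₀ : v < s₀ := by simp only [v]; linarith [hu.2]
      have hQvv := hQv v ⟨le_trans (hp0.trans hu.1.le) huv.le, hvs₀⟩
      have hbd := hQvv.2 u ⟨hp0.trans hu.1.le, huv.le⟩
      rwa [hWrep p u hp0 hu.1.le (hemptyv u hu.2)] at hbd
    -- the jump relation at s₀
    have hsplit : S ∩ Set.Ioc 0 s₀ = insert s₀ (S ∩ Set.Ioc 0 p) := by
      ext z
      simp only [Set.mem_insert_iff, Set.mem_inter_iff, Set.mem_Ioc]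
      constructor
      · rintro ⟨hzS, hz0, hzs⟩
        rcases eq_or_lt_of_le hzs with rfl | hzlt
        · left; rfl
        · right
          exact ⟨hzS, hz0, hpmax z ⟨hzS, hz0, hzlt⟩⟩
      · rintro (rfl | ⟨hzS, hz0, hzp⟩)
        · exact ⟨hs₀S, hs₀pos, le_rfl⟩
        · exact ⟨hzS, hz0, hzp.trans hps₀.le⟩
    have hs₀notp : s₀ ∉ S ∩ Set.Ioc 0 p := by
      rintro ⟨-, -, hle⟩
      exact absurd hle (not_le.mpr hps₀)
    have hJs₀ : Jmp s₀ = ς s₀ + Jmp p := by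
      simp only [hJmp]
      rw [hsplit, finsum_mem_insert _ hs₀notp ((hfin p).subset (by
        intro z hz; exact ⟨hz.1, hz.2⟩))]
    have hgs₀ : g s₀ = L + ς s₀ := by
      rw [heq' s₀ (hp0.trans hps₀.le), hJs₀, hL]
      ring
    -- the bound at s₀
    have hWs₀ : W s₀ = Real.exp (-(a*s₀)) * A p + 3*c + (3*c+M) := by
      have hWsum₀ : Wsum s₀ = 1 + Real.exp (-(a*s₀)) *
          ∑ s ∈ (hfin p).toFinset, Real.exp (a*s) := by
        simp only [hWsum]
        rw [hsplit, finsum_mem_insert _ hs₀notp ((hfin p).subset (by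
          intro z hz; exact ⟨hz.1, hz.2⟩)),
          finsum_mem_eq_finite_toFinset_sum _ (hfin p), Finset.mul_sum]
        congr 1
        · rw [sub_self, mul_zero, neg_zero, Real.exp_zero]
        · refine Finset.sum_congr rfl fun s _ => ?_
          rw [← Real.exp_add]; ring_nf
      simp only [hW, hA, hWsum₀]
      ring
    have hbs₀ : |g s₀ - c| ≤ W s₀ := by
      rw [hgs₀, hWs₀]
      have h1 : |L + ς s₀ - c| ≤ |L - c| + ς s₀ := by
        have := abs_add_le (L - c) (ς s₀)
        rw [abs_of_nonneg (hς0 s₀)] at this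
        calc |L + ς s₀ - c| = |(L - c) + ς s₀| := by ring_nf
        _ ≤ |L - c| + ς s₀ := this
      have h2 := hςM s₀
      linarith [hLbound, hc]
    refine ⟨hIs, fun v hv => ?_⟩
    rcases eq_or_lt_of_le hv.2 with rfl | hvlt
    · exact hbs₀
    · exact (hQv v ⟨hv.1, hvlt⟩).2 v ⟨hv.1, le_rfl⟩
  -- Q 0
  have hQ0 : Q 0 := by
    constructor
    · exact IntervalIntegrable.refl
    · intro v hv
      have hv0 : v = 0 := le_antisymm hv.2 hv.1
      subst hv0
      have hg0 : g 0 = x := by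
        rw [heq' 0 le_rfl]
        have hJ0 : Jmp 0 = 0 := by
          simp only [hJmp]
          rw [Set.Ioc_self, Set.inter_empty, finsum_mem_empty]
        have hF0 : F 0 = 0 := intervalIntegral.integral_same
        rw [hJ0, hF0]; ring
      have hWsum0 : Wsum 0 = 0 := by
        simp only [hWsum]
        rw [Set.Ioc_self, Set.inter_empty, finsum_mem_empty]
      rw [hg0]
      simp only [hW, hWsum0, mul_zero, neg_zero, Real.exp_zero]
      have h3cM : (0:ℝ) ≤ 3*c+M := by positivity
      nlinarith [abs_nonneg (x - c), hc]
  -- main induction on the number of jumps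
  have hQall : ∀ n : ℕ, ∀ u, 0 ≤ u → ((hfin u).toFinset.card ≤ n) → Q u := by
    intro n
    induction n with
    | zero =>
      intro u hu hcard
      have hem : S ∩ Set.Ioc 0 u = ∅ := by
        have := Finset.card_eq_zero.mp (Nat.le_zero.mp hcard)
        rwa [Set.Finite.toFinset_eq_empty] at this
      rcases eq_or_lt_of_le hu with rfl | hu'
      · exact hQ0
      · exact hstep 0 u le_rfl hu' hQ0 hem
    | succ n ih =>
      intro u hu hcard
      rcases (S ∩ Set.Ioc 0 u).eq_empty_or_nonempty with hem | hne
      · rcases eq_or_lt_of_le hu with rfl | hu'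
        · exact hQ0
        · exact hstep 0 u le_rfl hu' hQ0 hem
      · have hfne : (hfin u).toFinset.Nonempty := by
          rwa [Set.Finite.toFinset_nonempty]
        set s₀ := (hfin u).toFinset.max' hfne with hs₀def
        have hs₀mem : s₀ ∈ S ∩ Set.Ioc 0 u := by
          have := (hfin u).toFinset.max'_mem hfne
          rwa [Set.Finite.mem_toFinset] at this
        have hs₀max : ∀ z ∈ S ∩ Set.Ioc 0 u, z ≤ s₀ := by
          intro z hz
          exact (hfin u).toFinset.le_max' z (by rwa [Set.Finite.mem_toFinset])
        have hQless : ∀ v, v ∈ Ico 0 s₀ → Q v := by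
          intro v hv
          apply ih v hv.1
          have hsub : (hfin v).toFinset ⊆ (hfin u).toFinset.erase s₀ := by
            intro z hz
            rw [Set.Finite.mem_toFinset] at hz
            have hzu : z ∈ S ∩ Set.Ioc 0 u :=
              ⟨hz.1, hz.2.1, hz.2.2.trans (hv.2.le.trans hs₀mem.2.2)⟩
            refine Finset.mem_erase.mpr ⟨?_, by rwa [Set.Finite.mem_toFinset]⟩
            intro hzs₀
            rw [hzs₀] at hz
            exact absurd hz.2.2 (not_le.mpr hv.2)
          have := Finset.card_le_card hsub
          have h2 := Finset.card_erase_of_mem (by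
            rw [Set.Finite.mem_toFinset]; exact hs₀mem : s₀ ∈ (hfin u).toFinset)
          omega
        have hQs₀ := hScross s₀ hs₀mem.1 hs₀mem.2.1 hQless
        rcases eq_or_lt_of_le hs₀mem.2.2 with heq2 | hs₀u
        · exact heq2 ▸ hQs₀
        · refine hstep s₀ u hs₀mem.2.1.le hs₀u hQs₀ ?_
          apply Set.eq_empty_of_subset_empty
          intro z hz
          have hzu : z ∈ S ∩ Set.Ioc 0 u :=
            ⟨hz.1, lt_trans hs₀mem.2.1 hz.2.1, hz.2.2⟩
          exact absurd hz.2.1 (not_lt.mpr (hs₀max z hzu))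
  -- conclusion
  intro t ht
  have hQt := hQall ((hfin t).toFinset.card) t ht le_rfl
  have := hQt.2 t ⟨ht, le_rfl⟩
  simpa only [hW, hWsum] using this

lemma nat_sq_pow_le : ∀ j : ℕ, j^2 * 2^j ≤ 22 * j.factorial := by
  intro j
  induction j with
  | zero => norm_num
  | succ n ih =>
    rcases Nat.lt_or_ge n 3 with h | h
    · interval_cases n <;> simp [Nat.factorial]
    · have h1 : 2*(n+1) ≤ n^2 := by nlinarith
      have h2 : (n+1)^2 * 2^(n+1) = (2*(n+1)) * ((n+1) * 2^n) := by ring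
      have h3 : (2*(n+1)) * ((n+1) * 2^n) ≤ n^2 * ((n+1) * 2^n) :=
        Nat.mul_le_mul_right _ h1
      have h4 : n^2 * ((n+1) * 2^n) = (n+1) * (n^2 * 2^n) := by ring
      have h5 : (n+1) * (n^2 * 2^n) ≤ (n+1) * (22 * n.factorial) :=
        Nat.mul_le_mul_left _ ih
      have h6 : (n+1) * (22 * n.factorial) = 22 * (n+1).factorial := by
        rw [Nat.factorial_succ]; ring
      omega
lemma real_term_bound (u : ℝ) (hu0 : 0 ≤ u) (hu1 : u ≤ 1) (j : ℕ) :
    (j:ℝ)^2 * (Real.exp (-u) * u^j / j.factorial) ≤ 22 * (1/2)^j := by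
  have hfac : (0:ℝ) < j.factorial := by positivity
  have h2j : (0:ℝ) < 2^j := by positivity
  have he : Real.exp (-u) ≤ 1 := Real.exp_le_one_iff.mpr (by linarith)
  have hup : u^j ≤ 1 := pow_le_one₀ hu0 hu1
  have heu : Real.exp (-u) * u^j ≤ 1 := by
    have := Real.exp_pos (-u)
    nlinarith [pow_nonneg hu0 j]
  have heu0 : 0 ≤ Real.exp (-u) * u^j := by positivity
  have hnat : ((j:ℝ))^2 * 2^j ≤ 22 * j.factorial := by
    exact_mod_cast nat_sq_pow_le j
  have hgoal : (22:ℝ)*(1/2)^j = 22/2^j := by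
    rw [div_pow, one_pow]; ring
  rw [hgoal, le_div_iff₀ h2j]
  calc (j:ℝ)^2 * (Real.exp (-u) * u^j / j.factorial) * 2^j
      = ((j:ℝ)^2*2^j) * (Real.exp (-u)*u^j) / j.factorial := by ring
    _ ≤ ((j:ℝ)^2*2^j) * 1 / j.factorial := by
        gcongr
    _ ≤ (22*j.factorial) / j.factorial := by
        rw [mul_one]
        gcongr
    _ = 22 := by field_simp

lemma envelope_bound {Ω : Type*} [MeasurableSpace Ω] (Pr : Measure Ω) (E : Ω → ℕ)
    (u : ℝ) (hu0 : 0 ≤ u) (hu1 : u ≤ 1)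
    (hdist : ∀ j : ℕ, Pr {ω | E ω = j} =
      ENNReal.ofReal (Real.exp (-u) * u^j / j.factorial)) :
    ∃ G : Ω → ENNReal, Measurable G ∧ (∀ ω, ((E ω : ENNReal))^2 ≤ G ω) ∧
      ∫⁻ ω, G ω ∂Pr ≤ 44 := by
  classical
  set G : Ω → ENNReal := fun ω => ∑' j : ℕ, ((j:ENNReal))^2 *
    (toMeasurable Pr {ω' | E ω' = j}).indicator (fun _ => 1) ω with hG
  refine ⟨G, ?_, ?_, ?_⟩
  · apply Measurable.ennreal_tsum
    intro j
    exact ((measurable_const.indicator (measurableSet_toMeasurable _ _)).const_mul _)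
  · intro ω
    have hmem : ω ∈ toMeasurable Pr {ω' | E ω' = E ω} :=
      subset_toMeasurable _ _ (by simp)
    have : ((E ω : ENNReal))^2 * (toMeasurable Pr {ω' | E ω' = E ω}).indicator
        (fun _ => (1:ENNReal)) ω = ((E ω : ENNReal))^2 := by
      rw [Set.indicator_of_mem hmem, mul_one]
    calc ((E ω : ENNReal))^2 = _ := this.symm
      _ ≤ G ω := ENNReal.le_tsum (E ω)
  · have h1 : ∫⁻ ω, G ω ∂Pr = ∑' j : ℕ, ((j:ENNReal))^2 * Pr {ω' | E ω' = j} := by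
      rw [hG, lintegral_tsum]
      · congr 1
        ext j
        rw [lintegral_const_mul _ (measurable_const.indicator (measurableSet_toMeasurable _ _)),
          lintegral_indicator (measurableSet_toMeasurable _ _)]
        simp [measure_toMeasurable]
      · intro j
        exact ((measurable_const.indicator (measurableSet_toMeasurable _ _)).const_mul _).aemeasurable
    rw [h1]
    have h2 : ∀ j : ℕ, ((j:ENNReal))^2 * Pr {ω' | E ω' = j} ≤
        ENNReal.ofReal 22 * (ENNReal.ofReal (1/2))^j := by
      intro j
      rw [hdist j]
      have : ((j:ENNReal))^2 * ENNReal.ofReal (Real.exp (-u) * u^j / j.factorial) =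
          ENNReal.ofReal ((j:ℝ)^2 * (Real.exp (-u) * u^j / j.factorial)) := by
        rw [ENNReal.ofReal_mul (by positivity)]
        congr 1
        rw [← ENNReal.ofReal_natCast j, ← ENNReal.ofReal_pow (by positivity)]
      rw [this, ← ENNReal.ofReal_pow (by norm_num), ← ENNReal.ofReal_mul (by norm_num)]
      exact ENNReal.ofReal_le_ofReal (real_term_bound u hu0 hu1 j)
    refine le_trans (ENNReal.tsum_le_tsum h2) ?_
    rw [ENNReal.tsum_mul_left, ENNReal.tsum_geometric]
    have : (1 : ENNReal) - ENNReal.ofReal (1/2) = ENNReal.ofReal (1/2) := by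
      rw [← ENNReal.ofReal_one, ← ENNReal.ofReal_sub] <;> norm_num
    rw [this]
    have hinv : (ENNReal.ofReal (1/2))⁻¹ = ENNReal.ofReal 2 := by
      rw [← ENNReal.ofReal_inv_of_pos (by norm_num)]
      norm_num
    rw [hinv, ← ENNReal.ofReal_mul (by norm_num)]
    norm_num

lemma my_geom_le (r : ℝ) (h0 : 0 ≤ r) (h1 : r < 1) (K : ℕ) :
    ∑ k ∈ Finset.range K, r^k ≤ (1-r)⁻¹ := by
  have h2 : (0:ℝ) < 1 - r := by linarith
  rw [geom_sum_eq (ne_of_lt h1)]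
  have h3 : (r^K - 1)/(r-1) = (1 - r^K) * (1-r)⁻¹ := by
    rw [← neg_div_neg_eq, neg_sub, neg_sub, div_eq_mul_inv]
  rw [h3]
  have h4 : 1 - r^K ≤ 1 := by nlinarith [pow_nonneg h0 K]
  calc (1 - r^K) * (1-r)⁻¹ ≤ 1 * (1-r)⁻¹ :=
        mul_le_mul_of_nonneg_right h4 (inv_nonneg.mpr h2.le)
    _ = (1-r)⁻¹ := one_mul _

lemma cs_geom (a : ℝ) (ha : 0 < a) (K : ℕ) (D : ℕ → ℝ) (hD : ∀ k, 0 ≤ D k) :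
    (∑ k ∈ Finset.range K, Real.exp (-(a*k)) * D k)^2 ≤
      (1 - Real.exp (-a))⁻¹ * ∑ k ∈ Finset.range K, Real.exp (-(a*k)) * (D k)^2 := by
  have hexp2 : ∀ k : ℕ, Real.exp (-(a*k)) = Real.exp (-(a*k)/2) * Real.exp (-(a*k)/2) := by
    intro k
    rw [← Real.exp_add]
    ring_nf
  have hcs := Finset.sum_mul_sq_le_sq_mul_sq (Finset.range K)
    (fun k => Real.exp (-(a*k)/2)) (fun k => Real.exp (-(a*k)/2) * D k)
  have h1 : (∑ k ∈ Finset.range K, Real.exp (-(a*k)) * D k)^2 ≤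
      (∑ k ∈ Finset.range K, Real.exp (-(a*k)/2)^2) *
      ∑ k ∈ Finset.range K, (Real.exp (-(a*k)/2) * D k)^2 := by
    refine le_trans (le_of_eq ?_) hcs
    congr 1
    refine Finset.sum_congr rfl fun k _ => ?_
    rw [hexp2 k]; ring
  have h2 : ∀ k : ℕ, Real.exp (-(a*k)/2)^2 = Real.exp (-(a*k)) := by
    intro k
    rw [sq, ← Real.exp_add]
    ring_nf
  have h3 : ∀ k : ℕ, (Real.exp (-(a*k)/2) * D k)^2 = Real.exp (-(a*k)) * (D k)^2 := by
    intro k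
    rw [mul_pow, h2 k]
  have h4 : ∑ k ∈ Finset.range K, Real.exp (-(a*k)) ≤ (1 - Real.exp (-a))⁻¹ := by
    have h5 : ∀ k : ℕ, Real.exp (-(a*k)) = (Real.exp (-a))^k := by
      intro k
      rw [← Real.exp_nat_mul]
      ring_nf
    calc ∑ k ∈ Finset.range K, Real.exp (-(a*k))
        = ∑ k ∈ Finset.range K, (Real.exp (-a))^k := Finset.sum_congr rfl fun k _ => h5 k
      _ ≤ (1 - Real.exp (-a))⁻¹ := my_geom_le _ (Real.exp_pos _).le
          (Real.exp_lt_one_iff.mpr (by linarith)) K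
  have h6 : (0:ℝ) ≤ ∑ k ∈ Finset.range K, Real.exp (-(a*k)) * (D k)^2 :=
    Finset.sum_nonneg fun k _ => mul_nonneg (Real.exp_pos _).le (sq_nonneg _)
  calc (∑ k ∈ Finset.range K, Real.exp (-(a*k)) * D k)^2
      ≤ (∑ k ∈ Finset.range K, Real.exp (-(a*k)/2)^2) *
        ∑ k ∈ Finset.range K, (Real.exp (-(a*k)/2) * D k)^2 := h1
    _ = (∑ k ∈ Finset.range K, Real.exp (-(a*k))) *
        ∑ k ∈ Finset.range K, Real.exp (-(a*k)) * (D k)^2 := by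
        congr 1
        · exact Finset.sum_congr rfl fun k _ => h2 k
        · exact Finset.sum_congr rfl fun k _ => h3 k
    _ ≤ (1 - Real.exp (-a))⁻¹ * ∑ k ∈ Finset.range K, Real.exp (-(a*k)) * (D k)^2 :=
        mul_le_mul_of_nonneg_right h4 h6

lemma cover_sum (a t : ℝ) (ha : 0 < a) (ht : 0 ≤ t) (S : Set ℝ)
    (hfin : ∀ u v : ℝ, (S ∩ Set.Ioc u v).Finite) (hSpos : S ⊆ Set.Ioi 0) :
    ∑ s ∈ (hfin 0 t).toFinset, Real.exp (-(a*(t-s))) ≤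
      ∑ k ∈ Finset.range (Nat.floor t + 1), Real.exp (-(a*k)) *
        ((hfin (max (t-(k:ℝ)-1) 0) (t-(k:ℝ))).toFinset.card) := by
  classical
  set K := Nat.floor t + 1 with hK
  set Bk : ℕ → Finset ℝ := fun k => (hfin (max (t-(k:ℝ)-1) 0) (t-(k:ℝ))).toFinset with hBk
  have hsub : (hfin 0 t).toFinset ⊆ (Finset.range K).biUnion Bk := by
    intro s hs
    rw [Set.Finite.mem_toFinset] at hs
    obtain ⟨hsS, hs0, hst⟩ := hs
    set k := Nat.floor (t - s) with hkdef
    have hts : (0:ℝ) ≤ t - s := by linarith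
    refine Finset.mem_biUnion.mpr ⟨k, ?_, ?_⟩
    · refine Finset.mem_range.mpr ?_
      have : k ≤ Nat.floor t := Nat.floor_le_floor (by linarith)
      omega
    · rw [hBk, Set.Finite.mem_toFinset]
      refine ⟨hsS, ?_, ?_⟩
      · refine max_lt ?_ hs0
        have := Nat.lt_floor_add_one (t - s)
        push_cast
        linarith
      · have := Nat.floor_le hts
        linarith
  have hdisj : (↑(Finset.range K) : Set ℕ).PairwiseDisjoint Bk := by
    intro k _ k' _ hkk'
    simp only [Function.onFun]
    rw [Finset.disjoint_left]
    intro z hz hz'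
    rw [hBk, Set.Finite.mem_toFinset] at hz hz'
    rcases lt_or_gt_of_ne hkk' with h | h
    · have h1 : z ≤ t - (k':ℝ) := hz'.2.2
      have h2 : max (t-(k:ℝ)-1) 0 < z := hz.2.1
      have h3 : t - (k:ℝ) - 1 < z := lt_of_le_of_lt (le_max_left _ _) h2
      have : (k:ℝ) + 1 ≤ (k':ℝ) := by exact_mod_cast h
      linarith
    · have h1 : z ≤ t - (k:ℝ) := hz.2.2
      have h3 : t - (k':ℝ) - 1 < z := lt_of_le_of_lt (le_max_left _ _) hz'.2.1
      have : (k':ℝ) + 1 ≤ (k:ℝ) := by exact_mod_cast h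
      linarith
  calc ∑ s ∈ (hfin 0 t).toFinset, Real.exp (-(a*(t-s)))
      ≤ ∑ s ∈ (Finset.range K).biUnion Bk, Real.exp (-(a*(t-s))) :=
        Finset.sum_le_sum_of_subset_of_nonneg hsub (fun _ _ _ => (Real.exp_pos _).le)
    _ = ∑ k ∈ Finset.range K, ∑ s ∈ Bk k, Real.exp (-(a*(t-s))) :=
        Finset.sum_biUnion hdisj
    _ ≤ ∑ k ∈ Finset.range K, Real.exp (-(a*k)) * ((Bk k).card) := by
        refine Finset.sum_le_sum fun k _ => ?_
        have hbd : ∀ s ∈ Bk k, Real.exp (-(a*(t-s))) ≤ Real.exp (-(a*k)) := by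
          intro s hs
          rw [hBk, Set.Finite.mem_toFinset] at hs
          rw [Real.exp_le_exp]
          have : (k:ℝ) ≤ t - s := by linarith [hs.2.2]
          nlinarith
        calc ∑ s ∈ Bk k, Real.exp (-(a*(t-s))) ≤ (Bk k).card • Real.exp (-(a*k)) :=
              Finset.sum_le_card_nsmul _ _ _ hbd
          _ = Real.exp (-(a*k)) * ((Bk k).card) := by
              rw [nsmul_eq_mul]; ring

end AUX

theorem stmt13 {Ω : Type*} [MeasurableSpace Ω] (Pr : Measure Ω) [IsProbabilityMeasure Pr]
    (N : ℝ → Ω → ℕ) (hN : IsPoissonProcess Pr N)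
    (a b m M Lσ : ℝ) (ha : 0 < a) (hb : 0 < b) (hm : 0 < m) (hmM : m < M)
    (σ : ℝ → ℝ) (hσl : ∀ x, m < σ x) (hσu : ∀ x, σ x < M)
    (hσLip : ∀ x y, |σ x - σ y| ≤ Lσ * |x - y|)
    (X : ℝ → ℝ → Ω → ℝ)
    (hXmeas : ∀ x t, Measurable (X x t))
    (hSDE : ∀ (x : ℝ) (ω : Ω) (t : ℝ), 0 ≤ t →
      X x t ω = x + (∫ s in (0:ℝ)..t, (a * X x s ω - b * (X x s ω) ^ 3)) +
        ∑ᶠ s ∈ {s : ℝ | 0 < s ∧ s ≤ t ∧ Function.leftLim (fun u => N u ω) s ≠ N s ω},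
          σ (Function.leftLim (fun u => X x u ω) s)) :
    ∃ γ > (0:ℝ), ∃ C > (0:ℝ), ∀ (x : ℝ) (t : ℝ), 0 ≤ t →
      ∫ ω, |X x t ω - Real.sqrt (a / b)| ^ 2 ∂Pr ≤
        C * |x - Real.sqrt (a / b)| ^ 2 * Real.exp (-γ * t) + C := by
  classical
  set c := Real.sqrt (a/b) with hcdef
  have hc : 0 < c := Real.sqrt_pos.mpr (div_pos ha hb)
  have hbc : b * c^2 = a := by
    rw [hcdef, Real.sq_sqrt (le_of_lt (div_pos ha hb))]
    field_simp
  have hM : 0 < M := hm.trans hmM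
  set Ca := (1 - Real.exp (-a))⁻¹ with hCa
  have hexpa : Real.exp (-a) < 1 := Real.exp_lt_one_iff.mpr (by linarith)
  have hCapos : 0 < Ca := by
    rw [hCa]
    exact inv_pos.mpr (by linarith)
  set c₂ := 3*(3*c+M)^2 * Ca with hc₂
  have hc₂pos : 0 < c₂ := by positivity
  set C := 3 + 27*c^2 + c₂ * Ca * 44 with hC
  have hCpos : 0 < C := by positivity
  refine ⟨a, ha, C, hCpos, ?_⟩
  intro x t ht
  -- jump sets
  set S : Ω → Set ℝ := fun ω => {s : ℝ | 0 < s ∧ leftLim (fun u => N u ω) s ≠ N s ω}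
    with hS
  have hfinS : ∀ ω, ∀ u v : ℝ, ((S ω) ∩ Set.Ioc u v).Finite := by
    intro ω u v
    rcases le_or_gt v 0 with hv | hv
    · have : (S ω) ∩ Set.Ioc u v = ∅ := by
        apply Set.eq_empty_of_subset_empty
        rintro z ⟨⟨hz0, -⟩, -, hzv⟩
        exact absurd (hzv.trans hv) (not_le.mpr hz0)
      rw [this]; exact Set.finite_empty
    rcases le_or_gt u v with huv | huv
    · have hsub : (S ω) ∩ Set.Ioc u v ⊆ (S ω) ∩ Set.Ioc (max u 0) v := by
        rintro z ⟨hzS, hzu, hzv⟩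
        exact ⟨hzS, max_lt hzu hzS.1, hzv⟩
      exact ((jumps_finite_card (fun u => N u ω) (hN.2.1 ω) (le_max_right u 0)
        (max_le huv hv.le)).1).subset hsub
    · have : (S ω) ∩ Set.Ioc u v = ∅ := by
        rw [Set.Ioc_eq_empty (not_lt.mpr huv.le), Set.inter_empty]
      rw [this]; exact Set.finite_empty
  -- pathwise bound from the deterministic lemma
  have hpath : ∀ ω, |X x t ω - c| ≤ Real.exp (-(a*t)) * |x - c| +
      (3*c+M) * ∑ᶠ s ∈ (S ω) ∩ Set.Ioc 0 t, Real.exp (-(a*(t-s))) + 3*c := by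
    intro ω
    refine path_bound a b c M x ha hb hc hbc hM (fun u => X x u ω) (S ω)
      (fun s => σ (leftLim (fun u => X x u ω) s)) (fun s => (hm.trans (hσl _)).le)
      (fun s => (hσu _).le) (fun u => hfinS ω 0 u) ?_ t ht
    intro t' ht'
    have hset : {s : ℝ | 0 < s ∧ s ≤ t' ∧ leftLim (fun u => N u ω) s ≠ N s ω} =
        (S ω) ∩ Set.Ioc 0 t' := by
      ext z
      simp only [hS, Set.mem_setOf_eq, Set.mem_inter_iff, Set.mem_Ioc]
      tauto
    rw [← hset]
    exact hSDE x ω t' ht'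
  -- per-interval increments
  set K := Nat.floor t + 1 with hK
  set uk : ℕ → ℝ := fun k => max (t-(k:ℝ)-1) 0 with huk
  set vk : ℕ → ℝ := fun k => t-(k:ℝ) with hvk
  set Ek : ℕ → Ω → ℕ := fun k ω => N (vk k) ω - N (uk k) ω with hEk
  have hkfacts : ∀ k : ℕ, k < K → 0 ≤ vk k ∧ 0 ≤ uk k ∧ uk k ≤ vk k ∧
      vk k - uk k ≤ 1 := by
    intro k hk
    have h1 : (k:ℝ) ≤ t := by
      have : k ≤ Nat.floor t := by omega
      calc (k:ℝ) ≤ (Nat.floor t : ℝ) := by exact_mod_cast this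
        _ ≤ t := Nat.floor_le ht
    have h2 : (0:ℝ) ≤ t - k := by linarith
    refine ⟨h2, le_max_right _ _, max_le (by simp only [hvk]; linarith) h2, ?_⟩
    rcases max_cases (t-(k:ℝ)-1) 0 with ⟨hmx, -⟩ | ⟨hmx, hge⟩
    · simp only [hvk, huk, hmx]; linarith
    · simp only [hvk, huk, hmx]; linarith
  have hcard : ∀ ω, ∀ k, k < K →
      (((hfinS ω (uk k) (vk k)).toFinset.card : ℝ)) ≤ ((Ek k ω : ℝ)) := by
    intro ω k hk
    obtain ⟨h1, h2, h3, h4⟩ := hkfacts k hk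
    have hcc := (jumps_finite_card (fun u => N u ω) (hN.2.1 ω) h2 h3).2
      (hfinS ω (uk k) (vk k)).toFinset (by rw [Set.Finite.coe_toFinset])
    rw [max_eq_left h2, max_eq_left h1] at hcc
    have : (hfinS ω (uk k) (vk k)).toFinset.card ≤ Ek k ω := by
      simp only [hEk]; omega
    exact_mod_cast this
  -- squared pathwise bound
  have hpathsq : ∀ ω, |X x t ω - c|^2 ≤ 3*Real.exp (-(a*t))*|x-c|^2 + 27*c^2 +
      c₂ * ∑ k ∈ Finset.range K, Real.exp (-(a*(k:ℝ))) * ((Ek k ω : ℝ))^2 := by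
    intro ω
    set P2 := ∑ᶠ s ∈ (S ω) ∩ Set.Ioc 0 t, Real.exp (-(a*(t-s))) with hP2
    have hP2fs : P2 = ∑ s ∈ (hfinS ω 0 t).toFinset, Real.exp (-(a*(t-s))) :=
      finsum_mem_eq_finite_toFinset_sum _ (hfinS ω 0 t)
    set SE := ∑ k ∈ Finset.range K, Real.exp (-(a*(k:ℝ))) * ((Ek k ω : ℝ)) with hSE
    have hP2SE : P2 ≤ SE := by
      rw [hP2fs]
      refine le_trans (cover_sum a t ha ht (S ω) (hfinS ω) (fun z hz => hz.1)) ?_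
      refine Finset.sum_le_sum fun k hk => ?_
      have := hcard ω k (Finset.mem_range.mp hk)
      have hek : (0:ℝ) ≤ Real.exp (-(a*(k:ℝ))) := (Real.exp_pos _).le
      exact mul_le_mul_of_nonneg_left this hek
    have hP2nn : 0 ≤ P2 := by
      rw [hP2fs]
      exact Finset.sum_nonneg fun s _ => (Real.exp_pos _).le
    have hSEnn : 0 ≤ SE := hP2nn.trans hP2SE
    have hb1 := hpath ω
    have hb2 : |X x t ω - c| ≤ Real.exp (-(a*t)) * |x - c| + (3*c+M) * SE + 3*c := by
      have h3cM : (0:ℝ) ≤ 3*c+M := by positivity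
      have := mul_le_mul_of_nonneg_left hP2SE h3cM
      calc |X x t ω - c| ≤ Real.exp (-(a*t)) * |x - c| + (3*c+M) * P2 + 3*c := hb1
        _ ≤ Real.exp (-(a*t)) * |x - c| + (3*c+M) * SE + 3*c := by linarith
    have hSEsq : SE^2 ≤ Ca * ∑ k ∈ Finset.range K, Real.exp (-(a*(k:ℝ))) *
        ((Ek k ω : ℝ))^2 := by
      have := cs_geom a ha K (fun k => ((Ek k ω : ℝ))) (fun k => Nat.cast_nonneg _)
      simpa [hCa] using this
    have he1 : Real.exp (-(a*t)) ≤ 1 := Real.exp_le_one_iff.mpr (by nlinarith)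
    have he0 : 0 ≤ Real.exp (-(a*t)) := (Real.exp_pos _).le
    have hxnn : 0 ≤ |x - c| := abs_nonneg _
    have habs : 0 ≤ |X x t ω - c| := abs_nonneg _
    have hsq : |X x t ω - c|^2 ≤ (Real.exp (-(a*t)) * |x - c| + (3*c+M) * SE + 3*c)^2 := by
      have h3cM : (0:ℝ) ≤ 3*c+M := by positivity
      have hrhs : 0 ≤ Real.exp (-(a*t)) * |x - c| + (3*c+M) * SE + 3*c := by positivity
      nlinarith
    have hexpand : (Real.exp (-(a*t)) * |x - c| + (3*c+M) * SE + 3*c)^2 ≤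
        3*(Real.exp (-(a*t)) * |x - c|)^2 + 3*((3*c+M) * SE)^2 + 3*(3*c)^2 := by
      nlinarith [sq_nonneg (Real.exp (-(a*t)) * |x - c| - (3*c+M) * SE),
        sq_nonneg (Real.exp (-(a*t)) * |x - c| - 3*c), sq_nonneg ((3*c+M) * SE - 3*c)]
    have hterm1 : (Real.exp (-(a*t)) * |x - c|)^2 ≤ Real.exp (-(a*t)) * |x-c|^2 := by
      have : (Real.exp (-(a*t)) * |x - c|)^2 =
          Real.exp (-(a*t))^2 * |x-c|^2 := by ring
      rw [this]
      have h2 : Real.exp (-(a*t))^2 ≤ Real.exp (-(a*t)) := by nlinarith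
      nlinarith [sq_nonneg (x - c), sq_abs (x-c)]
    have hterm2 : ((3*c+M) * SE)^2 = (3*c+M)^2 * SE^2 := by ring
    have h3cM2 : (0:ℝ) ≤ (3*c+M)^2 := sq_nonneg _
    calc |X x t ω - c|^2 ≤ 3*(Real.exp (-(a*t)) * |x - c|)^2 + 3*((3*c+M) * SE)^2
        + 3*(3*c)^2 := le_trans hsq hexpand
      _ ≤ 3*(Real.exp (-(a*t)) * |x-c|^2) + 3*((3*c+M)^2 * (Ca * ∑ k ∈ Finset.range K,
          Real.exp (-(a*(k:ℝ))) * ((Ek k ω : ℝ))^2)) + 27*c^2 := by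
          have := mul_le_mul_of_nonneg_left hSEsq h3cM2
          rw [hterm2]
          nlinarith
      _ = 3*Real.exp (-(a*t))*|x-c|^2 + 27*c^2 + c₂ * ∑ k ∈ Finset.range K,
          Real.exp (-(a*(k:ℝ))) * ((Ek k ω : ℝ))^2 := by
          rw [hc₂]; ring
  -- measurable envelopes for the squared increments
  have henv : ∀ k : ℕ, ∃ G : Ω → ENNReal, Measurable G ∧
      ((k < K) → (∀ ω, ((Ek k ω : ENNReal))^2 ≤ G ω) ∧ ∫⁻ ω, G ω ∂Pr ≤ 44) := by
    intro k
    by_cases hk : k < K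
    · obtain ⟨h1, h2, h3, h4⟩ := hkfacts k hk
      have hdist : ∀ j : ℕ, Pr {ω | Ek k ω = j} =
          ENNReal.ofReal (Real.exp (-(vk k - uk k)) * (vk k - uk k)^j / j.factorial) :=
        fun j => hN.2.2.1 (uk k) (vk k) h2 h3 j
      obtain ⟨G, hGm, hGle, hGint⟩ :=
        envelope_bound Pr (Ek k) (vk k - uk k) (by linarith) h4 hdist
      exact ⟨G, hGm, fun _ => ⟨hGle, hGint⟩⟩
    · exact ⟨fun _ => 0, measurable_const, fun h => absurd h hk⟩
  choose G hGm hGprop using henv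
  -- pass to the Lebesgue integral
  have hmeasf : AEStronglyMeasurable (fun ω => |X x t ω - c|^2) Pr :=
    (((hXmeas x t).sub measurable_const).abs.pow_const 2).aestronglyMeasurable
  rw [integral_eq_lintegral_of_nonneg_ae (ae_of_all Pr fun ω => by positivity) hmeasf]
  set r1 := 3*Real.exp (-(a*t))*|x-c|^2 + 27*c^2 with hr1
  have hr1nn : 0 ≤ r1 := by positivity
  have hptwise : ∀ ω, ENNReal.ofReal (|X x t ω - c|^2) ≤
      ENNReal.ofReal r1 + ENNReal.ofReal c₂ *
        ∑ k ∈ Finset.range K, ENNReal.ofReal (Real.exp (-(a*(k:ℝ)))) * G k ω := by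
    intro ω
    refine le_trans (ENNReal.ofReal_le_ofReal (hpathsq ω)) ?_
    rw [ENNReal.ofReal_add (by positivity) (by positivity)]
    refine add_le_add le_rfl ?_
    rw [ENNReal.ofReal_mul hc₂pos.le]
    refine mul_le_mul_right ?_ _
    rw [ENNReal.ofReal_sum_of_nonneg (fun k _ => by positivity)]
    refine Finset.sum_le_sum fun k hk => ?_
    rw [ENNReal.ofReal_mul (Real.exp_pos _).le]
    refine mul_le_mul_right ?_ _
    have hcast : ENNReal.ofReal (((Ek k ω : ℝ))^2) = ((Ek k ω : ENNReal))^2 := by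
      rw [ENNReal.ofReal_pow (Nat.cast_nonneg _), ENNReal.ofReal_natCast]
    rw [hcast]
    exact (hGprop k (Finset.mem_range.mp hk)).1 ω
  have hsum_meas : Measurable (fun ω => ∑ k ∈ Finset.range K,
      ENNReal.ofReal (Real.exp (-(a*(k:ℝ)))) * G k ω) :=
    Finset.measurable_sum _ fun k _ => (hGm k).const_mul _
  have hlin : ∫⁻ ω, ENNReal.ofReal (|X x t ω - c|^2) ∂Pr ≤
      ENNReal.ofReal r1 + ENNReal.ofReal c₂ * (ENNReal.ofReal Ca * 44) := by
    refine le_trans (lintegral_mono hptwise) ?_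
    rw [lintegral_add_left measurable_const, lintegral_const]
    simp only [measure_univ, mul_one]
    refine add_le_add le_rfl ?_
    rw [lintegral_const_mul _ hsum_meas]
    refine mul_le_mul_right ?_ _
    rw [lintegral_finset_sum _ (fun k _ => (hGm k).const_mul _)]
    have hstep1 : ∀ k ∈ Finset.range K,
        ∫⁻ ω, ENNReal.ofReal (Real.exp (-(a*(k:ℝ)))) * G k ω ∂Pr ≤
          ENNReal.ofReal (Real.exp (-(a*(k:ℝ)))) * 44 := by
      intro k hk
      rw [lintegral_const_mul _ (hGm k)]
      exact mul_le_mul_right (hGprop k (Finset.mem_range.mp hk)).2 _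
    refine le_trans (Finset.sum_le_sum hstep1) ?_
    have hgeom : ∑ k ∈ Finset.range K, ENNReal.ofReal (Real.exp (-(a*(k:ℝ)))) ≤
        ENNReal.ofReal Ca := by
      rw [← ENNReal.ofReal_sum_of_nonneg (fun k _ => (Real.exp_pos _).le)]
      refine ENNReal.ofReal_le_ofReal ?_
      have h5 : ∀ k : ℕ, Real.exp (-(a*(k:ℝ))) = (Real.exp (-a))^k := by
        intro k
        rw [← Real.exp_nat_mul]
        ring_nf
      calc ∑ k ∈ Finset.range K, Real.exp (-(a*(k:ℝ)))
          = ∑ k ∈ Finset.range K, (Real.exp (-a))^k :=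
            Finset.sum_congr rfl fun k _ => h5 k
        _ ≤ Ca := my_geom_le _ (Real.exp_pos _).le hexpa K
    calc ∑ k ∈ Finset.range K, ENNReal.ofReal (Real.exp (-(a*(k:ℝ)))) * 44
        = (∑ k ∈ Finset.range K, ENNReal.ofReal (Real.exp (-(a*(k:ℝ))))) * 44 := by
          rw [Finset.sum_mul]
      _ ≤ ENNReal.ofReal Ca * 44 := mul_le_mul_left hgeom _
  have hne : ENNReal.ofReal r1 + ENNReal.ofReal c₂ * (ENNReal.ofReal Ca * 44) ≠ ⊤ := by
    refine ENNReal.add_ne_top.mpr ⟨ENNReal.ofReal_ne_top, ?_⟩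
    exact ENNReal.mul_ne_top ENNReal.ofReal_ne_top
      (ENNReal.mul_ne_top ENNReal.ofReal_ne_top (by norm_num))
  have htoReal := ENNReal.toReal_mono hne hlin
  refine le_trans htoReal ?_
  have h44 : (44 : ENNReal) = ENNReal.ofReal 44 := by
    rw [ENNReal.ofReal_ofNat]
  have hcollapse : (ENNReal.ofReal r1 + ENNReal.ofReal c₂ *
      (ENNReal.ofReal Ca * 44)).toReal = r1 + c₂ * (Ca * 44) := by
    rw [h44, ← ENNReal.ofReal_mul hCapos.le, ← ENNReal.ofReal_mul hc₂pos.le,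
      ← ENNReal.ofReal_add hr1nn (by positivity), ENNReal.toReal_ofReal (by positivity)]
  rw [hcollapse]
  -- final numeric comparison
  have hCge3 : (3:ℝ) ≤ C := by
    have e1 : (0:ℝ) ≤ 27*c^2 := by positivity
    have e2 : (0:ℝ) ≤ c₂ * Ca * 44 := by positivity
    rw [hC]; linarith
  have hrest : 27*c^2 + c₂ * (Ca * 44) ≤ C := by
    rw [hC]; nlinarith
  have hexpeq : Real.exp (-a * t) = Real.exp (-(a*t)) := by ring_nf
  rw [hexpeq]
  have hxe : 0 ≤ |x - c|^2 * Real.exp (-(a*t)) :=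
    mul_nonneg (by positivity) (Real.exp_pos _).le
  have h1 : 3*Real.exp (-(a*t))*|x-c|^2 ≤ C * |x - c|^2 * Real.exp (-(a*t)) := by
    nlinarith
  rw [hr1]
  linarith
end

section
/- Let {P_t} be a Markov semigroup on a Polish space E, α ∈ (0,1), and suppose for every probability measure μ there exists t(μ) such that P_t*μ(B(z, δ/2)) > α for all t ≥ t(μ). Then for any x₁, x₂ ∈ E and any k ∈ ℕ there exist times t₁ < ⋯ < t_k and probability measures ν_i^{x_j} supported in the closed ball of radius δ/2 around z, and μ_k^{x_j} on E, such that P*_{t₁+⋯+t_k} δ_{x_j} = α Σ_{i=1}^{k} (1−α)^{i−1} P*_{t_{i+1}+⋯+t_k} ν_i^{x_j} + (1−α)^k μ_k^{x_j} for j = 1,2 (with the convention that the i = k term has no further semigroup applied). -/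
open MeasureTheory Filter Metric Set Topology

namespace Stmt19Aux
variable {E : Type*} [MeasurableSpace E]

lemma bind_add' {μ ν : Measure E} {f : E → Measure E} (hf : Measurable f) :
    (μ + ν).bind f = μ.bind f + ν.bind f := by
  ext s hs
  simp [Measure.bind_apply hs hf.aemeasurable, lintegral_add_measure]

lemma bind_smul' {c : ENNReal} {μ : Measure E} {f : E → Measure E} (hf : Measurable f) :
    (c • μ).bind f = c • μ.bind f := by
  ext s hs
  simp [Measure.bind_apply hs hf.aemeasurable, lintegral_smul_measure]

lemma bind_sum' {ι : Type*} {s : Finset ι} {μ : ι → Measure E} {f : E → Measure E}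
    (hf : Measurable f) :
    (∑ i ∈ s, μ i).bind f = ∑ i ∈ s, (μ i).bind f := by
  ext s' hs'
  simp [Measure.bind_apply hs' hf.aemeasurable, lintegral_finset_sum_measure]

lemma isProb_bind (μ : Measure E) [IsProbabilityMeasure μ] {f : E → Measure E}
    (hf : Measurable f) (hpf : ∀ x, IsProbabilityMeasure (f x)) :
    IsProbabilityMeasure (μ.bind f) := by
  constructor
  rw [Measure.bind_apply MeasurableSet.univ hf.aemeasurable,
    lintegral_congr fun x => (hpf x).measure_univ, lintegral_one, measure_univ]

lemma step {α : ℝ} (hα : 0 < α) (hα1 : α < 1) {B : Set E} (hB : MeasurableSet B)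
    (m : Measure E) [IsProbabilityMeasure m] (hgt : α < (m B).toReal) :
    ∃ ν μ' : Measure E, IsProbabilityMeasure ν ∧ ν Bᶜ = 0 ∧ IsProbabilityMeasure μ' ∧
      m = ENNReal.ofReal α • ν + ENNReal.ofReal (1 - α) • μ' := by
  set b := m B with hbdef
  have hbtop : b ≠ ⊤ := measure_ne_top m B
  have ha : ENNReal.ofReal α < b := by
    rw [← ENNReal.ofReal_toReal hbtop]
    exact (ENNReal.ofReal_lt_ofReal_iff (hα.trans hgt)).mpr hgt
  have hb0 : b ≠ 0 := (ha.trans_le' zero_le).ne'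
  set a := ENNReal.ofReal α with hadef
  set c := ENNReal.ofReal (1 - α) with hcdef
  have hc0 : c ≠ 0 := (ENNReal.ofReal_pos.mpr (by linarith)).ne'
  have hctop : c ≠ ⊤ := ENNReal.ofReal_ne_top
  set ν := b⁻¹ • m.restrict B with hν
  have hνuniv : ν Set.univ = 1 := by
    simp [hν, Measure.smul_apply, Measure.restrict_apply_univ, smul_eq_mul,
      ENNReal.inv_mul_cancel hb0 hbtop]
    exact ENNReal.inv_mul_cancel hb0 hbtop
  have hνprob : IsProbabilityMeasure ν := ⟨hνuniv⟩
  have hνB : ν Bᶜ = 0 := by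
    simp [hν, Measure.smul_apply, Measure.restrict_apply hB.compl]
  have hab1 : a * b⁻¹ ≤ 1 := by
    calc a * b⁻¹ ≤ b * b⁻¹ := mul_le_mul_left ha.le _
    _ = 1 := ENNReal.mul_inv_cancel hb0 hbtop
  have hle : a • ν ≤ m := by
    rw [Measure.le_iff]
    intro u hu
    calc (a • ν) u = a * b⁻¹ * m (u ∩ B) := by
          rw [Measure.smul_apply, hν, Measure.smul_apply, Measure.restrict_apply hu,
            smul_eq_mul, smul_eq_mul, mul_assoc]
    _ ≤ 1 * m u := mul_le_mul' hab1 (measure_mono inter_subset_left)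
    _ = m u := one_mul _
  haveI : IsFiniteMeasure (a • ν) := by
    constructor
    rw [Measure.smul_apply, smul_eq_mul, hνuniv, mul_one]
    exact ENNReal.ofReal_lt_top
  have hsub : m - a • ν + a • ν = m := Measure.sub_add_cancel_of_le hle
  set μ' := c⁻¹ • (m - a • ν) with hμ'
  have hsubuniv : (m - a • ν) Set.univ = c := by
    rw [Measure.sub_apply MeasurableSet.univ hle, measure_univ, Measure.smul_apply,
      smul_eq_mul, hνuniv, mul_one, hadef, hcdef, ← ENNReal.ofReal_one,
      ← ENNReal.ofReal_sub 1 hα.le]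
  have hμ'prob : IsProbabilityMeasure μ' := by
    constructor
    rw [hμ', Measure.smul_apply, smul_eq_mul, hsubuniv, ENNReal.inv_mul_cancel hc0 hctop]
  refine ⟨ν, μ', hνprob, hνB, hμ'prob, ?_⟩
  have cancel : ∀ X : Measure E, c • c⁻¹ • X = X := fun X => by
    rw [smul_smul, ENNReal.mul_inv_cancel hc0 hctop, one_smul]
  rw [hμ', cancel, add_comm]
  exact hsub.symm

end Stmt19Aux

theorem stmt19 {E : Type*} [MetricSpace E] [CompleteSpace E] [SecondCountableTopology E]
    [MeasurableSpace E] [BorelSpace E]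
    (P : ℝ → E → Measure E)
    (hprob : ∀ t x, IsProbabilityMeasure (P t x))
    (hmeas : ∀ t, Measurable (P t))
    (hP0 : ∀ x, P 0 x = Measure.dirac x)
    (hsemi : ∀ s t : ℝ, 0 ≤ s → 0 ≤ t → ∀ x, P (s + t) x = (P s x).bind (P t))
    (z : E) (δ α : ℝ) (hδ : 0 < δ) (hα : 0 < α) (hα1 : α < 1)
    (h : ∀ μ : Measure E, IsProbabilityMeasure μ →
      ∃ tμ : ℝ, ∀ t ≥ tμ, α < (μ.bind (P t) (ball z (δ/2))).toReal) :
    ∀ (x : Fin 2 → E) (k : ℕ), 0 < k →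
      ∃ t : Fin k → ℝ, (∀ i, 0 < t i) ∧ StrictMono t ∧
      ∃ (ν : Fin k → Fin 2 → Measure E) (μk : Fin 2 → Measure E),
        (∀ i j, IsProbabilityMeasure (ν i j)) ∧
        (∀ i j, ν i j (closedBall z (δ/2))ᶜ = 0) ∧
        (∀ j, IsProbabilityMeasure (μk j)) ∧
        (∀ j, Measure.bind (Measure.dirac (x j)) (P (∑ i, t i)) =
          (∑ i : Fin k, ENNReal.ofReal (α * (1 - α) ^ (i : ℕ)) •
            ((ν i j).bind (P (∑ l ∈ Finset.univ.filter (fun l : Fin k => i < l), t l)))) +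
          ENNReal.ofReal ((1 - α) ^ k) • μk j) := by
  have hP0eq : P 0 = Measure.dirac := funext hP0
  have hbindsemi : ∀ (T s' : ℝ), 0 ≤ T → 0 ≤ s' → ∀ (m : Measure E),
      m.bind (P (T + s')) = (m.bind (P T)).bind (P s') := by
    intro T s' hT hs' m
    rw [Measure.bind_bind (hmeas T).aemeasurable (hmeas s').aemeasurable]
    congr 1
    funext y
    exact hsemi T s' hT hs' y
  have key2 : ∀ (μ : Fin 2 → Measure E), (∀ j, IsProbabilityMeasure (μ j)) → ∀ tlo : ℝ,
      ∃ s, tlo < s ∧ ∃ (ν μ' : Fin 2 → Measure E),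
        (∀ j, IsProbabilityMeasure (ν j)) ∧ (∀ j, ν j (closedBall z (δ/2))ᶜ = 0) ∧
        (∀ j, IsProbabilityMeasure (μ' j)) ∧
        (∀ j, (μ j).bind (P s) =
          ENNReal.ofReal α • ν j + ENNReal.ofReal (1 - α) • μ' j) := by
    intro μ hμ tlo
    obtain ⟨T0, hT0⟩ := h (μ 0) (hμ 0)
    obtain ⟨T1, hT1⟩ := h (μ 1) (hμ 1)
    set s := max (max T0 T1) tlo + 1 with hs
    have hstlo : tlo < s := by
      have := le_max_right (max T0 T1) tlo; linarith
    have hdec : ∀ j : Fin 2, ∃ ν μ' : Measure E, IsProbabilityMeasure ν ∧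
        ν (closedBall z (δ/2))ᶜ = 0 ∧ IsProbabilityMeasure μ' ∧
        (μ j).bind (P s) = ENNReal.ofReal α • ν + ENNReal.ofReal (1 - α) • μ' := by
      intro j
      haveI := hμ j
      haveI := Stmt19Aux.isProb_bind (μ j) (hmeas s) (fun y => hprob s y)
      have hgt : α < (((μ j).bind (P s)) (ball z (δ/2))).toReal := by
        fin_cases j
        · refine hT0 s ?_
          have h1 := le_max_left T0 T1; have h2 := le_max_left (max T0 T1) tlo; linarith
        · refine hT1 s ?_
          have h1 := le_max_right T0 T1; have h2 := le_max_left (max T0 T1) tlo; linarith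
      obtain ⟨ν, μ', h1, h2, h3, h4⟩ :=
        Stmt19Aux.step hα hα1 measurableSet_ball ((μ j).bind (P s)) hgt
      exact ⟨ν, μ', h1,
        measure_mono_null (compl_subset_compl.mpr ball_subset_closedBall) h2, h3, h4⟩
    choose ν μ' h1 h2 h3 h4 using hdec
    exact ⟨s, hstlo, ν, μ', h1, h2, h3, h4⟩
  intro x k hk
  obtain ⟨n, rfl⟩ : ∃ n, k = n + 1 := ⟨k - 1, by omega⟩
  clear hk
  induction n with
  | zero =>
    obtain ⟨s, hs, ν, μ', hν1, hν2, hμ'1, hdec⟩ :=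
      key2 (fun j => Measure.dirac (x j)) (fun j => by infer_instance) 0
    refine ⟨fun _ => s, fun _ => hs, ?_, fun _ => ν, μ', fun i j => hν1 j,
      fun i j => hν2 j, hμ'1, ?_⟩
    · intro i j hij
      exact absurd (Fin.ext (by omega) : i = j) hij.ne
    · intro j
      have hfil : (Finset.univ.filter (fun l : Fin (0 + 1) => (0 : Fin (0 + 1)) < l)) = ∅ := by
        decide
      simp only [Fin.sum_univ_succ, Finset.univ_eq_empty, Fin.sum_univ_zero, add_zero, hfil,
        Finset.sum_empty, hP0eq, Measure.bind_dirac, Fin.val_zero, pow_zero, mul_one, zero_add, pow_one]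
      exact hdec j
  | succ n ih =>
    obtain ⟨t, htpos, htmono, ν, μk, hν1, hν2, hμk1, heq⟩ := ih
    obtain ⟨s, hs, νn, μn, hνn1, hνn2, hμn1, hdec⟩ := key2 μk hμk1 (t (Fin.last n))
    have hspos : 0 < s := (htpos _).trans hs
    have hTnn : (0:ℝ) ≤ ∑ i, t i := Finset.sum_nonneg fun i _ => (htpos i).le
    refine ⟨Fin.snoc t s, ?_, ?_, Fin.snoc ν νn, μn, ?_, ?_, hμn1, ?_⟩
    · intro i
      cases i using Fin.lastCases with
      | last => simpa using hspos
      | cast i => simpa using htpos i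
    · intro i j hij
      cases j using Fin.lastCases with
      | last =>
        cases i using Fin.lastCases with
        | last => exact absurd hij (lt_irrefl _)
        | cast i =>
          simp only [Fin.snoc_castSucc, Fin.snoc_last]
          exact lt_of_le_of_lt (htmono.monotone (Fin.le_last i)) hs
      | cast j =>
        cases i using Fin.lastCases with
        | last => exact absurd hij (Fin.castSucc_lt_last j).asymm
        | cast i =>
          simp only [Fin.snoc_castSucc]
          exact htmono (Fin.castSucc_lt_castSucc_iff.mp hij)
    · intro i j
      cases i using Fin.lastCases with
      | last => simpa using hνn1 j
      | cast i => simpa using hν1 i j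
    · intro i j
      cases i using Fin.lastCases with
      | last => simpa using hνn2 j
      | cast i => simpa using hν2 i j
    · intro j
      have hsum : ∑ i : Fin (n + 1 + 1), Fin.snoc t s i = (∑ i, t i) + s := by
        rw [Fin.sum_univ_castSucc]
        simp [Fin.snoc_castSucc, Fin.snoc_last]
      have hfil : ∀ i : Fin (n + 1),
          (∑ l ∈ Finset.univ.filter (fun l : Fin (n + 1 + 1) => i.castSucc < l),
            (Fin.snoc t s : Fin (n + 1 + 1) → ℝ) l) =
          (∑ l ∈ Finset.univ.filter (fun l : Fin (n + 1) => i < l), t l) + s := by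
        intro i
        rw [Finset.sum_filter, Finset.sum_filter, Fin.sum_univ_castSucc]
        simp [Fin.snoc_castSucc, Fin.snoc_last, Fin.castSucc_lt_castSucc_iff,
          Fin.castSucc_lt_last]
      have hlastfil :
          (Finset.univ.filter (fun l : Fin (n + 1 + 1) => Fin.last (n + 1) < l)) = ∅ :=
        Finset.filter_eq_empty_iff.mpr fun l _ => (Fin.le_last l).not_gt
      rw [hsum, hbindsemi _ _ hTnn hspos.le, heq j,
        Stmt19Aux.bind_add' (hmeas s), Stmt19Aux.bind_sum' (hmeas s)]
      simp only [Stmt19Aux.bind_smul' (hmeas s)]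
      rw [show (∑ i : Fin (n + 1), ENNReal.ofReal (α * (1 - α) ^ (i : ℕ)) •
            (((ν i j).bind
              (P (∑ l ∈ Finset.univ.filter (fun l : Fin (n + 1) => i < l), t l))).bind
              (P s))) =
          ∑ i : Fin (n + 1), ENNReal.ofReal (α * (1 - α) ^ (i : ℕ)) •
            ((ν i j).bind
              (P ((∑ l ∈ Finset.univ.filter (fun l : Fin (n + 1) => i < l), t l) + s)))
          from Finset.sum_congr rfl fun i _ => by
            rw [← hbindsemi _ s (Finset.sum_nonneg fun l _ => (htpos l).le) hspos.le]]
      have h1α : (0:ℝ) ≤ (1 - α) ^ (n + 1) := pow_nonneg (by linarith) _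
      rw [hdec j, smul_add, smul_smul, smul_smul,
        ← ENNReal.ofReal_mul h1α, ← ENNReal.ofReal_mul h1α]
      conv_rhs => rw [Fin.sum_univ_castSucc]
      simp only [Fin.snoc_castSucc, Fin.snoc_last, Fin.coe_castSucc, Fin.val_last, hfil,
        hlastfil, Finset.sum_empty, hP0eq, Measure.bind_dirac]
      rw [show (1 - α) ^ (n + 1) * α = α * (1 - α) ^ (n + 1) from mul_comm _ _,
        show (1 - α) ^ (n + 1) * (1 - α) = (1 - α) ^ (n + 1 + 1) from (pow_succ _ _).symm]
      conv_rhs => rw [add_assoc]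
end
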